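/- arXiv:1910.04001 — 5 statements merged into one kernel-verified Lean document; each statement's English description precedes it below -/
import Mathlib

section
/- Let μ be any probability measure on [0,π/2]^{ℕ*×ℕ*} that is absolutely continuous with respect to η. Then for μ-almost every configuration θ the following holds: for every a = (a_k)_{k≥1} ∈ ℓ₀, N_a(θ) = a! · ∏_{k≥1} ( Σ_{(b_j)∈ℕ^{m_k} : 2·Σ_{j=1}^{m_k} b_j = a_k} ∏_{j=1}^{m_k} Σ_{c=0}^{b_j} (1/(c!(b_j−c)!))² ). In particular, N_a(θ) = 0 whenever some a_k is odd, and almost surely N_a(θ) depends only on (a_k)_{k≥1} and (m_k)_{k≥1}. -/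
open MeasureTheory Filter Real

noncomputable section

namespace Stmt3

/-- The four symmetric directions `ζ⁽¹⁾(θ) = (cos θ, sin θ)`, `ζ⁽²⁾(θ) = (−cos θ, sin θ)`,
`ζ⁽³⁾(θ) = −ζ⁽¹⁾(θ)`, `ζ⁽⁴⁾(θ) = −ζ⁽²⁾(θ)`. -/
def zeta : Fin 4 → ℝ → ℝ × ℝ
  | 0, θ => (Real.cos θ, Real.sin θ)
  | 1, θ => (-Real.cos θ, Real.sin θ)
  | 2, θ => (-Real.cos θ, -Real.sin θ)
  | 3, θ => (Real.cos θ, -Real.sin θ)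

/-- The randomized wave vectors set
`Λ_k(θ) = (√λ_k/(2π))·{ζ⁽ⁱ⁾(θ_{k,j}) : 1 ≤ j ≤ m_k, 1 ≤ i ≤ 4}` (0-based indexing in `k, j`). -/
def waveVectors (lam : ℕ → ℝ) (m : ℕ → ℕ) (θ : ℕ × ℕ → ℝ) (k : ℕ) : Set (ℝ × ℝ) :=
  {ξ | ∃ j < m k, ∃ i : Fin 4, ξ = (Real.sqrt (lam k) / (2 * π)) • zeta i (θ (k, j))}

/-- `N_a(θ)`: the number of tuples `(ξ_{k,l})_{k ≥ 1, 1 ≤ l ≤ a_k}` with `ξ_{k,l} ∈ Λ_k(θ)`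
summing to `0`.  Here `a : ℕ →₀ ℕ` encodes the finitely supported sequence `(a_k)_{k ≥ 1}`. -/
def Ncount (lam : ℕ → ℝ) (m : ℕ → ℕ) (θ : ℕ × ℕ → ℝ) (a : ℕ →₀ ℕ) : ℕ :=
  Nat.card {ξ : (k : ℕ) → Fin (a k) → ℝ × ℝ //
    (∀ k l, ξ k l ∈ waveVectors lam m θ k) ∧
    ∑ k ∈ a.support, ∑ l, ξ k l = 0}

/-- The uniform probability measure on `[0, π/2]`. -/
def unif : Measure ℝ := (ENNReal.ofReal (π / 2))⁻¹ • volume.restrict (Set.Icc 0 (π / 2))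

/-- `η` is the product over `ℕ* × ℕ*` of the uniform probability measures on `[0, π/2]`:
a probability measure on configurations giving the product of uniform measures to every
finite-dimensional cylinder set. -/
def IsProductUniform (η : Measure (ℕ × ℕ → ℝ)) : Prop :=
  IsProbabilityMeasure η ∧
  ∀ (s : Finset (ℕ × ℕ)) (B : ℕ × ℕ → Set ℝ), (∀ i, MeasurableSet (B i)) →
    η {θ | ∀ i ∈ s, θ i ∈ B i} = ∏ i ∈ s, unif (B i)

/-- `Σ_{(b_j) ∈ ℕ^{mk} : 2·Σ_j b_j = n} ∏_{j=1}^{mk} Σ_{c=0}^{b_j} (1/(c!(b_j−c)!))²`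
(a finite sum, expressed as a `tsum`). -/
def innerSum (mk n : ℕ) : ℝ :=
  ∑' b : Fin mk → ℕ, if 2 * ∑ j, b j = n then
    ∏ j, ∑ c ∈ Finset.range (b j + 1),
      (((c.factorial * (b j - c).factorial : ℕ) : ℝ))⁻¹ ^ 2
  else 0


section Aux
open Finset

variable {D : Type*} [Fintype D] [DecidableEq D]

/-- fiber counts of a function -/
def fiberVec {n : ℕ} (f : Fin n → D) : D → ℕ :=
  fun d => (Finset.univ.filter fun l => f l = d).card

/-- fiber of `Sigma.fst` -/
def sigmaFstFiber {β : D → Type*} (d : D) : {x : Σ d', β d' // x.1 = d} ≃ β d where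
  toFun x := x.2 ▸ x.1.2
  invFun v := ⟨⟨d, v⟩, rfl⟩
  left_inv := by rintro ⟨⟨d', v⟩, rfl⟩; rfl
  right_inv v := rfl

lemma sum_fiberVec {n : ℕ} (f : Fin n → D) : ∑ d, fiberVec f d = n := by
  classical
  have := Finset.card_eq_sum_card_fiberwise (f := f) (s := univ) (t := univ)
    (fun x _ => mem_univ _)
  simpa [fiberVec] using this.symm

lemma count_mul {n : ℕ} (N : D → ℕ) (hN : ∑ d, N d = n) :
    (Finset.univ.filter fun f : Fin n → D => fiberVec f = N).card * ∏ d, (N d).factorial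
      = n.factorial := by
  classical
  -- construct f0 with prescribed fibers
  have hcard : Fintype.card (Σ d, Fin (N d)) = Fintype.card (Fin n) := by
    simp [Fintype.card_sigma, hN]
  let e : Fin n ≃ Σ d, Fin (N d) := (Fintype.equivOfCardEq hcard).symm
  let f0 : Fin n → D := fun l => (e l).1
  have hf0 : fiberVec f0 = N := by
    funext d
    have h1 : fiberVec f0 d = Fintype.card {l : Fin n // f0 l = d} :=
      (Fintype.card_subtype _).symm
    rw [h1]
    have e2 : {l : Fin n // f0 l = d} ≃ Fin (N d) :=
      (e.subtypeEquiv (fun l => Iff.rfl)).trans (sigmaFstFiber d)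
    simp [Fintype.card_congr e2]
  -- fibers of g ↦ f0 ∘ g
  have hcomp : ∀ g : Equiv.Perm (Fin n), fiberVec (f0 ∘ g) = N := by
    intro g
    funext d
    have e3 : {l : Fin n // (f0 ∘ g) l = d} ≃ {l : Fin n // f0 l = d} :=
      g.subtypeEquiv (fun l => Iff.rfl)
    rw [← hf0]
    simp only [fiberVec, ← Fintype.card_subtype]
    exact Fintype.card_congr e3
  have key : (Fintype.card (Equiv.Perm (Fin n)))
      = ∑ f ∈ univ.filter (fun f : Fin n → D => fiberVec f = N),
          (univ.filter fun g : Equiv.Perm (Fin n) => f0 ∘ g = f).card := by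
    rw [← Finset.card_univ]
    exact Finset.card_eq_sum_card_fiberwise (f := fun g : Equiv.Perm (Fin n) => f0 ∘ g)
      (fun g _ => by simp [hcomp g])
  have fibcard : ∀ f : Fin n → D, fiberVec f = N →
      (univ.filter fun g : Equiv.Perm (Fin n) => f0 ∘ g = f).card = ∏ d, (N d).factorial := by
    intro f hf
    -- find g0 with f0 ∘ g0 = f
    have hfib : ∀ d, Fintype.card {l // f l = d} = Fintype.card {l // f0 l = d} := by
      intro d
      rw [Fintype.card_subtype, Fintype.card_subtype]
      have := congrFun hf d
      have := congrFun hf0 d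
      simp only [fiberVec] at *
      omega
    let E : ∀ d, {l // f l = d} ≃ {l // f0 l = d} := fun d => Fintype.equivOfCardEq (hfib d)
    let g0 : Equiv.Perm (Fin n) := Equiv.ofFiberEquiv E
    have hg0 : f0 ∘ g0 = f := funext fun x => Equiv.ofFiberEquiv_map E x
    -- translate to stabilizer
    have etrans : {g : Equiv.Perm (Fin n) // f0 ∘ g = f} ≃ {g : Equiv.Perm (Fin n) // f0 ∘ g = f0} := by
      refine (Equiv.mulRight g0⁻¹).subtypeEquiv (fun g => ?_)
      have hmr : ((Equiv.mulRight g0⁻¹) g : Fin n → Fin n) = fun x => g (g0⁻¹ x) := by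
        funext x; simp [Equiv.Perm.coe_mul]
      rw [hmr]
      constructor
      · intro h
        funext x
        simp only [Function.comp_apply]
        have h1 := congrFun h (g0⁻¹ x)
        have h2 := congrFun hg0 (g0⁻¹ x)
        simp only [Function.comp_apply] at h1 h2
        rw [h1, ← h2]
        simp
      · intro h
        funext x
        have h1 := congrFun h (g0 x)
        simp only [Function.comp_apply, Equiv.Perm.inv_def, Equiv.symm_apply_apply] at h1
        have h2 := congrFun hg0 x
        simp only [Function.comp_apply] at h2 ⊢
        rw [h1, h2]
    rw [← Fintype.card_subtype]
    rw [Fintype.card_congr etrans, DomMulAct.stabilizer_card f0]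
    refine Finset.prod_congr rfl fun d _ => ?_
    rw [Fintype.card_subtype]
    have := congrFun hf0 d
    simp only [fiberVec] at this
    rw [this]
  rw [Finset.sum_congr rfl (fun f hf => fibcard f (by simpa using hf))] at key
  rw [Finset.sum_const, smul_eq_mul] at key
  rw [← key, Fintype.card_perm, Fintype.card_fin]


lemma innerSum_eq_sum (M n : ℕ) : innerSum M n =
    ∑ b ∈ Fintype.piFinset (fun _ : Fin M => Finset.range (n+1)),
      if 2 * ∑ j, b j = n then
        ∏ j, ∑ c ∈ Finset.range (b j + 1),
          (((c.factorial * (b j - c).factorial : ℕ) : ℝ))⁻¹ ^ 2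
      else 0 := by
  classical
  refine tsum_eq_sum ?_
  intro b hb
  rw [if_neg]
  intro h2
  apply hb
  rw [Fintype.mem_piFinset]
  intro j
  rw [Finset.mem_range]
  have : b j ≤ ∑ j', b j' := Finset.single_le_sum (fun _ _ => Nat.zero_le _) (mem_univ j)
  omega

def balN (M : ℕ) (N : Fin M × Fin 4 → ℕ) : Prop :=
  ∀ j, N (j,0) = N (j,2) ∧ N (j,1) = N (j,3)

instance (M : ℕ) (N : Fin M × Fin 4 → ℕ) : Decidable (balN M N) := by
  unfold balN; infer_instance

def NofBC (M : ℕ) (b c : Fin M → ℕ) : Fin M × Fin 4 → ℕ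
  | (j, 0) => c j
  | (j, 1) => b j - c j
  | (j, 2) => c j
  | (j, 3) => b j - c j

lemma sum_square (M : ℕ) (N : Fin M × Fin 4 → ℕ) :
    ∑ d, N d = ∑ j, (N (j,0) + N (j,1) + N (j,2) + N (j,3)) := by
  rw [Fintype.sum_prod_type]
  refine Finset.sum_congr rfl fun j _ => ?_
  rw [Fin.sum_univ_four]

lemma perK (M n : ℕ) :
    (((Finset.univ : Finset (Fin n → Fin M × Fin 4)).filter
        fun f => balN M (fiberVec f)).card : ℝ)
      = n.factorial * innerSum M n := by
  classical
  set t := (Fintype.piFinset fun _ : Fin M × Fin 4 => Finset.range (n+1)).filter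
      (fun N => (∑ d, N d = n) ∧ balN M N) with ht
  have hmap : ∀ f ∈ Finset.univ.filter (fun f : Fin n → Fin M × Fin 4 => balN M (fiberVec f)),
      fiberVec f ∈ t := by
    intro f hf
    rw [ht, mem_filter]
    refine ⟨?_, sum_fiberVec f, (mem_filter.1 hf).2⟩
    rw [Fintype.mem_piFinset]
    intro d
    rw [mem_range]
    have h1 : fiberVec f d ≤ Fintype.card (Fin n) := by
      simpa [fiberVec] using Finset.card_filter_le (univ : Finset (Fin n)) (fun l => f l = d)
    simp at h1; omega
  have hsplit := Finset.card_eq_sum_card_fiberwise hmap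
  have hterm : ∀ N ∈ t,
      ((Finset.univ.filter (fun f : Fin n → Fin M × Fin 4 => balN M (fiberVec f))).filter
        (fun f => fiberVec f = N)).card
      = (Finset.univ.filter fun f : Fin n → Fin M × Fin 4 => fiberVec f = N).card := by
    intro N hN
    congr 1
    rw [Finset.filter_filter]
    apply Finset.filter_congr
    intro f _
    constructor
    · exact fun h => h.2
    · intro h
      exact ⟨h ▸ ((mem_filter.1 hN).2.2), h⟩
  rw [Finset.sum_congr rfl hterm] at hsplit
  -- cast
  have hval : ∀ N ∈ t,
      ((Finset.univ.filter fun f : Fin n → Fin M × Fin 4 => fiberVec f = N).card : ℝ)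
        = n.factorial * ∏ d, (((N d).factorial : ℝ))⁻¹ := by
    intro N hN
    have hsum : ∑ d, N d = n := (mem_filter.1 hN).2.1
    have := count_mul N hsum
    have hc : ((Finset.univ.filter fun f : Fin n → Fin M × Fin 4 => fiberVec f = N).card : ℝ)
        * ∏ d, ((N d).factorial : ℝ) = (n.factorial : ℝ) := by
      exact_mod_cast congrArg (Nat.cast : ℕ → ℝ) this
    have hne : (∏ d, ((N d).factorial : ℝ)) ≠ 0 :=
      Finset.prod_ne_zero_iff.2 fun d _ => Nat.cast_ne_zero.2 (Nat.factorial_ne_zero _)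
    rw [Finset.prod_inv_distrib, ← hc, mul_assoc, mul_inv_cancel₀ hne, mul_one]
  rw [hsplit]
  push_cast
  rw [Finset.sum_congr rfl hval]
  -- now the RHS
  rw [innerSum_eq_sum, Finset.mul_sum]
  rw [← Finset.sum_filter_add_sum_filter_not
    (Fintype.piFinset fun _ : Fin M => Finset.range (n+1)) (fun b => 2 * ∑ j, b j = n)]
  have hzero : ∑ b ∈ (Fintype.piFinset fun _ : Fin M => Finset.range (n+1)).filter
      (fun b => ¬ (2 * ∑ j, b j = n)),
      (n.factorial : ℝ) * (if 2 * ∑ j, b j = n then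
        ∏ j, ∑ c ∈ Finset.range (b j + 1),
          (((c.factorial * (b j - c).factorial : ℕ) : ℝ))⁻¹ ^ 2 else 0) = 0 := by
    apply Finset.sum_eq_zero
    intro b hb
    rw [if_neg (mem_filter.1 hb).2, mul_zero]
  rw [hzero, add_zero]
  have hif : ∀ b ∈ (Fintype.piFinset fun _ : Fin M => Finset.range (n+1)).filter
      (fun b => 2 * ∑ j, b j = n),
      (n.factorial : ℝ) * (if 2 * ∑ j, b j = n then
        ∏ j, ∑ c ∈ Finset.range (b j + 1),
          (((c.factorial * (b j - c).factorial : ℕ) : ℝ))⁻¹ ^ 2 else 0)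
      = ∑ c ∈ Fintype.piFinset (fun j => Finset.range (b j + 1)),
          (n.factorial : ℝ) * ∏ j, (((c j).factorial * (b j - c j).factorial : ℕ) : ℝ)⁻¹ ^ 2 := by
    intro b hb
    rw [if_pos (mem_filter.1 hb).2, Finset.prod_univ_sum, Finset.mul_sum]
  rw [Finset.sum_congr rfl hif, Finset.sum_sigma']
  -- bijection
  refine Finset.sum_nbij' (i := fun N => (⟨fun j => N (j,0) + N (j,1), fun j => N (j,0)⟩ :
      Σ _ : Fin M → ℕ, Fin M → ℕ))
    (j := fun p => NofBC M p.1 p.2) ?_ ?_ ?_ ?_ ?_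
  · intro N hN
    obtain ⟨hpi, hsum, hbal⟩ := mem_filter.1 hN
    rw [Fintype.mem_piFinset] at hpi
    rw [Finset.mem_sigma, mem_filter, Fintype.mem_piFinset]
    have h2 : 2 * ∑ j, (N (j,0) + N (j,1)) = n := by
      rw [sum_square] at hsum
      rw [Finset.mul_sum, ← hsum]
      refine Finset.sum_congr rfl fun j _ => ?_
      have := hbal j
      omega
    refine ⟨⟨?_, h2⟩, ?_⟩
    · intro j
      have hj : N (j,0) + N (j,1) ≤ ∑ j', (N (j',0) + N (j',1)) := by
        simpa using Finset.single_le_sum (f := fun j => N (j,0) + N (j,1))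
          (fun _ _ => Nat.zero_le _) (mem_univ j)
      simp only [mem_range]
      show N (j,0) + N (j,1) < n + 1
      omega
    · rw [Fintype.mem_piFinset]
      intro j
      simp only [mem_range]
      show N (j,0) < N (j,0) + N (j,1) + 1
      omega
  · intro p hp
    rw [Finset.mem_sigma, mem_filter, Fintype.mem_piFinset] at hp
    obtain ⟨⟨hb, h2⟩, hc⟩ := hp
    rw [Fintype.mem_piFinset] at hc
    rw [ht, mem_filter, Fintype.mem_piFinset]
    have hcb : ∀ j, p.2 j ≤ p.1 j := by
      intro j
      have := hc j
      rw [mem_range] at this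
      omega
    have hNd : ∀ d, NofBC M p.1 p.2 d ≤ n := by
      rintro ⟨j, i⟩
      have h1 : p.1 j ≤ ∑ j', p.1 j' :=
        Finset.single_le_sum (fun _ _ => Nat.zero_le _) (mem_univ j)
      have := hcb j
      fin_cases i <;> simp [NofBC] <;> omega
    refine ⟨fun d => mem_range.2 (Nat.lt_succ_of_le (hNd d)), ?_, ?_⟩
    · rw [sum_square]
      have : ∀ j, NofBC M p.1 p.2 (j,0) + NofBC M p.1 p.2 (j,1) + NofBC M p.1 p.2 (j,2)
          + NofBC M p.1 p.2 (j,3) = 2 * p.1 j := by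
        intro j
        simp [NofBC]
        have := hcb j
        omega
      rw [Finset.sum_congr rfl fun j _ => this j, ← Finset.mul_sum, h2]
    · intro j
      simp [balN, NofBC]
  · intro N hN
    obtain ⟨hpi, hsum, hbal⟩ := mem_filter.1 hN
    funext d
    obtain ⟨j, i⟩ := d
    have := hbal j
    fin_cases i <;> simp [NofBC] <;> omega
  · intro p hp
    rw [Finset.mem_sigma, mem_filter, Fintype.mem_piFinset] at hp
    obtain ⟨⟨hb, h2⟩, hc⟩ := hp
    rw [Fintype.mem_piFinset] at hc
    have hcb : ∀ j, p.2 j ≤ p.1 j := by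
      intro j
      have := hc j
      rw [mem_range] at this
      omega
    obtain ⟨b, c⟩ := p
    have h1 : (fun j => NofBC M b c (j,0) + NofBC M b c (j,1)) = b := by
      funext j
      simp only [NofBC]
      have := hcb j
      simp at this
      omega
    have h2' : (fun j => NofBC M b c (j,0)) = c := by
      funext j
      simp [NofBC]
    beta_reduce
    rw [h1, h2']
  · intro N hN
    obtain ⟨hpi, hsum, hbal⟩ := mem_filter.1 hN
    rw [Fintype.prod_prod_type]
    have hprod : ∀ j : Fin M, ∏ i : Fin 4, (((N (j,i)).factorial : ℝ))⁻¹
        = ((((N (j,0)).factorial * (N (j,0) + N (j,1) - N (j,0)).factorial : ℕ)) : ℝ)⁻¹ ^ 2 := by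
      intro j
      rw [Fin.prod_univ_four]
      have h2 := (hbal j).1
      have h3 := (hbal j).2
      rw [← h2, ← h3]
      have : N (j,0) + N (j,1) - N (j,0) = N (j,1) := by omega
      rw [this]
      push_cast
      rw [mul_inv]
      ring
    rw [Finset.prod_congr rfl fun j _ => hprod j]



lemma innerSum_odd (M n : ℕ) (h : Odd n) : innerSum M n = 0 := by
  rw [innerSum]
  have hz : ∀ b : Fin M → ℕ, (if 2 * ∑ j, b j = n then
      ∏ j, ∑ c ∈ Finset.range (b j + 1),
        (((c.factorial * (b j - c).factorial : ℕ) : ℝ))⁻¹ ^ 2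
    else 0) = 0 := by
    intro b
    rw [if_neg]
    obtain ⟨c, hc⟩ := h
    omega
  rw [tsum_congr hz]
  exact tsum_zero

-- ===== geometry =====
variable (lam : ℕ → ℝ)

def vc (θ : ℕ × ℕ → ℝ) (i : ℕ × ℕ) : ℝ := Real.sqrt (lam i.1) / (2 * π) * Real.cos (θ i)
def vs (θ : ℕ × ℕ → ℝ) (i : ℕ × ℕ) : ℝ := Real.sqrt (lam i.1) / (2 * π) * Real.sin (θ i)

def Good (θ : ℕ × ℕ → ℝ) : Prop :=
  ∀ (T : Finset (ℕ × ℕ)) (p q : ℕ × ℕ → ℤ),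
    (∑ i ∈ T, ((p i : ℝ) * vc lam θ i + (q i : ℝ) * vs lam θ i)) = 0 →
    ∀ i ∈ T, p i = 0 ∧ q i = 0

def sgnc : Fin 4 → ℤ
  | 0 => 1
  | 1 => -1
  | 2 => -1
  | 3 => 1

def sgns : Fin 4 → ℤ
  | 0 => 1
  | 1 => 1
  | 2 => -1
  | 3 => -1

@[simp] lemma sgnc_0 : sgnc 0 = 1 := rfl
@[simp] lemma sgnc_1 : sgnc 1 = -1 := rfl
@[simp] lemma sgnc_2 : sgnc 2 = -1 := rfl
@[simp] lemma sgnc_3 : sgnc 3 = 1 := rfl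
@[simp] lemma sgns_0 : sgns 0 = 1 := rfl
@[simp] lemma sgns_1 : sgns 1 = 1 := rfl
@[simp] lemma sgns_2 : sgns 2 = -1 := rfl
@[simp] lemma sgns_3 : sgns 3 = -1 := rfl

variable (m : ℕ → ℕ) (θ : ℕ × ℕ → ℝ)

def pt (k : ℕ) (d : Fin (m k) × Fin 4) : ℝ × ℝ :=
  (Real.sqrt (lam k) / (2 * π)) • zeta d.2 (θ (k, (d.1 : ℕ)))

lemma pt_fst (k : ℕ) (d : Fin (m k) × Fin 4) :
    (pt lam m θ k d).1 = (sgnc d.2 : ℝ) * vc lam θ (k, (d.1 : ℕ)) := by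
  obtain ⟨j, i⟩ := d
  fin_cases i <;> simp [pt, zeta, vc, sgnc, Prod.smul_def, smul_eq_mul] <;> try ring

lemma pt_snd (k : ℕ) (d : Fin (m k) × Fin 4) :
    (pt lam m θ k d).2 = (sgns d.2 : ℝ) * vs lam θ (k, (d.1 : ℕ)) := by
  obtain ⟨j, i⟩ := d
  fin_cases i <;> simp [pt, zeta, vs, sgns, Prod.smul_def, smul_eq_mul] <;> try ring

lemma pt_neg2 (k : ℕ) (j : Fin (m k)) : pt lam m θ k (j, 2) = - pt lam m θ k (j, 0) := by
  simp [pt, zeta, Prod.neg_mk, smul_neg]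

lemma pt_neg3 (k : ℕ) (j : Fin (m k)) : pt lam m θ k (j, 3) = - pt lam m θ k (j, 1) := by
  simp [pt, zeta, Prod.neg_mk, smul_neg]

lemma vc_ne_zero (hθ : Good lam θ) (i : ℕ × ℕ) : vc lam θ i ≠ 0 := by
  intro h
  have := hθ {i} (fun _ => 1) (fun _ => 0) (by simp [h]) i (mem_singleton_self i)
  simpa using this.1

lemma vs_ne_zero (hθ : Good lam θ) (i : ℕ × ℕ) : vs lam θ i ≠ 0 := by
  intro h
  have := hθ {i} (fun _ => 0) (fun _ => 1) (by simp [h]) i (mem_singleton_self i)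
  simpa using this.2

lemma sgnc_ne_zero (i : Fin 4) : sgnc i ≠ 0 := by fin_cases i <;> simp [sgnc]

lemma pt_inj (hθ : Good lam θ) (k : ℕ) : Function.Injective (pt lam m θ k) := by
  intro d d' h
  obtain ⟨j, i⟩ := d
  obtain ⟨j', i'⟩ := d'
  have h1 : (sgnc i : ℝ) * vc lam θ (k, (j : ℕ)) = (sgnc i' : ℝ) * vc lam θ (k, (j' : ℕ)) := by
    have := congrArg Prod.fst h
    rw [pt_fst, pt_fst] at this
    exact this
  have h2 : (sgns i : ℝ) * vs lam θ (k, (j : ℕ)) = (sgns i' : ℝ) * vs lam θ (k, (j' : ℕ)) := by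
    have := congrArg Prod.snd h
    rw [pt_snd, pt_snd] at this
    exact this
  by_cases hjj : (j : ℕ) = (j' : ℕ)
  · have hj : j = j' := Fin.val_injective hjj
    subst hj
    have hc : (sgnc i : ℝ) = (sgnc i' : ℝ) :=
      mul_right_cancel₀ (vc_ne_zero lam θ hθ _) h1
    have hs : (sgns i : ℝ) = (sgns i' : ℝ) :=
      mul_right_cancel₀ (vs_ne_zero lam θ hθ _) h2
    have hc' : sgnc i = sgnc i' := by exact_mod_cast hc
    have hs' : sgns i = sgns i' := by exact_mod_cast hs
    have : i = i' := by
      revert hc' hs'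
      fin_cases i <;> fin_cases i' <;> decide
    rw [this]
  · exfalso
    have hne : ((k, (j : ℕ)) : ℕ × ℕ) ≠ (k, (j' : ℕ)) := by
      simp [Prod.ext_iff, hjj]
    have hs0 : ∑ x ∈ ({(k, (j : ℕ)), (k, (j' : ℕ))} : Finset (ℕ × ℕ)),
        ((((if x = (k, (j : ℕ)) then sgnc i else - sgnc i' : ℤ)) : ℝ) * vc lam θ x
          + (((0:ℤ)) : ℝ) * vs lam θ x) = 0 := by
      rw [Finset.sum_insert (by simpa using hne), Finset.sum_singleton]
      rw [if_pos rfl, if_neg (Ne.symm hne)]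
      push_cast
      linear_combination h1
    have := hθ {(k, (j : ℕ)), (k, (j' : ℕ))}
      (fun x => if x = (k, (j : ℕ)) then sgnc i else - sgnc i') (fun _ => 0) hs0
      (k, (j : ℕ)) (by simp)
    rw [if_pos rfl] at this
    exact sgnc_ne_zero i this.1

-- sum over fibers helper
lemma sum_comp_univ {α β M : Type*} [Fintype α] [DecidableEq β] [Fintype β] [AddCommMonoid M]
    (g : α → β) (F : β → M) :
    ∑ a, F (g a) = ∑ b, (Finset.univ.filter fun a => g a = b).card • F b := by
  classical
  rw [← Finset.sum_fiberwise_of_maps_to (t := Finset.univ)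
    (fun a _ => Finset.mem_univ (g a)) (fun a => F (g a))]
  refine Finset.sum_congr rfl fun b _ => ?_
  have h1 : ∀ a ∈ Finset.univ.filter (fun a => g a = b), F (g a) = F b := by
    intro a ha
    rw [(Finset.mem_filter.1 ha).2]
  rw [Finset.sum_congr rfl h1, Finset.sum_const]

lemma fiberVec_zero {D : Type*} [DecidableEq D] {n : ℕ} (hn : n = 0) (f : Fin n → D) (d : D) :
    fiberVec f d = 0 := by
  subst hn
  simp [fiberVec]

-- characterization of zero sums
lemma sum_pt_eq_zero_iff (hθ : Good lam θ) (a : ℕ →₀ ℕ)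
    (g : ∀ k, Fin (a k) → Fin (m k) × Fin 4) :
    (∑ k ∈ a.support, ∑ l, pt lam m θ k (g k l)) = 0 ↔
      ∀ k, balN (m k) (fiberVec (g k)) := by
  classical
  constructor
  · intro hsum k0
    by_cases hk0 : k0 ∈ a.support
    swap
    · intro j
      have h0 : a k0 = 0 := Finsupp.notMem_support_iff.1 hk0
      simp [fiberVec_zero h0]
    set S := a.support
    set MM := S.sup m with hMM
    set P : ℕ × ℕ → ℤ := fun i =>
      ∑ l : Fin (a i.1), if ((g i.1 l).1 : ℕ) = i.2 then sgnc (g i.1 l).2 else 0 with hP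
    set Q : ℕ × ℕ → ℤ := fun i =>
      ∑ l : Fin (a i.1), if ((g i.1 l).1 : ℕ) = i.2 then sgns (g i.1 l).2 else 0 with hQ
    -- x-component
    have hx : ∑ i ∈ S ×ˢ Finset.range MM, (P i : ℝ) * vc lam θ i
        = (∑ k ∈ S, ∑ l, pt lam m θ k (g k l)).1 := by
      rw [Prod.fst_sum, Finset.sum_product]
      refine Finset.sum_congr rfl fun k hk => ?_
      rw [Prod.fst_sum]
      have : ∀ j ∈ Finset.range MM, (P (k, j) : ℝ) * vc lam θ (k, j)
          = ∑ l : Fin (a k), if ((g k l).1 : ℕ) = j then (sgnc (g k l).2 : ℝ) * vc lam θ (k, j) else 0 := by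
        intro j _
        rw [hP]
        push_cast
        rw [Finset.sum_mul]
        refine Finset.sum_congr rfl fun l _ => ?_
        split <;> simp
      rw [Finset.sum_congr rfl this, Finset.sum_comm]
      refine Finset.sum_congr rfl fun l _ => ?_
      rw [Finset.sum_ite_eq (Finset.range MM) ((g k l).1 : ℕ)
        (fun j => (sgnc (g k l).2 : ℝ) * vc lam θ (k, j))]
      rw [if_pos]
      · rw [pt_fst]
      · rw [Finset.mem_range]
        exact lt_of_lt_of_le (g k l).1.isLt (Finset.le_sup hk)
    have hy : ∑ i ∈ S ×ˢ Finset.range MM, (Q i : ℝ) * vs lam θ i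
        = (∑ k ∈ S, ∑ l, pt lam m θ k (g k l)).2 := by
      rw [Prod.snd_sum, Finset.sum_product]
      refine Finset.sum_congr rfl fun k hk => ?_
      rw [Prod.snd_sum]
      have : ∀ j ∈ Finset.range MM, (Q (k, j) : ℝ) * vs lam θ (k, j)
          = ∑ l : Fin (a k), if ((g k l).1 : ℕ) = j then (sgns (g k l).2 : ℝ) * vs lam θ (k, j) else 0 := by
        intro j _
        rw [hQ]
        push_cast
        rw [Finset.sum_mul]
        refine Finset.sum_congr rfl fun l _ => ?_
        split <;> simp
      rw [Finset.sum_congr rfl this, Finset.sum_comm]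
      refine Finset.sum_congr rfl fun l _ => ?_
      rw [Finset.sum_ite_eq (Finset.range MM) ((g k l).1 : ℕ)
        (fun j => (sgns (g k l).2 : ℝ) * vs lam θ (k, j))]
      rw [if_pos]
      · rw [pt_snd]
      · rw [Finset.mem_range]
        exact lt_of_lt_of_le (g k l).1.isLt (Finset.le_sup hk)
    have hzero := hθ (S ×ˢ Finset.range MM) P Q (by
      rw [Finset.sum_add_distrib, hx, hy, hsum]
      simp)
    -- now extract balance at k0
    intro j
    have hPj := (hzero (k0, (j : ℕ)) (Finset.mem_product.2
      ⟨hk0, Finset.mem_range.2 (lt_of_lt_of_le j.isLt (Finset.le_sup hk0))⟩)).1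
    have hQj := (hzero (k0, (j : ℕ)) (Finset.mem_product.2
      ⟨hk0, Finset.mem_range.2 (lt_of_lt_of_le j.isLt (Finset.le_sup hk0))⟩)).2
    -- rewrite P as fiber sums
    have hPfib : P (k0, (j : ℕ)) = ∑ i : Fin 4, (fiberVec (g k0) (j, i) : ℤ) * sgnc i := by
      have hstart : P (k0, (j : ℕ))
          = ∑ l : Fin (a k0), if ((g k0 l).1 : ℕ) = (j : ℕ) then sgnc (g k0 l).2 else 0 := rfl
      rw [hstart]
      have := sum_comp_univ (g k0)
        (fun d : Fin (m k0) × Fin 4 => if ((d.1 : ℕ) = (j : ℕ)) then sgnc d.2 else 0)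
      rw [this, Fintype.sum_prod_type]
      rw [Finset.sum_eq_single j]
      · refine Finset.sum_congr rfl fun i _ => ?_
        rw [if_pos rfl]
        simp [fiberVec, nsmul_eq_mul]
      · intro j' _ hj'
        have : ((j' : ℕ) = (j : ℕ)) = False := by
          simp [Fin.val_injective.ne hj']
        simp [this]
      · intro h
        exact absurd (mem_univ j) h
    have hQfib : Q (k0, (j : ℕ)) = ∑ i : Fin 4, (fiberVec (g k0) (j, i) : ℤ) * sgns i := by
      have hstart : Q (k0, (j : ℕ))
          = ∑ l : Fin (a k0), if ((g k0 l).1 : ℕ) = (j : ℕ) then sgns (g k0 l).2 else 0 := rfl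
      rw [hstart]
      have := sum_comp_univ (g k0)
        (fun d : Fin (m k0) × Fin 4 => if ((d.1 : ℕ) = (j : ℕ)) then sgns d.2 else 0)
      rw [this, Fintype.sum_prod_type]
      rw [Finset.sum_eq_single j]
      · refine Finset.sum_congr rfl fun i _ => ?_
        rw [if_pos rfl]
        simp [fiberVec, nsmul_eq_mul]
      · intro j' _ hj'
        have : ((j' : ℕ) = (j : ℕ)) = False := by
          simp [Fin.val_injective.ne hj']
        simp [this]
      · intro h
        exact absurd (mem_univ j) h
    rw [hPfib] at hPj
    rw [hQfib] at hQj
    rw [Fin.sum_univ_four] at hPj hQj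
    simp only [sgnc_0, sgnc_1, sgnc_2, sgnc_3, sgns_0, sgns_1, sgns_2, sgns_3,
      mul_one, mul_neg_one] at hPj hQj
    exact ⟨by omega, by omega⟩
  · intro hbal
    refine Finset.sum_eq_zero fun k _ => ?_
    have : ∑ l, pt lam m θ k (g k l)
        = ∑ d, (fiberVec (g k) d) • pt lam m θ k d := by
      exact sum_comp_univ (g k) (pt lam m θ k)
    rw [this, Fintype.sum_prod_type]
    refine Finset.sum_eq_zero fun j _ => ?_
    rw [Fin.sum_univ_four, pt_neg2, pt_neg3, (hbal k j).1, (hbal k j).2]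
    rw [smul_neg, smul_neg]
    abel


-- unique instance for trivial factors
def uniqueTk {n : ℕ} (hn : n = 0) (M : ℕ) :
    Unique {f : Fin n → Fin M × Fin 4 // balN M (fiberVec f)} := by
  subst hn
  refine ⟨⟨⟨fun l => l.elim0, ?_⟩⟩, ?_⟩
  · intro j
    simp [fiberVec_zero rfl]
  · intro g
    apply Subtype.ext
    funext l
    exact l.elim0

lemma Ncount_eq_prod (hθ : Good lam θ) (a : ℕ →₀ ℕ) :
    (Ncount lam m θ a : ℝ)
      = ∏ k ∈ a.support, (((a k).factorial : ℝ) * innerSum (m k) (a k)) := by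
  classical
  -- the two subtypes
  set Xi := {ξ : (k : ℕ) → Fin (a k) → ℝ × ℝ //
    (∀ k l, ξ k l ∈ waveVectors lam m θ k) ∧
    ∑ k ∈ a.support, ∑ l, ξ k l = 0} with hXi
  set G := {g : (k : ℕ) → Fin (a k) → Fin (m k) × Fin 4 //
    ∀ k, balN (m k) (fiberVec (g k))} with hG
  have hmemPt : ∀ (k : ℕ) (d : Fin (m k) × Fin 4), pt lam m θ k d ∈ waveVectors lam m θ k := by
    intro k d
    exact ⟨(d.1 : ℕ), d.1.isLt, d.2, rfl⟩
  let Φ : G → Xi := fun g => ⟨fun k l => pt lam m θ k (g.1 k l),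
    fun k l => hmemPt k (g.1 k l),
    by
      refine (sum_pt_eq_zero_iff lam m θ hθ a g.1).2 g.2⟩
  have hbij : Function.Bijective Φ := by
    constructor
    · intro g g' h
      apply Subtype.ext
      funext k l
      have := congrFun (congrFun (congrArg Subtype.val h) k) l
      exact pt_inj lam m θ hθ k this
    · rintro ⟨ξ, hmem, hsum⟩
      have hd : ∀ (k : ℕ) (l : Fin (a k)), ∃ d : Fin (m k) × Fin 4, ξ k l = pt lam m θ k d := by
        intro k l
        obtain ⟨j, hj, i, hi⟩ := hmem k l
        exact ⟨(⟨j, hj⟩, i), hi⟩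
      choose g hg using hd
      have hxi : ξ = fun k l => pt lam m θ k (g k l) := by
        funext k l
        exact hg k l
      have hbal : ∀ k, balN (m k) (fiberVec (g k)) := by
        refine (sum_pt_eq_zero_iff lam m θ hθ a g).1 ?_
        rw [← hsum]
        exact (Finset.sum_congr rfl fun k _ => Finset.sum_congr rfl fun l _ => (hg k l).symm)
      exact ⟨⟨g, hbal⟩, Subtype.ext hxi.symm⟩
  have hcard : Ncount lam m θ a = Nat.card G := by
    rw [Ncount]
    exact (Nat.card_congr (Equiv.ofBijective Φ hbij)).symm
  -- split into product over support
  let Tk : ℕ → Type := fun k => {f : Fin (a k) → Fin (m k) × Fin 4 // balN (m k) (fiberVec f)}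
  have hG2 : Nat.card G = Nat.card (∀ k, Tk k) :=
    Nat.card_congr (Equiv.subtypePiEquivPi
      (p := fun (k : ℕ) (f : Fin (a k) → Fin (m k) × Fin 4) => balN (m k) (fiberVec f)))
  haveI : ∀ k : {x // ¬ x ∈ a.support}, Unique (Tk (k : ℕ)) := by
    intro k
    exact uniqueTk (by simpa using Finsupp.notMem_support_iff.1 k.2) (m k)
  have hG3 : Nat.card (∀ k, Tk k) = Nat.card (∀ k : {x // x ∈ a.support}, Tk (k : ℕ)) := by
    refine Nat.card_congr ?_
    exact (Equiv.piEquivPiSubtypeProd (fun k => k ∈ a.support) Tk).trans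
      (Equiv.prodUnique _ _)
  have hG4 : Nat.card (∀ k : {x // x ∈ a.support}, Tk (k : ℕ))
      = ∏ k : {x // x ∈ a.support}, Nat.card (Tk (k : ℕ)) := Nat.card_pi
  have hTk : ∀ k, (Nat.card (Tk k) : ℝ)
      = ((a k).factorial : ℝ) * innerSum (m k) (a k) := by
    intro k
    have h1 : Nat.card (Tk k)
        = (Finset.univ.filter fun f : Fin (a k) → Fin (m k) × Fin 4 =>
            balN (m k) (fiberVec f)).card := by
      rw [Nat.card_eq_fintype_card]
      exact Fintype.card_subtype _
    rw [h1]
    exact perK (m k) (a k)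
  rw [hcard, hG2, hG3, hG4]
  push_cast
  rw [Finset.prod_coe_sort a.support (fun k => (Nat.card (Tk k) : ℝ))]
  exact Finset.prod_congr rfl fun k _ => hTk k


instance : IsProbabilityMeasure unif := by
  constructor
  rw [unif, Measure.smul_apply, Measure.restrict_apply MeasurableSet.univ, Set.univ_inter,
    Real.volume_Icc]
  rw [smul_eq_mul, sub_zero]
  exact ENNReal.inv_mul_cancel (by simp [Real.pi_pos, Real.pi_pos.le]) (by simp)

lemma unif_null {s : Set ℝ} (hs : s.Countable) : unif s = 0 := by
  have h1 : volume.restrict (Set.Icc 0 (π / 2)) s = 0 := by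
    have := Measure.restrict_le_self (μ := volume) (s := Set.Icc 0 (π/2))
    have h2 := this s
    rw [hs.measure_zero volume] at h2
    exact le_antisymm h2 zero_le
  rw [unif, Measure.smul_apply, h1, smul_eq_mul, mul_zero]

lemma countable_trig {A B C : ℝ} (h : ¬ (A = 0 ∧ B = 0)) :
    Set.Countable {t : ℝ | A * Real.cos t + B * Real.sin t = C} := by
  set z : ℂ := ⟨A, B⟩ with hz
  have hz0 : z ≠ 0 := by
    intro h0
    apply h
    rw [Complex.ext_iff] at h0
    exact ⟨h0.1, h0.2⟩
  set R : ℝ := ‖z‖ with hR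
  have hRpos : 0 < R := norm_pos_iff.2 hz0
  set φ : ℝ := Complex.arg z with hφ
  have hcos : Real.cos φ = A / R := by rw [hφ, Complex.cos_arg hz0]
  have hsin : Real.sin φ = B / R := by rw [hφ, Complex.sin_arg]
  have key : ∀ t, A * Real.cos t + B * Real.sin t = R * Real.cos (t - φ) := by
    intro t
    rw [Real.cos_sub, hcos, hsin]
    field_simp
  by_cases hne : {t : ℝ | A * Real.cos t + B * Real.sin t = C}.Nonempty
  · obtain ⟨t0, ht0⟩ := hne
    have hsub : {t : ℝ | A * Real.cos t + B * Real.sin t = C} ⊆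
        ⋃ k : ℤ, ({(t0 - φ) - 2 * k * π + φ, 2 * k * π - (t0 - φ) + φ} : Set ℝ) := by
      intro t ht
      have h1 : Real.cos (t - φ) = Real.cos (t0 - φ) := by
        have e1 : R * Real.cos (t - φ) = C := by rw [← key t]; exact ht
        have e2 : R * Real.cos (t0 - φ) = C := by rw [← key t0]; exact ht0
        have := e1.trans e2.symm
        exact mul_left_cancel₀ (ne_of_gt hRpos) this
      rw [Real.cos_eq_cos_iff] at h1
      obtain ⟨k, hk | hk⟩ := h1
      · refine Set.mem_iUnion.2 ⟨k, ?_⟩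
        simp only [Set.mem_insert_iff, Set.mem_singleton_iff]
        exact Or.inl (by linarith)
      · refine Set.mem_iUnion.2 ⟨k, ?_⟩
        simp only [Set.mem_insert_iff, Set.mem_singleton_iff]
        exact Or.inr (by linarith)
    refine Set.Countable.mono hsub ?_
    refine Set.countable_iUnion fun k => ?_
    exact ((Set.finite_singleton _).insert _).countable
  · rw [Set.not_nonempty_iff_eq_empty] at hne
    rw [hne]
    exact Set.countable_empty

def BadSet (T : Finset (ℕ × ℕ)) (p q : ℕ × ℕ → ℤ) : Set (ℕ × ℕ → ℝ) :=
  {θ | ∑ i ∈ T, ((p i : ℝ) * vc lam θ i + (q i : ℝ) * vs lam θ i) = 0}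

lemma bad_null (hpos : ∀ k, 0 < lam k) (η : Measure (ℕ × ℕ → ℝ)) (hη : IsProductUniform η)
    (T : Finset (ℕ × ℕ)) (p q : ℕ × ℕ → ℤ) (i0 : ℕ × ℕ) (hi0 : i0 ∈ T)
    (hpq : ¬ (p i0 = 0 ∧ q i0 = 0)) :
    η (BadSet lam T p q) = 0 := by
  classical
  set rr : ℕ × ℕ → ℝ := fun i => Real.sqrt (lam i.1) / (2 * π) with hrr
  have hrrpos : ∀ i, 0 < rr i := by
    intro i
    apply div_pos (Real.sqrt_pos.2 (hpos i.1))
    positivity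
  set ι := {x // x ∈ T}
  set F : (ℕ × ℕ → ℝ) → (ι → ℝ) := fun θ i => θ i with hF
  have hFm : Measurable F := measurable_pi_lambda _ (fun i => measurable_pi_apply (i : ℕ × ℕ))
  set G : ι → ℝ → ℝ := fun i t =>
    (p (i : ℕ × ℕ) : ℝ) * (rr i * Real.cos t) + (q (i : ℕ × ℕ) : ℝ) * (rr i * Real.sin t)
    with hG
  set Z : Set (ι → ℝ) := {x | ∑ i : ι, G i (x i) = 0} with hZ
  have hGm : ∀ i : ι, Measurable fun x : ι → ℝ => G i (x i) := by
    intro i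
    apply Measurable.add
    · exact (((measurable_pi_apply i).cos.const_mul (rr i)).const_mul _)
    · exact (((measurable_pi_apply i).sin.const_mul (rr i)).const_mul _)
  have hZm : MeasurableSet Z := by
    have hsum : Measurable fun x : ι → ℝ => ∑ i : ι, G i (x i) :=
      Finset.measurable_sum _ (fun i _ => hGm i)
    exact hsum (measurableSet_singleton 0)
  have hpre : BadSet lam T p q = F ⁻¹' Z := by
    ext θ
    simp only [BadSet, Set.mem_setOf_eq, Set.mem_preimage, hZ]
    rw [← Finset.sum_coe_sort T (fun i => (p i : ℝ) * vc lam θ i + (q i : ℝ) * vs lam θ i)]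
    rfl
  -- pushforward is the product measure
  have hmap : Measure.map F η = Measure.pi (fun _ : ι => unif) := by
    symm
    refine Measure.pi_eq fun B hB => ?_
    rw [Measure.map_apply hFm (MeasurableSet.univ_pi hB)]
    set B' : ℕ × ℕ → Set ℝ := fun x => if h : x ∈ T then B ⟨x, h⟩ else Set.univ with hB'
    have hB'm : ∀ x, MeasurableSet (B' x) := by
      intro x
      show MeasurableSet (if h : x ∈ T then B ⟨x, h⟩ else Set.univ)
      split
      · exact hB _
      · exact MeasurableSet.univ
    have hset : F ⁻¹' Set.univ.pi B = {θ | ∀ x ∈ T, θ x ∈ B' x} := by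
      ext θ
      simp only [Set.mem_preimage, Set.mem_pi, Set.mem_univ, forall_true_left, Set.mem_setOf_eq]
      constructor
      · intro hθ x hx
        have := hθ ⟨x, hx⟩
        show θ x ∈ (if h : x ∈ T then B ⟨x, h⟩ else Set.univ)
        rw [dif_pos hx]
        exact this
      · intro hθ i
        have h2 := hθ (i : ℕ × ℕ) i.2
        have h3 : B' (i : ℕ × ℕ) = B i := by
          show (if h : (i : ℕ × ℕ) ∈ T then B ⟨(i : ℕ × ℕ), h⟩ else Set.univ) = B i
          rw [dif_pos i.2]
        rw [h3] at h2
        exact h2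
    rw [hset, hη.2 T B' hB'm, ← Finset.prod_coe_sort T (fun x => unif (B' x))]
    refine Finset.prod_congr rfl fun i _ => ?_
    have h3 : B' (i : ℕ × ℕ) = B i := by
      show (if h : (i : ℕ × ℕ) ∈ T then B ⟨(i : ℕ × ℕ), h⟩ else Set.univ) = B i
      rw [dif_pos i.2]
    rw [h3]
  have hη2 : η (BadSet lam T p q) = Measure.pi (fun _ : ι => unif) Z := by
    rw [hpre, ← hmap, Measure.map_apply hFm hZm]
  rw [hη2]
  -- split off coordinate i0
  set i0' : ι := ⟨i0, hi0⟩ with hi0'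
  set Pp : ι → Prop := fun i => ¬ (i = i0') with hPp
  haveI : DecidablePred Pp := fun i => instDecidableNot
  letI hUniq : Unique {i : ι // ¬ Pp i} :=
    ⟨⟨⟨i0', not_not_intro rfl⟩⟩, by
      rintro ⟨i, hi⟩
      have : i = i0' := not_not.1 hi
      subst this
      rfl⟩
  set e := MeasurableEquiv.piEquivPiSubtypeProd (fun _ : ι => ℝ) Pp with he
  have hmp := measurePreserving_piEquivPiSubtypeProd (fun _ : ι => unif) Pp
  set W : Set ((((i : {i : ι // Pp i}) → ℝ)) × ((i : {i : ι // ¬ Pp i}) → ℝ)) := ⇑e.symm ⁻¹' Z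
    with hW
  have hWm : MeasurableSet W := e.symm.measurable hZm
  have hpiZ : Measure.pi (fun _ : ι => unif) Z
      = ((Measure.pi fun _ : {i : ι // Pp i} => unif).prod
          (Measure.pi fun _ : {i : ι // ¬ Pp i} => unif)) W := by
    have h1 : ⇑e ⁻¹' W = Z := by
      rw [hW, ← Set.preimage_comp]
      have : ⇑e.symm ∘ ⇑e = id := by
        funext x
        exact e.symm_apply_apply x
      rw [this, Set.preimage_id]
    rw [← h1]
    exact hmp.measure_preimage hWm.nullMeasurableSet
  rw [hpiZ]
  rw [Measure.measure_prod_null hWm]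
  refine Filter.Eventually.of_forall fun x => ?_
  show (Measure.pi fun _ : {i : ι // ¬ Pp i} => unif) (Prod.mk x ⁻¹' W) = 0
  -- the slice
  have hslice : Prod.mk x ⁻¹' W =
      (fun y : (i : {i : ι // ¬ Pp i}) → ℝ => y default) ⁻¹'
        {t | (∑ i : {i : ι // Pp i}, G (i : ι) (x i)) + G i0' t = 0} := by
    ext y
    simp only [Set.mem_preimage, hW, Set.mem_setOf_eq, hZ]
    have hsplit : ∑ i : ι, G i (e.symm (x, y) i)
        = ∑ i : {i : ι // Pp i}, G (i : ι) (e.symm (x, y) (i : ι))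
          + ∑ i : {i : ι // ¬ Pp i}, G (i : ι) (e.symm (x, y) (i : ι)) :=
      (Fintype.sum_subtype_add_sum_subtype Pp (fun i => G i (e.symm (x, y) i))).symm
    have hval1 : ∀ i : {i : ι // Pp i}, e.symm (x, y) (i : ι) = x i := by
      intro i
      show (Equiv.piEquivPiSubtypeProd Pp (fun _ : ι => ℝ)).symm (x, y) (i : ι) = x i
      rw [Equiv.piEquivPiSubtypeProd_symm_apply]
      rw [dif_pos i.2]
    have hval2 : ∀ i : {i : ι // ¬ Pp i}, e.symm (x, y) (i : ι) = y i := by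
      intro i
      show (Equiv.piEquivPiSubtypeProd Pp (fun _ : ι => ℝ)).symm (x, y) (i : ι) = y i
      rw [Equiv.piEquivPiSubtypeProd_symm_apply]
      rw [dif_neg i.2]
    have hA : ∑ i : {i : ι // Pp i}, G (i : ι) (e.symm (x, y) (i : ι))
        = ∑ i : {i : ι // Pp i}, G (i : ι) (x i) :=
      Finset.sum_congr rfl (fun i _ => by rw [hval1 i])
    have hB : ∑ i : {i : ι // ¬ Pp i}, G (i : ι) (e.symm (x, y) (i : ι))
        = ∑ i : {i : ι // ¬ Pp i}, G (i : ι) (y i) :=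
      Finset.sum_congr rfl (fun i _ => by rw [hval2 i])
    rw [hsplit, hA, hB]
    rw [Fintype.sum_unique (fun i : {i : ι // ¬ Pp i} => G (i : ι) (y i))]
    have hdef : ((default : {i : ι // ¬ Pp i}) : ι) = i0' := rfl
    rw [hdef]
  rw [hslice]
  have hzset : {t : ℝ | (∑ i : {i : ι // Pp i}, G (i : ι) (x i)) + G i0' t = 0}
      = {t : ℝ | ((p i0 : ℝ) * rr i0) * Real.cos t + ((q i0 : ℝ) * rr i0) * Real.sin t
          = - ∑ i : {i : ι // Pp i}, G (i : ι) (x i)} := by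
    ext t
    simp only [Set.mem_setOf_eq, hG]
    constructor <;> intro h <;> [skip; skip] <;>
      · have : ((i0' : ι) : ℕ × ℕ) = i0 := rfl
        rw [this] at *
        linarith
  have hcnt : ({t : ℝ | (∑ i : {i : ι // Pp i}, G (i : ι) (x i)) + G i0' t = 0}).Countable := by
    rw [hzset]
    apply countable_trig
    rintro ⟨h1, h2⟩
    apply hpq
    have hr := (hrrpos i0).ne'
    constructor
    · have := mul_eq_zero.1 h1
      rcases this with h | h
      · exact_mod_cast h
      · exact absurd h hr
    · have := mul_eq_zero.1 h2
      rcases this with h | h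
      · exact_mod_cast h
      · exact absurd h hr
  have hmset : MeasurableSet {t : ℝ | (∑ i : {i : ι // Pp i}, G (i : ι) (x i)) + G i0' t = 0} := by
    have hm : Measurable fun t : ℝ =>
        (∑ i : {i : ι // Pp i}, G (i : ι) (x i)) + G i0' t := by
      apply measurable_const.add
      exact ((Real.measurable_cos.const_mul _).const_mul _).add
        ((Real.measurable_sin.const_mul _).const_mul _)
    exact hm (measurableSet_singleton 0)
  have hfu : ⇑(MeasurableEquiv.funUnique {i : ι // ¬ Pp i} ℝ)
      = fun y : (i : {i : ι // ¬ Pp i}) → ℝ => y default := rfl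
  have hfinal := (measurePreserving_funUnique unif {i : ι // ¬ Pp i}).measure_preimage
    (s := {t : ℝ | (∑ i : {i : ι // Pp i}, G (i : ι) (x i)) + G i0' t = 0})
    hmset.nullMeasurableSet
  rw [hfu] at hfinal
  rw [Subsingleton.elim (Subtype.fintype fun i : ι => ¬ Pp i) (@Unique.fintype _ hUniq)]
  exact hfinal.trans (unif_null hcnt)


lemma good_compl_null (hpos : ∀ k, 0 < lam k) (η : Measure (ℕ × ℕ → ℝ))
    (hη : IsProductUniform η) :
    η {θ | ¬ Good lam θ} = 0 := by
  classical
  have hsub : {θ | ¬ Good lam θ} ⊆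
      ⋃ (z : Finset (ℕ × ℕ) × ((ℕ × ℕ) →₀ ℤ) × ((ℕ × ℕ) →₀ ℤ))
        (_ : ∃ i ∈ z.1, ¬ (z.2.1 i = 0 ∧ z.2.2 i = 0)),
        BadSet lam z.1 (⇑z.2.1) (⇑z.2.2) := by
    intro θ hθ
    simp only [Set.mem_setOf_eq, Good] at hθ
    push_neg at hθ
    obtain ⟨T, p, q, hsum, i1, hi1, hne⟩ := hθ
    set p' : (ℕ × ℕ) →₀ ℤ := Finsupp.indicator T (fun i _ => p i) with hp'
    set q' : (ℕ × ℕ) →₀ ℤ := Finsupp.indicator T (fun i _ => q i) with hq'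
    refine Set.mem_iUnion.2 ⟨(T, p', q'), Set.mem_iUnion.2 ⟨⟨i1, hi1, ?_⟩, ?_⟩⟩
    · show ¬ (p' i1 = 0 ∧ q' i1 = 0)
      rw [hp', hq', Finsupp.indicator_of_mem hi1, Finsupp.indicator_of_mem hi1]
      tauto
    · show ∑ i ∈ T, ((p' i : ℝ) * vc lam θ i + (q' i : ℝ) * vs lam θ i) = 0
      have hco : ∀ i ∈ T, ((p' i : ℝ) * vc lam θ i + (q' i : ℝ) * vs lam θ i)
          = ((p i : ℝ) * vc lam θ i + (q i : ℝ) * vs lam θ i) := by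
        intro i hi
        rw [hp', hq', Finsupp.indicator_of_mem hi, Finsupp.indicator_of_mem hi]
      rw [Finset.sum_congr rfl hco]
      exact hsum
  refine measure_mono_null hsub ?_
  refine measure_iUnion_null fun z => measure_iUnion_null fun hz => ?_
  obtain ⟨i1, hi1, hne⟩ := hz
  exact bad_null lam hpos η hη z.1 (⇑z.2.1) (⇑z.2.2) i1 hi1 hne


end Aux

theorem statement_3 (lam : ℕ → ℝ) (hmono : StrictMono lam) (hpos : ∀ k, 0 < lam k)
    (m : ℕ → ℕ) (hm : ∀ k, 1 ≤ m k)
    (η : Measure (ℕ × ℕ → ℝ)) (hη : IsProductUniform η)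
    (μ : Measure (ℕ × ℕ → ℝ)) (hprob : IsProbabilityMeasure μ) (hac : μ ≪ η) :
    ∀ᵐ θ ∂μ, ∀ a : ℕ →₀ ℕ,
      ((Ncount lam m θ a : ℝ) =
        ((a.prod fun _ e => e.factorial : ℕ) : ℝ) * a.prod fun k n => innerSum (m k) n) ∧
      (∀ k, Odd (a k) → Ncount lam m θ a = 0) := by
  classical
  have hcompl : η {θ | ¬ Good lam θ} = 0 := good_compl_null lam hpos η hη
  have hμ : μ {θ | ¬ Good lam θ} = 0 := hac hcompl
  have hGood : ∀ᵐ θ ∂μ, Good lam θ := ae_iff.2 hμ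
  filter_upwards [hGood] with θ hθ
  intro a
  have hform := Ncount_eq_prod lam m θ hθ a
  constructor
  · rw [hform]
    rw [Finsupp.prod, Finsupp.prod]
    push_cast
    rw [← Finset.prod_mul_distrib]
  · intro k hk
    have hk0 : a k ≠ 0 := by
      rcases hk with ⟨c, hc⟩; omega
    have hkS : k ∈ a.support := Finsupp.mem_support_iff.2 hk0
    have h0 : (Ncount lam m θ a : ℝ) = 0 := by
      rw [hform]
      refine Finset.prod_eq_zero hkS ?_
      rw [innerSum_odd (m k) (a k) hk, mul_zero]
    exact_mod_cast h0

end Stmt3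
end
end

section
/- For every integer p ≥ 1, the following identities hold in the polynomial ring ℝ[X₁,…,X_p]: Q_p(P₁(X₁), P₂(X₁,X₂), …, P_p(X₁,…,X_p)) = X_p and P_p(Q₁(X₁), Q₂(X₁,X₂), …, Q_p(X₁,…,X_p)) = X_p. -/
noncomputable section

namespace Stmt8

/-- The set `𝒫(p)` of partitions of `p`, encoded as finitely supported functions
`α : ℕ →₀ ℕ` with `α 0 = 0` and `Σ_k k·α_k = p` (`α_k` is the number of parts equal to `k`). -/
def partitions (p : ℕ) : Set (ℕ →₀ ℕ) :=
  {α | α 0 = 0 ∧ (α.sum fun k e => k * e) = p}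

/-- `‖α‖ = Σ_k α_k`, the number of parts. -/
def pnorm (α : ℕ →₀ ℕ) : ℕ := α.sum fun _ e => e

/-- `α! = ∏_k α_k!`. -/
def pfact (α : ℕ →₀ ℕ) : ℕ := α.prod fun _ e => e.factorial

/-- The polynomial (function) `P_p(X₁,…,X_p) = Σ_{α∈𝒫(p)} (−1)^{p−‖α‖} (p!/α!) ∏_q X_q^{α_q}`. -/
def Pfun (p : ℕ) (x : ℕ → ℝ) : ℝ :=
  ∑' α : partitions p,
    (-1 : ℝ) ^ (p - pnorm α.1) * ((p.factorial : ℝ) / (pfact α.1 : ℝ)) *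
      α.1.prod fun q e => x q ^ e

/-- The polynomial (function)
`Q_p(X₁,…,X_p) = Σ_{α∈𝒫(p)} ((−1)^{p−‖α‖}/‖α‖) (‖α‖!/α!) ∏_q (X_q/q!)^{α_q}`. -/
def Qfun (p : ℕ) (x : ℕ → ℝ) : ℝ :=
  ∑' α : partitions p,
    (-1 : ℝ) ^ (p - pnorm α.1) / (pnorm α.1 : ℝ) *
      (((pnorm α.1).factorial : ℝ) / (pfact α.1 : ℝ)) *
      α.1.prod fun q e => (x q / (q.factorial : ℝ)) ^ e

/-- `A_p = Q_p(1, 1/2!, …, 1/p!)`. -/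
def Acoef (p : ℕ) : ℝ := Qfun p fun q => ((q.factorial : ℝ))⁻¹

open PowerSeries Finset
open scoped Classical

lemma coeff_pow_of_lt {f : ℝ⟦X⟧} (hf : constantCoeff f = 0) {n m : ℕ} (h : n < m) :
    coeff n (f ^ m) = 0 := by
  have : (X : ℝ⟦X⟧) ^ m ∣ f ^ m := pow_dvd_pow_of_dvd (X_dvd_iff.mpr hf) m
  exact X_pow_dvd_iff.mp this n h

lemma coeff_mul_pow_vanish {f g : ℝ⟦X⟧} (hf : constantCoeff f = 0) {i k : ℕ} (h : i < k) :
    coeff i (f ^ k * g) = 0 := by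
  rw [coeff_mul]
  refine Finset.sum_eq_zero fun p hp => ?_
  rw [Finset.HasAntidiagonal.mem_antidiagonal] at hp
  rw [coeff_pow_of_lt hf (lt_of_le_of_lt (by omega : p.1 ≤ i) h), zero_mul]

/-- `exp(f) = ∑ f^m/m!`, defined coefficientwise (valid when `f` has zero constant term). -/
def expc (f : ℝ⟦X⟧) : ℝ⟦X⟧ :=
  PowerSeries.mk fun n => ∑ m ∈ range (n + 1), coeff n (f ^ m) / m.factorial

/-- `-log(1-f) = ∑ f^m/m`, defined coefficientwise (valid when `f` has zero constant term). -/
def nlog (f : ℝ⟦X⟧) : ℝ⟦X⟧ :=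
  PowerSeries.mk fun n => ∑ m ∈ range (n + 1), coeff n (f ^ m) / m

lemma coeff_expc {f : ℝ⟦X⟧} (hf : constantCoeff f = 0) {n N : ℕ} (h : n ≤ N) :
    coeff n (expc f) = ∑ m ∈ range (N + 1), coeff n (f ^ m) / m.factorial := by
  rw [expc, coeff_mk]
  refine Finset.sum_subset (Finset.range_subset_range.mpr (by omega)) fun m hm hm' => ?_
  rw [coeff_pow_of_lt hf (by simp at hm hm'; omega), zero_div]

lemma coeff_nlog {f : ℝ⟦X⟧} (hf : constantCoeff f = 0) {n N : ℕ} (h : n ≤ N) :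
    coeff n (nlog f) = ∑ m ∈ range (N + 1), coeff n (f ^ m) / m := by
  rw [nlog, coeff_mk]
  refine Finset.sum_subset (Finset.range_subset_range.mpr (by omega)) fun m hm hm' => ?_
  rw [coeff_pow_of_lt hf (by simp at hm hm'; omega), zero_div]

lemma constantCoeff_expc (f : ℝ⟦X⟧) : constantCoeff (expc f) = 1 := by
  rw [← coeff_zero_eq_constantCoeff_apply, expc, coeff_mk]
  simp

lemma constantCoeff_nlog (f : ℝ⟦X⟧) : constantCoeff (nlog f) = 0 := by
  rw [← coeff_zero_eq_constantCoeff_apply, nlog, coeff_mk]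
  simp

lemma coeff_mul_right_congr {A B g : ℝ⟦X⟧} {n : ℕ}
    (h : ∀ j ≤ n, coeff j A = coeff j B) :
    coeff n (g * A) = coeff n (g * B) := by
  rw [coeff_mul, coeff_mul]
  refine Finset.sum_congr rfl fun p hp => ?_
  rw [Finset.HasAntidiagonal.mem_antidiagonal] at hp
  rw [h p.2 (by omega)]

lemma coeff_deriv_pow (f : ℝ⟦X⟧) (m n : ℕ) :
    coeff n (d⁄dX ℝ (f ^ m)) = m * coeff n (f ^ (m - 1) * d⁄dX ℝ f) := by
  rw [Derivation.leibniz_pow, map_nsmul, smul_eq_mul (a := f ^ (m - 1)), nsmul_eq_mul]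

lemma deriv_expc {f : ℝ⟦X⟧} (hf : constantCoeff f = 0) :
    d⁄dX ℝ (expc f) = d⁄dX ℝ f * expc f := by
  ext n
  rw [coeff_derivative, coeff_expc hf (le_refl (n + 1)), Finset.sum_mul]
  have lhs_eq : ∀ m ∈ range (n + 2),
      coeff (n + 1) (f ^ m) / m.factorial * (↑n + 1)
        = (m : ℝ) * coeff n (f ^ (m - 1) * d⁄dX ℝ f) / m.factorial := by
    intro m _
    rw [div_mul_eq_mul_div, ← coeff_derivative, coeff_deriv_pow]
  rw [Finset.sum_congr rfl lhs_eq]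
  rw [Finset.sum_range_succ']
  simp only [Nat.cast_zero, zero_mul, zero_div, add_zero, Nat.add_sub_cancel]
  have step : ∀ i ∈ range (n + 1),
      ((i + 1 : ℕ) : ℝ) * coeff n (f ^ i * d⁄dX ℝ f) / (((i + 1).factorial : ℕ) : ℝ)
        = ((i.factorial : ℝ))⁻¹ * coeff n (f ^ i * d⁄dX ℝ f) := by
    intro i _
    rw [Nat.factorial_succ]
    have h1 : ((i : ℝ) + 1) ≠ 0 := by positivity
    have h2 : ((i.factorial : ℝ)) ≠ 0 := Nat.cast_ne_zero.mpr i.factorial_ne_zero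
    push_cast
    field_simp
  rw [Finset.sum_congr rfl step]
  -- now RHS
  have hT : coeff n (d⁄dX ℝ f * expc f)
      = coeff n (d⁄dX ℝ f * ∑ k ∈ range (n + 1), ((k.factorial : ℝ))⁻¹ • f ^ k) := by
    refine coeff_mul_right_congr fun j hj => ?_
    rw [coeff_expc hf hj]
    rw [map_sum]
    refine Finset.sum_congr rfl fun k _ => ?_
    rw [map_smul, smul_eq_mul, div_eq_mul_inv, mul_comm]
  rw [hT, Finset.mul_sum, map_sum]
  refine Finset.sum_congr rfl fun k _ => ?_
  rw [mul_smul_comm, map_smul, smul_eq_mul, mul_comm (d⁄dX ℝ f) (f ^ k)]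

lemma coeff_deriv_nlog {f : ℝ⟦X⟧} (n : ℕ) :
    coeff n (d⁄dX ℝ (nlog f)) = coeff n ((∑ k ∈ range (n + 1), f ^ k) * d⁄dX ℝ f) := by
  rw [coeff_derivative, nlog, coeff_mk, Finset.sum_mul]
  have lhs_eq : ∀ m ∈ range (n + 2),
      coeff (n + 1) (f ^ m) / m * (↑n + 1)
        = (m : ℝ) * coeff n (f ^ (m - 1) * d⁄dX ℝ f) / m := by
    intro m _
    rw [div_mul_eq_mul_div, ← coeff_derivative, coeff_deriv_pow]
  rw [Finset.sum_congr rfl lhs_eq, Finset.sum_range_succ']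
  simp only [Nat.cast_zero, zero_mul, zero_div, add_zero, Nat.add_sub_cancel]
  have step : ∀ i ∈ range (n + 1),
      ((i + 1 : ℕ) : ℝ) * coeff n (f ^ i * d⁄dX ℝ f) / ((i + 1 : ℕ) : ℝ)
        = coeff n (f ^ i * d⁄dX ℝ f) := by
    intro i _
    exact mul_div_cancel_left₀ _ (by positivity)
  rw [Finset.sum_congr rfl step, Finset.sum_mul, map_sum]

lemma deriv_nlog {f : ℝ⟦X⟧} (hf : constantCoeff f = 0) :
    d⁄dX ℝ (nlog f) * (1 - f) = d⁄dX ℝ f := by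
  ext n
  rw [coeff_mul]
  have key : ∀ p ∈ antidiagonal n,
      coeff p.1 (d⁄dX ℝ (nlog f)) * coeff p.2 (1 - f)
        = coeff p.1 ((∑ k ∈ range (n + 1), f ^ k) * d⁄dX ℝ f) * coeff p.2 (1 - f) := by
    intro p hp
    rw [Finset.HasAntidiagonal.mem_antidiagonal] at hp
    rw [coeff_deriv_nlog p.1]
    congr 1
    rw [Finset.sum_mul, Finset.sum_mul, map_sum, map_sum]
    refine Finset.sum_subset (Finset.range_subset_range.mpr (by omega)) fun k hk hk' => ?_
    exact coeff_mul_pow_vanish hf (by simp at hk hk'; omega)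
  rw [Finset.sum_congr rfl key, ← coeff_mul, mul_right_comm]
  have geom : (∑ k ∈ range (n + 1), f ^ k) * (1 - f) = 1 - f ^ (n + 1) := by
    have := geom_sum_mul f (n + 1)
    linear_combination -this
  rw [geom, sub_mul, one_mul, map_sub]
  rw [coeff_mul_pow_vanish hf (by omega : n < n + 1), sub_zero]

lemma deriv_eq_zero_imp {f : ℝ⟦X⟧} (h : d⁄dX ℝ f = 0) (h0 : constantCoeff f = 0) :
    f = 0 := by
  ext n
  cases n with
  | zero => simpa using h0
  | succ n =>
    have := congrArg (coeff n) h
    rw [coeff_derivative, map_zero] at this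
    have hn : ((n : ℝ) + 1) ≠ 0 := by positivity
    simpa [hn] using mul_eq_zero.mp this

/-- Uniqueness for the linear ODE `G' u = v G` with `G(0) = 0` and `u(0) ≠ 0`. -/
lemma ode_unique {G u v : ℝ⟦X⟧} (hu : constantCoeff u ≠ 0)
    (h : d⁄dX ℝ G * u = v * G) (h0 : constantCoeff G = 0) : G = 0 := by
  ext n
  induction n using Nat.strong_induction_on with
  | _ n ih =>
    match n with
    | 0 => simpa using h0
    | n + 1 =>
      have hcoeff := congrArg (coeff n) h
      rw [coeff_mul, coeff_mul] at hcoeff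
      have hrhs : ∑ p ∈ antidiagonal n, coeff p.1 v * coeff p.2 G = 0 := by
        refine Finset.sum_eq_zero fun p hp => ?_
        rw [Finset.HasAntidiagonal.mem_antidiagonal] at hp
        rcases Nat.eq_zero_or_pos p.2 with h2 | h2
        · rw [h2]; simp [h0]
        · rw [ih p.2 (by omega)]; simp
      have hlhs : ∑ p ∈ antidiagonal n, coeff p.1 (d⁄dX ℝ G) * coeff p.2 u
          = coeff (n + 1) G * (↑n + 1) * constantCoeff u := by
        rw [Finset.sum_eq_single (n, 0)]
        · rw [coeff_derivative]
          simp
        · intro p hp hne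
          rw [Finset.HasAntidiagonal.mem_antidiagonal] at hp
          have h1 : p.1 < n := by
            rcases Nat.lt_or_ge p.1 n with h' | h'
            · exact h'
            · exfalso; apply hne
              have : p.1 = n := by omega
              have : p.2 = 0 := by omega
              exact Prod.ext (by omega) this
          rw [coeff_derivative, ih (p.1 + 1) (by omega)]; simp
        · intro hmem
          exact absurd (by simp : (n, 0) ∈ antidiagonal n) hmem
      rw [hlhs, hrhs] at hcoeff
      have hn : ((n : ℝ) + 1) ≠ 0 := by positivity
      have := mul_eq_zero.mp hcoeff
      rcases this with h' | h'
      · rcases mul_eq_zero.mp h' with h'' | h''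
        · simpa using h''
        · exact absurd h'' hn
      · exact absurd h' hu

lemma expc_ne_zero (f : ℝ⟦X⟧) : expc f ≠ 0 := by
  intro h
  have := constantCoeff_expc f
  rw [h, map_zero] at this
  exact one_ne_zero this.symm

/-- `log (exp f) = f`, in the form `-log(1 - (1 - exp f)) = -f`. -/
lemma nlog_one_sub_expc {f : ℝ⟦X⟧} (hf : constantCoeff f = 0) :
    nlog (1 - expc f) = -f := by
  have hg : constantCoeff (1 - expc f) = 0 := by
    rw [map_sub, map_one, constantCoeff_expc, sub_self]
  have hR0 : constantCoeff (nlog (1 - expc f) + f) = 0 := by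
    rw [map_add, constantCoeff_nlog, hf, add_zero]
  have hD : d⁄dX ℝ (nlog (1 - expc f) + f) * expc f = 0 := by
    have h1 := deriv_nlog hg
    have h2 : (1 : ℝ⟦X⟧) - (1 - expc f) = expc f := by ring
    rw [h2] at h1
    rw [map_add, add_mul, h1, map_sub, Derivation.map_one_eq_zero, zero_sub, deriv_expc hf]
    ring
  have hD0 : d⁄dX ℝ (nlog (1 - expc f) + f) = 0 := by
    rcases mul_eq_zero.mp hD with h | h
    · exact h
    · exact absurd h (expc_ne_zero f)
  have := deriv_eq_zero_imp hD0 hR0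
  linear_combination this

/-- `exp (log (1-f)) = 1 - f`, in the form `exp(-(-log(1-f))) = 1 - f`. -/
lemma expc_neg_nlog {f : ℝ⟦X⟧} (hf : constantCoeff f = 0) :
    expc (-(nlog f)) = 1 - f := by
  set h := -(nlog f) with hh
  have hh0 : constantCoeff h = 0 := by
    rw [hh, map_neg, constantCoeff_nlog, neg_zero]
  set G := expc h - (1 - f) with hG
  have hG0 : constantCoeff G = 0 := by
    rw [hG, map_sub, constantCoeff_expc, map_sub, map_one, hf, sub_zero, sub_self]
  have hDG : d⁄dX ℝ G * (1 - f) = (- d⁄dX ℝ f) * G := by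
    have e1 : d⁄dX ℝ G = - (d⁄dX ℝ (nlog f)) * expc h + d⁄dX ℝ f := by
      rw [hG, map_sub, deriv_expc hh0, hh, map_neg, map_sub, Derivation.map_one_eq_zero, zero_sub]
      ring
    have e2 := deriv_nlog hf
    calc d⁄dX ℝ G * (1 - f)
        = - (d⁄dX ℝ (nlog f) * (1 - f)) * expc h + d⁄dX ℝ f * (1 - f) := by rw [e1]; ring
      _ = - d⁄dX ℝ f * expc h + d⁄dX ℝ f * (1 - f) := by rw [e2]
      _ = (- d⁄dX ℝ f) * G := by rw [hG]; ring
  have h1f : constantCoeff (1 - f) ≠ 0 := by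
    rw [map_sub, map_one, hf, sub_zero]
    exact one_ne_zero
  have := ode_unique h1f hDG hG0
  rw [hG] at this
  linear_combination this


-- helper sums over supersets of the support
lemma sum_weight_eq {α : ℕ →₀ ℕ} {s : Finset ℕ} (h : α.support ⊆ s) :
    ∑ q ∈ s, q * α q = α.sum fun k e => k * e := by
  rw [Finsupp.sum]
  exact (Finset.sum_subset h fun q _ hq =>
    by rw [Finsupp.notMem_support_iff.mp hq, mul_zero]).symm

lemma sum_count_eq {α : ℕ →₀ ℕ} {s : Finset ℕ} (h : α.support ⊆ s) :
    ∑ q ∈ s, α q = pnorm α := by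
  rw [pnorm, Finsupp.sum]
  exact (Finset.sum_subset h fun q _ hq => Finsupp.notMem_support_iff.mp hq).symm

lemma prod_fact_eq {α : ℕ →₀ ℕ} {s : Finset ℕ} (h : α.support ⊆ s) :
    ∏ q ∈ s, (α q).factorial = pfact α := by
  rw [pfact, Finsupp.prod]
  exact (Finset.prod_subset h fun q _ hq =>
    by rw [Finsupp.notMem_support_iff.mp hq]; rfl).symm

lemma prod_pow_eq {α : ℕ →₀ ℕ} {s : Finset ℕ} (h : α.support ⊆ s) (b : ℕ → ℝ) :
    ∏ q ∈ s, b q ^ α q = α.prod fun q e => b q ^ e := by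
  rw [Finsupp.prod]
  exact (Finset.prod_subset h fun q _ hq =>
    by rw [Finsupp.notMem_support_iff.mp hq, pow_zero]).symm

lemma pnorm_le_weight (α : ℕ →₀ ℕ) (h0 : α 0 = 0) :
    pnorm α ≤ α.sum fun k e => k * e := by
  rw [pnorm, Finsupp.sum, Finsupp.sum]
  refine Finset.sum_le_sum fun k hk => ?_
  have hk1 : 1 ≤ k := by
    rcases Nat.eq_zero_or_pos k with rfl | h
    · exact absurd h0 (Finsupp.mem_support_iff.mp hk)
    · exact h
  exact Nat.le_mul_of_pos_left _ hk1

lemma support_subset_of_weight {α : ℕ →₀ ℕ} {n : ℕ} (h0 : α 0 = 0)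
    (hw : (α.sum fun k e => k * e) = n) : α.support ⊆ Icc 1 n := by
  intro k hk
  have hαk : α k ≠ 0 := Finsupp.mem_support_iff.mp hk
  have hk1 : 1 ≤ k := by
    rcases Nat.eq_zero_or_pos k with rfl | h
    · exact absurd h0 hαk
    · exact h
  have hle : k * α k ≤ n := by
    rw [← hw, Finsupp.sum]
    exact Finset.single_le_sum (f := fun i => i * α i) (fun i _ => Nat.zero_le _) hk
  have : k ≤ k * α k := Nat.le_mul_of_pos_right _ (Nat.pos_of_ne_zero hαk)
  exact Finset.mem_Icc.mpr ⟨hk1, by omega⟩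

/-- Explicit finset of partitions of `n`. -/
def parts (n : ℕ) : Finset (ℕ →₀ ℕ) :=
  (range (n + 1)).biUnion fun m =>
    ((Icc 1 n).finsuppAntidiag m).filter fun α => (α.sum fun k e => k * e) = n

lemma mem_parts {n : ℕ} {α : ℕ →₀ ℕ} :
    α ∈ parts n ↔ α.support ⊆ Icc 1 n ∧ (α.sum fun k e => k * e) = n ∧ pnorm α ≤ n := by
  simp only [parts, mem_biUnion, mem_filter, Finset.mem_finsuppAntidiag, mem_range]
  constructor
  · rintro ⟨m, hm, ⟨hsum, hsupp⟩, hw⟩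
    refine ⟨hsupp, hw, ?_⟩
    rw [← sum_count_eq hsupp, hsum]; omega
  · rintro ⟨hsupp, hw, hpn⟩
    exact ⟨pnorm α, by omega, ⟨sum_count_eq hsupp, hsupp⟩, hw⟩

lemma coe_parts {n : ℕ} : (parts n : Set (ℕ →₀ ℕ)) = partitions n := by
  ext α
  simp only [Finset.coe_filter, Set.mem_setOf_eq, Finset.mem_coe, mem_parts, partitions,
    Set.mem_setOf_eq]
  constructor
  · rintro ⟨hsupp, hw, _⟩
    refine ⟨?_, hw⟩
    by_contra h0
    exact absurd (Finset.mem_Icc.mp (hsupp (Finsupp.mem_support_iff.mpr h0))).1 (by omega)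
  · rintro ⟨h0, hw⟩
    exact ⟨support_subset_of_weight h0 hw, hw, by rw [← hw]; exact pnorm_le_weight α h0⟩

lemma tsum_parts {n : ℕ} (g : (ℕ →₀ ℕ) → ℝ) :
    ∑' α : partitions n, g α.1 = ∑ α ∈ parts n, g α := by
  rw [← coe_parts]
  exact Finset.tsum_subtype (parts n) g

/-- The polynomial `∑_{q=1}^N b_q X^q` as a power series. -/
def wser (N : ℕ) (b : ℕ → ℝ) : ℝ⟦X⟧ := ∑ q ∈ Icc 1 N, C (b q) * X ^ q

lemma coeff_wser (N : ℕ) (b : ℕ → ℝ) (r : ℕ) :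
    coeff r (wser N b) = if r ∈ Icc 1 N then b r else 0 := by
  rw [wser, map_sum]
  rw [Finset.sum_congr rfl fun q _ => by
    rw [coeff_C_mul, coeff_X_pow, mul_ite, mul_one, mul_zero]]
  exact Finset.sum_ite_eq (Icc 1 N) r b

lemma constantCoeff_wser (N : ℕ) (b : ℕ → ℝ) : constantCoeff (wser N b) = 0 := by
  rw [← coeff_zero_eq_constantCoeff_apply, coeff_wser]
  simp

lemma coeff_wser_pow {b : ℕ → ℝ} {n N m : ℕ} (hN : n ≤ N) :
    coeff n (wser N b ^ m)
      = ∑ α ∈ (parts n).filter fun α => pnorm α = m,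
          ((m.factorial : ℝ) / (pfact α : ℝ)) * α.prod fun q e => b q ^ e := by
  rw [wser, Finset.sum_pow_eq_sum_piAntidiag, map_sum]
  have term_eq : ∀ k ∈ (Icc 1 N).piAntidiag m,
      coeff n ((Nat.multinomial (Icc 1 N) k : ℝ⟦X⟧) * ∏ q ∈ Icc 1 N, (C (b q) * X ^ q) ^ k q)
        = if ∑ q ∈ Icc 1 N, q * k q = n then
            (Nat.multinomial (Icc 1 N) k : ℝ) * ∏ q ∈ Icc 1 N, b q ^ k q else 0 := by
    intro k _
    have prod_eq : ∏ q ∈ Icc 1 N, (C (b q) * X ^ q) ^ k q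
        = C (∏ q ∈ Icc 1 N, b q ^ k q) * X ^ (∑ q ∈ Icc 1 N, q * k q) := by
      calc ∏ q ∈ Icc 1 N, (C (b q) * X ^ q) ^ k q
          = ∏ q ∈ Icc 1 N, (C (b q ^ k q) * X ^ (q * k q)) := by
            refine Finset.prod_congr rfl fun q _ => ?_
            rw [mul_pow, ← map_pow, ← pow_mul]
        _ = (∏ q ∈ Icc 1 N, C (b q ^ k q)) * ∏ q ∈ Icc 1 N, X ^ (q * k q) :=
            Finset.prod_mul_distrib
        _ = C (∏ q ∈ Icc 1 N, b q ^ k q) * X ^ (∑ q ∈ Icc 1 N, q * k q) := by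
            rw [map_prod, Finset.prod_pow_eq_pow_sum]
    rw [prod_eq, ← map_natCast (C (R := ℝ)) (Nat.multinomial (Icc 1 N) k), ← mul_assoc, ← map_mul,
      coeff_C_mul, coeff_X_pow, mul_ite, mul_one, mul_zero]
    congr 1
    exact propext eq_comm
  rw [Finset.sum_congr rfl term_eq]
  have filter_eq : ∑ k ∈ ((Icc 1 N).piAntidiag m).filter (fun k => ∑ q ∈ Icc 1 N, q * k q = n),
      ((Nat.multinomial (Icc 1 N) k : ℝ) * ∏ q ∈ Icc 1 N, b q ^ k q)
      = ∑ k ∈ (Icc 1 N).piAntidiag m,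
          if ∑ q ∈ Icc 1 N, q * k q = n then
            (Nat.multinomial (Icc 1 N) k : ℝ) * ∏ q ∈ Icc 1 N, b q ^ k q else 0 :=
    Finset.sum_filter _ _
  refine Eq.trans filter_eq.symm ?_
  refine Eq.symm ?_
  refine Finset.sum_bij (fun α _ => (α : ℕ → ℕ)) ?_ ?_ ?_ ?_
  · -- maps to
    rintro α hα
    rw [mem_filter] at hα
    obtain ⟨hparts, hpn⟩ := hα
    rw [mem_parts] at hparts
    obtain ⟨hsupp, hw, _⟩ := hparts
    have hsupp' : α.support ⊆ Icc 1 N :=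
      hsupp.trans (Finset.Icc_subset_Icc_right hN)
    rw [mem_filter, Finset.mem_piAntidiag]
    refine ⟨⟨?_, ?_⟩, ?_⟩
    · rw [sum_count_eq hsupp', hpn]
    · intro q hq
      exact hsupp' (Finsupp.mem_support_iff.mpr hq)
    · rw [sum_weight_eq hsupp', hw]
  · -- injective
    intro α₁ _ α₂ _ h
    exact DFunLike.coe_injective h
  · -- surjective
    intro k hk
    rw [mem_filter, Finset.mem_piAntidiag] at hk
    obtain ⟨⟨hsum, hsupp⟩, hw⟩ := hk
    refine ⟨Finsupp.onFinset (Icc 1 N) k hsupp, ?_, rfl⟩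
    set α := Finsupp.onFinset (Icc 1 N) k hsupp with hα
    have hcoe : ∀ q, α q = k q := fun q => Finsupp.onFinset_apply
    have hsupN : α.support ⊆ Icc 1 N := Finsupp.support_onFinset_subset
    have h0 : α 0 = 0 := by
      by_contra h
      have := hsupN (Finsupp.mem_support_iff.mpr h)
      rw [Finset.mem_Icc] at this
      omega
    have hwα : (α.sum fun q e => q * e) = n := by
      rw [← sum_weight_eq hsupN]
      rw [← hw]
      exact Finset.sum_congr rfl fun q _ => by rw [hcoe]
    have hpnα : pnorm α = m := by
      rw [← sum_count_eq hsupN, ← hsum]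
      exact Finset.sum_congr rfl fun q _ => by rw [hcoe]
    rw [mem_filter, mem_parts]
    refine ⟨⟨support_subset_of_weight h0 hwα, hwα, ?_⟩, hpnα⟩
    rw [← hwα]
    exact pnorm_le_weight α h0
  · -- values
    intro α hα
    rw [mem_filter] at hα
    obtain ⟨hparts, hpn⟩ := hα
    rw [mem_parts] at hparts
    obtain ⟨hsupp, hw, _⟩ := hparts
    have hsupp' : α.support ⊆ Icc 1 N :=
      hsupp.trans (Finset.Icc_subset_Icc_right hN)
    have hmult : (Nat.multinomial (Icc 1 N) α : ℝ) = (m.factorial : ℝ) / (pfact α : ℝ) := by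
      have spec := Nat.multinomial_spec (Icc 1 N) α
      rw [prod_fact_eq hsupp', sum_count_eq hsupp', hpn] at spec
      have hpf : (pfact α : ℝ) ≠ 0 := by
        have : 0 < pfact α := by
          rw [pfact]
          exact Finset.prod_pos fun q _ => Nat.factorial_pos _
        positivity
      rw [eq_div_iff hpf, mul_comm]
      exact_mod_cast spec
    rw [hmult, prod_pow_eq hsupp' b]

lemma coeff_expc_wser {b : ℕ → ℝ} {n N : ℕ} (hN : n ≤ N) :
    coeff n (expc (wser N b))
      = ∑ α ∈ parts n, (1 / (pfact α : ℝ)) * α.prod fun q e => b q ^ e := by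
  rw [coeff_expc (constantCoeff_wser N b) (le_refl n)]
  have step : ∀ m ∈ range (n + 1),
      coeff n (wser N b ^ m) / m.factorial
        = ∑ α ∈ (parts n).filter fun α => pnorm α = m,
            (1 / (pfact α : ℝ)) * α.prod fun q e => b q ^ e := by
    intro m _
    rw [coeff_wser_pow hN, Finset.sum_div]
    refine Finset.sum_congr rfl fun α hα => ?_
    have hm : (m.factorial : ℝ) ≠ 0 := Nat.cast_ne_zero.mpr m.factorial_ne_zero
    have hpf : (pfact α : ℝ) ≠ 0 := by
      have : 0 < pfact α := by
        rw [pfact]; exact Finset.prod_pos fun q _ => Nat.factorial_pos _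
      positivity
    field_simp
  rw [Finset.sum_congr rfl step]
  exact Finset.sum_fiberwise_of_maps_to
    (fun α hα => mem_range.mpr (by have := (mem_parts.mp hα).2.2; omega)) _

lemma coeff_nlog_wser {b : ℕ → ℝ} {n N : ℕ} (hN : n ≤ N) :
    coeff n (nlog (wser N b))
      = ∑ α ∈ parts n,
          (1 / (pnorm α : ℝ)) * (((pnorm α).factorial : ℝ) / (pfact α : ℝ)) *
            α.prod fun q e => b q ^ e := by
  rw [coeff_nlog (constantCoeff_wser N b) (le_refl n)]
  have step : ∀ m ∈ range (n + 1),
      coeff n (wser N b ^ m) / m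
        = ∑ α ∈ (parts n).filter fun α => pnorm α = m,
            (1 / (pnorm α : ℝ)) * (((pnorm α).factorial : ℝ) / (pfact α : ℝ)) *
              α.prod fun q e => b q ^ e := by
    intro m _
    rw [coeff_wser_pow hN, Finset.sum_div]
    refine Finset.sum_congr rfl fun α hα => ?_
    rw [mem_filter] at hα
    rw [hα.2, div_eq_mul_inv, one_div]
    ring
  rw [Finset.sum_congr rfl step]
  exact Finset.sum_fiberwise_of_maps_to
    (fun α hα => mem_range.mpr (by have := (mem_parts.mp hα).2.2; omega)) _

lemma neg_one_pow_sub {n m : ℕ} (h : m ≤ n) : ((-1 : ℝ)) ^ (n - m) = (-1) ^ (n + m) := by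
  rw [show n + m = (n - m) + 2 * m by omega, pow_add, pow_mul]
  norm_num

lemma prod_sign {α : ℕ →₀ ℕ} {n : ℕ} (hα : α ∈ parts n) (b : ℕ → ℝ) :
    (α.prod fun q e => ((-1 : ℝ) ^ (q + 1) * b q) ^ e)
      = (-1) ^ (n + pnorm α) * α.prod fun q e => b q ^ e := by
  have hw := (mem_parts.mp hα).2.1
  rw [Finsupp.prod, Finsupp.prod]
  calc ∏ q ∈ α.support, ((-1 : ℝ) ^ (q + 1) * b q) ^ α q
      = ∏ q ∈ α.support, ((-1 : ℝ) ^ ((q + 1) * α q) * b q ^ α q) := by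
        refine Finset.prod_congr rfl fun q _ => ?_
        rw [mul_pow, ← pow_mul]
    _ = (∏ q ∈ α.support, (-1 : ℝ) ^ ((q + 1) * α q)) * ∏ q ∈ α.support, b q ^ α q :=
        Finset.prod_mul_distrib
    _ = (-1) ^ (∑ q ∈ α.support, (q + 1) * α q) * ∏ q ∈ α.support, b q ^ α q := by
        rw [Finset.prod_pow_eq_pow_sum]
    _ = (-1) ^ (n + pnorm α) * ∏ q ∈ α.support, b q ^ α q := by
        congr 2
        have expand : ∑ q ∈ α.support, (q + 1) * α q
            = (∑ q ∈ α.support, q * α q) + ∑ q ∈ α.support, α q := by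
          rw [← Finset.sum_add_distrib]
          exact Finset.sum_congr rfl fun q _ => by ring
        rw [expand]
        congr 1

lemma Pfun_eq {x : ℕ → ℝ} {n N : ℕ} (hN : n ≤ N) :
    Pfun n x
      = n.factorial * coeff n (expc (wser N fun q => (-1) ^ (q + 1) * x q)) := by
  have h := tsum_parts (n := n) (fun β => (-1 : ℝ) ^ (n - pnorm β) *
    ((n.factorial : ℝ) / (pfact β : ℝ)) * β.prod fun q e => x q ^ e)
  rw [Pfun, h, coeff_expc_wser hN, Finset.mul_sum]
  refine Finset.sum_congr rfl fun α hα => ?_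
  rw [prod_sign hα x, neg_one_pow_sub (mem_parts.mp hα).2.2]
  ring

lemma Qfun_eq {x : ℕ → ℝ} {n N : ℕ} (hN : n ≤ N) :
    Qfun n x
      = coeff n (nlog (wser N fun q => (-1) ^ (q + 1) * (x q / q.factorial))) := by
  have h := tsum_parts (n := n) (fun β => (-1 : ℝ) ^ (n - pnorm β) / (pnorm β : ℝ) *
    (((pnorm β).factorial : ℝ) / (pfact β : ℝ)) * β.prod fun q e => (x q / (q.factorial : ℝ)) ^ e)
  rw [Qfun, h, coeff_nlog_wser hN]
  refine Finset.sum_congr rfl fun α hα => ?_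
  rw [prod_sign hα (fun q => x q / q.factorial), neg_one_pow_sub (mem_parts.mp hα).2.2]
  ring

lemma rescale_expc (a : ℝ) (f : ℝ⟦X⟧) : rescale a (expc f) = expc (rescale a f) := by
  ext n
  rw [coeff_rescale, expc, expc, coeff_mk, coeff_mk, Finset.mul_sum]
  refine Finset.sum_congr rfl fun m _ => ?_
  rw [← map_pow, coeff_rescale, mul_div_assoc]

lemma rescale_nlog (a : ℝ) (f : ℝ⟦X⟧) : rescale a (nlog f) = nlog (rescale a f) := by
  ext n
  rw [coeff_rescale, nlog, nlog, coeff_mk, coeff_mk, Finset.mul_sum]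
  refine Finset.sum_congr rfl fun m _ => ?_
  rw [← map_pow, coeff_rescale, mul_div_assoc]

lemma constantCoeff_rescale (a : ℝ) {f : ℝ⟦X⟧} (hf : constantCoeff f = 0) :
    constantCoeff (rescale a f) = 0 := by
  rw [← coeff_zero_eq_constantCoeff_apply, coeff_rescale, pow_zero, one_mul,
    coeff_zero_eq_constantCoeff_apply, hf]

lemma coeff_pow_congr {f g : ℝ⟦X⟧} {n : ℕ} (h : ∀ i ≤ n, coeff i f = coeff i g)
    (m : ℕ) : ∀ i ≤ n, coeff i (f ^ m) = coeff i (g ^ m) := by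
  induction m with
  | zero => intro i _; rfl
  | succ m ih =>
    intro i hi
    rw [pow_succ, pow_succ, coeff_mul, coeff_mul]
    refine Finset.sum_congr rfl fun p hp => ?_
    rw [Finset.HasAntidiagonal.mem_antidiagonal] at hp
    rw [ih p.1 (by omega), h p.2 (by omega)]

lemma coeff_expc_congr {f g : ℝ⟦X⟧} {n : ℕ}
    (h : ∀ i ≤ n, coeff i f = coeff i g) :
    coeff n (expc f) = coeff n (expc g) := by
  rw [expc, expc, coeff_mk, coeff_mk]
  exact Finset.sum_congr rfl fun m _ => by rw [coeff_pow_congr h m n le_rfl]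

lemma coeff_nlog_congr {f g : ℝ⟦X⟧} {n : ℕ}
    (h : ∀ i ≤ n, coeff i f = coeff i g) :
    coeff n (nlog f) = coeff n (nlog g) := by
  rw [nlog, nlog, coeff_mk, coeff_mk]
  exact Finset.sum_congr rfl fun m _ => by rw [coeff_pow_congr h m n le_rfl]

lemma neg_one_sq_pow (p : ℕ) : ((-1 : ℝ)) ^ p * (-1) ^ p = 1 := by
  rw [← pow_add]
  exact Even.neg_one_pow ⟨p, rfl⟩

/-- `Q_p(P₁(X₁),…,P_p(X₁,…,X_p)) = X_p` and `P_p(Q₁(X₁),…,Q_p(X₁,…,X_p)) = X_p`,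
stated as identities of the associated polynomial functions on `ℝ` (which is equivalent to
the identities in the polynomial ring `ℝ[X₁,…,X_p]`, since `ℝ` is infinite). -/
theorem statement_8 (p : ℕ) (hp : 1 ≤ p) (x : ℕ → ℝ) :
    Qfun p (fun q => Pfun q x) = x p ∧ Pfun p (fun q => Qfun q x) = x p := by
  constructor
  · -- Q ∘ P = id
    set w : ℝ⟦X⟧ := wser p (fun q => (-1) ^ (q + 1) * x q) with hw
    have hw0 : constantCoeff w = 0 := constantCoeff_wser _ _
    set E : ℝ⟦X⟧ := expc w with hE
    rw [Qfun_eq (le_refl p)]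
    have key : ∀ i ≤ p,
        coeff i (wser p fun q => (-1) ^ (q + 1) * (Pfun q x / q.factorial))
          = coeff i (1 - rescale (-1) E) := by
      intro i hi
      rw [coeff_wser, map_sub, coeff_rescale]
      rcases Nat.eq_zero_or_pos i with rfl | hi1
      · simp only [Finset.mem_Icc, if_neg (by omega : ¬(1 ≤ 0 ∧ 0 ≤ p))]
        rw [coeff_zero_eq_constantCoeff_apply, coeff_zero_eq_constantCoeff_apply, map_one,
          pow_zero, one_mul, hE, constantCoeff_expc]
        norm_num
      · rw [if_pos (Finset.mem_Icc.mpr ⟨hi1, hi⟩), Pfun_eq hi]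
        rw [coeff_one, if_neg (by omega)]
        have hfact : ((i.factorial : ℝ)) ≠ 0 := Nat.cast_ne_zero.mpr i.factorial_ne_zero
        rw [← hw, ← hE]
        field_simp
        rw [pow_succ]
        ring
    rw [coeff_nlog_congr key]
    have hg : constantCoeff (rescale (-1) w) = 0 := constantCoeff_rescale _ hw0
    rw [hE, rescale_expc, nlog_one_sub_expc hg, map_neg, coeff_rescale, coeff_wser,
      if_pos (Finset.mem_Icc.mpr ⟨hp, le_refl p⟩)]
    rw [pow_succ]
    have := neg_one_sq_pow p
    linear_combination x p * this
  · -- P ∘ Q = id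
    set v : ℝ⟦X⟧ := wser p (fun q => (-1) ^ (q + 1) * (x q / q.factorial)) with hv
    have hv0 : constantCoeff v = 0 := constantCoeff_wser _ _
    set L : ℝ⟦X⟧ := nlog v with hL
    rw [Pfun_eq (le_refl p)]
    have key : ∀ i ≤ p,
        coeff i (wser p fun q => (-1) ^ (q + 1) * Qfun q x)
          = coeff i (-(rescale (-1) L)) := by
      intro i hi
      rw [coeff_wser, map_neg, coeff_rescale]
      rcases Nat.eq_zero_or_pos i with rfl | hi1
      · simp only [Finset.mem_Icc, if_neg (by omega : ¬(1 ≤ 0 ∧ 0 ≤ p))]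
        rw [pow_zero, one_mul, coeff_zero_eq_constantCoeff_apply, hL, constantCoeff_nlog]
        norm_num
      · rw [if_pos (Finset.mem_Icc.mpr ⟨hi1, hi⟩), Qfun_eq hi, ← hv, ← hL]
        rw [pow_succ]
        ring
    rw [coeff_expc_congr key]
    have hg : constantCoeff (rescale (-1) v) = 0 := constantCoeff_rescale _ hv0
    rw [hL, rescale_nlog, expc_neg_nlog hg, map_sub, coeff_one, if_neg (by omega),
      coeff_rescale, coeff_wser, if_pos (Finset.mem_Icc.mpr ⟨hp, le_refl p⟩)]
    have hfact : ((p.factorial : ℝ)) ≠ 0 := Nat.cast_ne_zero.mpr p.factorial_ne_zero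
    have := neg_one_sq_pow p
    field_simp
    rw [pow_succ]
    linear_combination (x p) * this

end Stmt8
end
end

section
/- For every integer p ≥ 2, the polynomial map Φ_p : ℝ^p → ℝ^p, (x₁,…,x_p) ↦ (P₁(x₁), P₂(x₁,x₂), …, P_p(x₁,…,x_p)), is a C^∞ diffeomorphism of ℝ^p onto itself whose inverse is the polynomial map Ψ_p : (x₁,…,x_p) ↦ (Q₁(x₁), Q₂(x₁,x₂), …, Q_p(x₁,…,x_p)); moreover, for every x ∈ ℝ^p the absolute value of the Jacobian determinant of Φ_p at x equals ∏_{q=1}^p q!. -/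
noncomputable section

namespace Stmt9

/-- The set `𝒫(p)` of partitions of `p`, encoded as finitely supported functions
`α : ℕ →₀ ℕ` with `α 0 = 0` and `Σ_k k·α_k = p` (`α_k` is the number of parts equal to `k`). -/
def partitions (p : ℕ) : Set (ℕ →₀ ℕ) :=
  {α | α 0 = 0 ∧ (α.sum fun k e => k * e) = p}

/-- `‖α‖ = Σ_k α_k`, the number of parts. -/
def pnorm (α : ℕ →₀ ℕ) : ℕ := α.sum fun _ e => e

/-- `α! = ∏_k α_k!`. -/
def pfact (α : ℕ →₀ ℕ) : ℕ := α.prod fun _ e => e.factorial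

/-- The polynomial (function) `P_p(X₁,…,X_p) = Σ_{α∈𝒫(p)} (−1)^{p−‖α‖} (p!/α!) ∏_q X_q^{α_q}`. -/
def Pfun (p : ℕ) (x : ℕ → ℝ) : ℝ :=
  ∑' α : partitions p,
    (-1 : ℝ) ^ (p - pnorm α.1) * ((p.factorial : ℝ) / (pfact α.1 : ℝ)) *
      α.1.prod fun q e => x q ^ e

/-- The polynomial (function)
`Q_p(X₁,…,X_p) = Σ_{α∈𝒫(p)} ((−1)^{p−‖α‖}/‖α‖) (‖α‖!/α!) ∏_q (X_q/q!)^{α_q}`. -/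
def Qfun (p : ℕ) (x : ℕ → ℝ) : ℝ :=
  ∑' α : partitions p,
    (-1 : ℝ) ^ (p - pnorm α.1) / (pnorm α.1 : ℝ) *
      (((pnorm α.1).factorial : ℝ) / (pfact α.1 : ℝ)) *
      α.1.prod fun q e => (x q / (q.factorial : ℝ)) ^ e

/-- `A_p = Q_p(1, 1/2!, …, 1/p!)`. -/
def Acoef (p : ℕ) : ℝ := Qfun p fun q => ((q.factorial : ℝ))⁻¹

/-- Extend `x = (x₁,…,x_p) ∈ ℝ^p` to a sequence indexed by `ℕ`, with `x_j` in position `j`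
for `1 ≤ j ≤ p` and `0` elsewhere. -/
def extVec (p : ℕ) (x : Fin p → ℝ) : ℕ → ℝ := fun j =>
  if h : 1 ≤ j ∧ j ≤ p then x ⟨j - 1, by omega⟩ else 0

/-- `Φ_p : (x₁,…,x_p) ↦ (P₁(x₁), P₂(x₁,x₂), …, P_p(x₁,…,x_p))`. -/
def Phi (p : ℕ) (x : Fin p → ℝ) : Fin p → ℝ := fun q => Pfun (q.1 + 1) (extVec p x)

/-- `Ψ_p : (x₁,…,x_p) ↦ (Q₁(x₁), Q₂(x₁,x₂), …, Q_p(x₁,…,x_p))`. -/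
def Psi (p : ℕ) (x : Fin p → ℝ) : Fin p → ℝ := fun q => Qfun (q.1 + 1) (extVec p x)

def PF (p : ℕ) : Finset (ℕ →₀ ℕ) :=
  ((Finset.range (p+1)).finsupp (fun _ => Finset.range (p+1))).filter
    (fun α => α 0 = 0 ∧ (α.sum fun k e => k * e) = p)

lemma single_le_partsum (α : ℕ →₀ ℕ) (j : ℕ) (hj : j ∈ α.support) :
    j * α j ≤ α.sum fun k e => k * e := by
  exact Finset.single_le_sum (f := fun k => k * α k) (fun i _ => Nat.zero_le _) hj

lemma mem_PF {p : ℕ} {α : ℕ →₀ ℕ} :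
    α ∈ PF p ↔ α 0 = 0 ∧ (α.sum fun k e => k * e) = p := by
  constructor
  · intro h; exact (Finset.mem_filter.1 h).2
  · intro h
    refine Finset.mem_filter.2 ⟨Finset.mem_finsupp_iff.2 ⟨?_, ?_⟩, h⟩
    · intro q hq
      have h1 : q * α q ≤ p := h.2 ▸ single_le_partsum α q hq
      have h2 : α q ≠ 0 := Finsupp.mem_support_iff.1 hq
      have h3 : 1 ≤ q := Nat.pos_of_ne_zero (fun h4 => h2 (h4 ▸ h.1))
      simp only [Finset.mem_range]
      calc q ≤ q * α q := Nat.le_mul_of_pos_right _ (Nat.pos_of_ne_zero h2)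
        _ ≤ p := h1
        _ < p + 1 := Nat.lt_succ_self p
    · intro i _
      simp only [Finset.mem_range]
      rcases Nat.eq_zero_or_pos (α i) with h4 | h4
      · omega
      · have hi : i ∈ α.support := Finsupp.mem_support_iff.2 (by omega)
        have h1 : i * α i ≤ p := h.2 ▸ single_le_partsum α i hi
        have h3 : 1 ≤ i := Nat.pos_of_ne_zero (fun h5 => by rw [h5, h.1] at h4; omega)
        have := Nat.le_mul_of_pos_left (α i) h3
        omega

lemma partitions_eq_PF (p : ℕ) : partitions p = (PF p : Set (ℕ →₀ ℕ)) := by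
  ext α; simp [partitions, mem_PF]

lemma apply_eq_zero_of_mem_PF {p q : ℕ} {α : ℕ →₀ ℕ} (h : α ∈ PF p) (hq : p < q) :
    α q = 0 := by
  by_contra h2
  have hq' : q ∈ α.support := Finsupp.mem_support_iff.2 h2
  have := single_le_partsum α q hq'
  rw [(mem_PF.1 h).2] at this
  have := Nat.le_mul_of_pos_right q (Nat.pos_of_ne_zero h2)
  omega

lemma support_subset_of_mem_PF {p : ℕ} {α : ℕ →₀ ℕ} (h : α ∈ PF p) :
    α.support ⊆ Finset.Icc 1 p := by
  intro q hq
  have h2 := Finsupp.mem_support_iff.1 hq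
  simp only [Finset.mem_Icc]
  constructor
  · exact Nat.pos_of_ne_zero (fun h4 => h2 (h4 ▸ (mem_PF.1 h).1))
  · by_contra h3; exact h2 (apply_eq_zero_of_mem_PF h (by omega))

lemma pnorm_le_of_mem_PF {p : ℕ} {α : ℕ →₀ ℕ} (h : α ∈ PF p) : pnorm α ≤ p := by
  rw [pnorm, ← (mem_PF.1 h).2]
  refine Finset.sum_le_sum (fun i hi => ?_)
  have h1 : 1 ≤ i := (Finset.mem_Icc.1 (support_subset_of_mem_PF h hi)).1
  exact Nat.le_mul_of_pos_left _ h1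

lemma PF_zero : PF 0 = {0} := by
  ext α
  simp only [mem_PF, Finset.mem_singleton]
  constructor
  · rintro ⟨h0, hs⟩
    ext q
    rcases Nat.eq_zero_or_pos q with h4 | h4
    · simp [h4, h0]
    · by_contra h2
      have hq : q ∈ α.support := Finsupp.mem_support_iff.2 (by simpa using h2)
      have := single_le_partsum α q hq
      rw [hs] at this
      have := Nat.le_mul_of_pos_right q (Nat.pos_of_ne_zero (by simpa using h2))
      simp only [Finsupp.coe_zero, Pi.zero_apply] at h2
      omega
  · rintro rfl; simp [Finsupp.sum]


-- products over β + single j 1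
lemma prod_add_single {M : Type*} [CommMonoid M] (β : ℕ →₀ ℕ) (j : ℕ)
    (h : ℕ → ℕ → M) (h0 : ∀ q, h q 0 = 1) :
    (β + Finsupp.single j 1).prod h = h j (β j + 1) * (β.support.erase j).prod (fun q => h q (β q)) := by
  have hsupp : (β + Finsupp.single j 1).support ⊆ insert j β.support := by
    refine (Finsupp.support_add).trans ?_
    intro q hq
    rcases Finset.mem_union.1 hq with h1 | h1
    · exact Finset.mem_insert_of_mem h1
    · have h2 := Finsupp.support_single_subset h1
      simp only [Finset.mem_singleton] at h2
      subst h2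
      exact Finset.mem_insert_self _ _
  rw [Finsupp.prod_of_support_subset _ hsupp h (fun q _ => h0 q)]
  rw [← Finset.mul_prod_erase _ _ (Finset.mem_insert_self j β.support)]
  have he : (insert j β.support).erase j = β.support.erase j := Finset.erase_insert_eq_erase _ _
  rw [he]
  congr 1
  · congr 1
    simp [Finsupp.add_apply, Finsupp.single_apply]
  · refine Finset.prod_congr rfl (fun q hq => ?_)
    have hqj : q ≠ j := Finset.ne_of_mem_erase hq
    simp [Finsupp.add_apply, Finsupp.single_apply, Ne.symm hqj]

lemma prod_plain {M : Type*} [CommMonoid M] (β : ℕ →₀ ℕ) (j : ℕ)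
    (h : ℕ → ℕ → M) (h0 : ∀ q, h q 0 = 1) :
    β.prod h = h j (β j) * (β.support.erase j).prod (fun q => h q (β q)) := by
  have hsupp : β.support ⊆ insert j β.support := Finset.subset_insert _ _
  rw [Finsupp.prod_of_support_subset _ hsupp h (fun q _ => h0 q)]
  rw [← Finset.mul_prod_erase _ _ (Finset.mem_insert_self j β.support)]
  rw [Finset.erase_insert_eq_erase]

lemma pfact_add_single (β : ℕ →₀ ℕ) (j : ℕ) :
    pfact (β + Finsupp.single j 1) = (β j + 1) * pfact β := by
  rw [pfact, pfact, prod_add_single β j _ (fun q => rfl),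
    prod_plain β j (fun _ e => e.factorial) (fun q => rfl), Nat.factorial_succ, mul_assoc]

lemma pnorm_add_single (β : ℕ →₀ ℕ) (j : ℕ) :
    pnorm (β + Finsupp.single j 1) = pnorm β + 1 := by
  rw [pnorm, pnorm, Finsupp.sum_add_index' (fun _ => rfl) (fun _ _ _ => rfl),
    Finsupp.sum_single_index rfl]

lemma xprod_add_single (x : ℕ → ℝ) (β : ℕ →₀ ℕ) (j : ℕ) :
    ((β + Finsupp.single j 1).prod fun q e => x q ^ e)
      = x j * (β.prod fun q e => x q ^ e) := by
  rw [prod_add_single β j _ (fun q => pow_zero _),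
    prod_plain β j (fun q e => x q ^ e) (fun q => pow_zero _), pow_succ]
  ring

lemma partsum_add_single (β : ℕ →₀ ℕ) (j : ℕ) :
    ((β + Finsupp.single j 1).sum fun k e => k * e)
      = (β.sum fun k e => k * e) + j := by
  rw [Finsupp.sum_add_index' (fun k => Nat.mul_zero k) (fun k e1 e2 => Nat.mul_add k e1 e2),
    Finsupp.sum_single_index (Nat.mul_zero j), Nat.mul_one]

lemma add_single_mem_PF {p j : ℕ} (hj : j ∈ Finset.Icc 1 p) {β : ℕ →₀ ℕ}
    (hβ : β ∈ PF (p - j)) : β + Finsupp.single j 1 ∈ PF p := by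
  simp only [Finset.mem_Icc] at hj
  rw [mem_PF]
  obtain ⟨h0, hs⟩ := mem_PF.1 hβ
  constructor
  · have hj0 : ¬ j = 0 := by omega
    simp [Finsupp.add_apply, h0, Finsupp.single_apply, hj0]
  · rw [partsum_add_single, hs]; omega

lemma sub_single_mem_PF {p j : ℕ} {α : ℕ →₀ ℕ} (hα : α ∈ PF p) (hj : j ∈ α.support) :
    α - Finsupp.single j 1 ∈ PF (p - j) := by
  obtain ⟨h0, hs⟩ := mem_PF.1 hα
  have hle : Finsupp.single j 1 ≤ α := by
    rw [Finsupp.single_le_iff]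
    exact Nat.one_le_iff_ne_zero.2 (Finsupp.mem_support_iff.1 hj)
  have key : (α - Finsupp.single j 1) + Finsupp.single j 1 = α := tsub_add_cancel_of_le hle
  rw [mem_PF]
  constructor
  · have h2 := congrArg (fun f : ℕ →₀ ℕ => f 0) key
    simp only [Finsupp.add_apply, Finsupp.single_apply] at h2
    have hj1 : (1:ℕ) ≤ j := (Finset.mem_Icc.1 (support_subset_of_mem_PF hα hj)).1
    rw [if_neg (by omega : ¬ j = 0)] at h2
    omega
  · have := partsum_add_single (α - Finsupp.single j 1) j
    rw [key, hs] at this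
    omega

/-- Master reindexing lemma. -/
lemma master (p : ℕ) (F : ℕ → (ℕ →₀ ℕ) → ℝ) :
    ∑ j ∈ Finset.Icc 1 p, ∑ β ∈ PF (p - j), F j (β + Finsupp.single j 1)
      = ∑ α ∈ PF p, ∑ j ∈ α.support, F j α := by
  rw [Finset.sum_sigma', Finset.sum_sigma']
  refine Finset.sum_nbij' (i := fun x => (⟨x.2 + Finsupp.single x.1 1, x.1⟩ : Σ _ : ℕ →₀ ℕ, ℕ))
    (j := fun x => (⟨x.2, x.1 - Finsupp.single x.2 1⟩ : Σ _ : ℕ, ℕ →₀ ℕ)) ?_ ?_ ?_ ?_ ?_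
  · rintro ⟨j, β⟩ hx
    simp only [Finset.mem_sigma] at hx ⊢
    refine ⟨add_single_mem_PF hx.1 hx.2, ?_⟩
    have hj1 : 1 ≤ j := (Finset.mem_Icc.1 hx.1).1
    simp [Finsupp.mem_support_iff, Finsupp.add_apply, Finsupp.single_apply]
  · rintro ⟨α, j⟩ hx
    simp only [Finset.mem_sigma] at hx ⊢
    obtain ⟨hα, hj⟩ := hx
    constructor
    · have h1 : 1 ≤ j := (Finset.mem_Icc.1 (support_subset_of_mem_PF hα hj)).1
      have h2 : j ≤ p := by
        have h3 := single_le_partsum α j hj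
        rw [(mem_PF.1 hα).2] at h3
        have h4 := Nat.le_mul_of_pos_right j
          (Nat.pos_of_ne_zero (Finsupp.mem_support_iff.1 hj))
        omega
      exact Finset.mem_Icc.2 ⟨h1, h2⟩
    · exact sub_single_mem_PF hα hj
  · rintro ⟨j, β⟩ hx
    simp only
    congr 1
    exact add_tsub_cancel_right _ _
  · rintro ⟨α, j⟩ hx
    simp only [Finset.mem_sigma] at hx
    obtain ⟨hα, hj⟩ := hx
    have hle : Finsupp.single j 1 ≤ α := by
      rw [Finsupp.single_le_iff]
      exact Nat.one_le_iff_ne_zero.2 (Finsupp.mem_support_iff.1 hj)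
    simp only
    congr 1
    exact tsub_add_cancel_of_le hle
  · rintro ⟨j, β⟩ hx
    rfl


lemma tsum_partitions (p : ℕ) (f : (ℕ →₀ ℕ) → ℝ) :
    ∑' (α : partitions p), f α.1 = ∑ α ∈ PF p, f α := by
  rw [partitions_eq_PF]
  exact Finset.tsum_subtype' (PF p) f

lemma Pfun_eq_sum (p : ℕ) (x : ℕ → ℝ) :
    Pfun p x = ∑ α ∈ PF p,
      (-1 : ℝ) ^ (p - pnorm α) * ((p.factorial : ℝ) / (pfact α : ℝ)) *
        α.prod (fun q e => x q ^ e) :=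
  tsum_partitions p (fun α => (-1 : ℝ) ^ (p - pnorm α) * ((p.factorial : ℝ) / (pfact α : ℝ)) *
        α.prod (fun q e => x q ^ e))

lemma Qfun_eq_sum (p : ℕ) (x : ℕ → ℝ) :
    Qfun p x = ∑ α ∈ PF p,
      (-1 : ℝ) ^ (p - pnorm α) / (pnorm α : ℝ) *
        (((pnorm α).factorial : ℝ) / (pfact α : ℝ)) *
        α.prod (fun q e => (x q / (q.factorial : ℝ)) ^ e) :=
  tsum_partitions p (fun α => (-1 : ℝ) ^ (p - pnorm α) / (pnorm α : ℝ) *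
        (((pnorm α).factorial : ℝ) / (pfact α : ℝ)) *
        α.prod (fun q e => (x q / (q.factorial : ℝ)) ^ e))

lemma pfact_pos (α : ℕ →₀ ℕ) : 0 < pfact α :=
  Finset.prod_pos (fun q _ => Nat.factorial_pos _)

lemma neg_one_pow_sub {n p : ℕ} (h : n ≤ p) :
    ((-1 : ℝ)) ^ (p - n) = (-1) ^ p * (-1) ^ n := by
  have h1 : ((-1 : ℝ)) ^ (p - n) * (-1) ^ n = (-1) ^ p := by
    rw [← pow_add]; congr 1; omega
  have h2 : ((-1 : ℝ)) ^ n * (-1) ^ n = 1 := by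
    rw [← mul_pow]; norm_num
  calc ((-1 : ℝ)) ^ (p - n) = (-1) ^ (p - n) * ((-1) ^ n * (-1) ^ n) := by rw [h2, mul_one]
    _ = ((-1) ^ (p - n) * (-1) ^ n) * (-1) ^ n := by ring
    _ = (-1) ^ p * (-1) ^ n := by rw [h1]

def cterm (x : ℕ → ℝ) (α : ℕ →₀ ℕ) : ℝ :=
  (-1 : ℝ) ^ (pnorm α) * (α.prod fun q e => x q ^ e) / (pfact α : ℝ)
def Rterm (g : ℕ → ℝ) (α : ℕ →₀ ℕ) : ℝ :=
  (-1 : ℝ) ^ (pnorm α) * ((pnorm α).factorial : ℝ) *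
    (α.prod fun q e => g q ^ e) / (pfact α : ℝ)
def hterm (g : ℕ → ℝ) (α : ℕ →₀ ℕ) : ℝ :=
  (-1 : ℝ) ^ (pnorm α + 1) / (pnorm α : ℝ) *
    (((pnorm α).factorial : ℝ) / (pfact α : ℝ)) * (α.prod fun q e => g q ^ e)

def cPS (m : ℕ) (x : ℕ → ℝ) : ℝ := ∑ α ∈ PF m, cterm x α
def Rsum (m : ℕ) (g : ℕ → ℝ) : ℝ := ∑ α ∈ PF m, Rterm g α
def hQS (m : ℕ) (g : ℕ → ℝ) : ℝ := ∑ α ∈ PF m, hterm g α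

lemma Pfun_eq_cPS (p : ℕ) (x : ℕ → ℝ) :
    Pfun p x = (-1 : ℝ) ^ p * (p.factorial : ℝ) * cPS p x := by
  rw [Pfun_eq_sum, cPS, Finset.mul_sum]
  refine Finset.sum_congr rfl (fun α hα => ?_)
  rw [cterm]
  rw [neg_one_pow_sub (pnorm_le_of_mem_PF hα)]
  have h2 : ((-1 : ℝ)) ^ p * (-1) ^ p = 1 := by
    rw [← mul_pow]; norm_num
  field_simp

lemma Qfun_eq_hQS (p : ℕ) (y : ℕ → ℝ) :
    Qfun p y = (-1 : ℝ) ^ (p + 1) * hQS p (fun q => y q / (q.factorial : ℝ)) := by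
  rw [Qfun_eq_sum, hQS, Finset.mul_sum]
  refine Finset.sum_congr rfl (fun α hα => ?_)
  rw [hterm]
  rw [neg_one_pow_sub (pnorm_le_of_mem_PF hα)]
  ring

lemma Pfun_zero (x : ℕ → ℝ) : Pfun 0 x = 1 := by
  rw [Pfun_eq_sum, PF_zero]
  simp [pnorm, pfact, Finsupp.sum, Finsupp.prod]

lemma Pfun_congr (p : ℕ) {x x' : ℕ → ℝ} (h : ∀ q, 1 ≤ q → q ≤ p → x q = x' q) :
    Pfun p x = Pfun p x' := by
  rw [Pfun_eq_sum, Pfun_eq_sum]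
  refine Finset.sum_congr rfl (fun α hα => ?_)
  congr 1
  refine Finset.prod_congr rfl (fun q hq => ?_)
  have h2 := Finset.mem_Icc.1 (support_subset_of_mem_PF hα hq)
  simp only [h q h2.1 h2.2]

lemma Qfun_congr (p : ℕ) {x x' : ℕ → ℝ} (h : ∀ q, 1 ≤ q → q ≤ p → x q = x' q) :
    Qfun p x = Qfun p x' := by
  rw [Qfun_eq_sum, Qfun_eq_sum]
  refine Finset.sum_congr rfl (fun α hα => ?_)
  congr 1
  refine Finset.prod_congr rfl (fun q hq => ?_)
  have h2 := Finset.mem_Icc.1 (support_subset_of_mem_PF hα hq)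
  simp only [h q h2.1 h2.2]


lemma apply_add_single (β : ℕ →₀ ℕ) (j : ℕ) :
    (β + Finsupp.single j 1 : ℕ →₀ ℕ) j = β j + 1 := by
  rw [Finsupp.add_apply, Finsupp.single_eq_same]

lemma pnorm_eq_sum (α : ℕ →₀ ℕ) : pnorm α = ∑ j ∈ α.support, α j := rfl

lemma sum_support_eq {p : ℕ} {α : ℕ →₀ ℕ} (hα : α ∈ PF p) :
    ∑ j ∈ α.support, j * α j = p := (mem_PF.1 hα).2

lemma pnorm_pos {m : ℕ} (hm : 1 ≤ m) {α : ℕ →₀ ℕ} (hα : α ∈ PF m) : 1 ≤ pnorm α := by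
  rcases Nat.eq_zero_or_pos (pnorm α) with hn | hn
  · exfalso
    have h2 : ∀ j ∈ α.support, α j = 0 :=
      Finset.sum_eq_zero_iff.1 (by rw [← pnorm_eq_sum]; exact hn)
    have hz : α = 0 := by
      ext q
      by_cases hq : q ∈ α.support
      · simpa using h2 q hq
      · simpa using Finsupp.notMem_support_iff.1 hq
    have h3 := (mem_PF.1 hα).2
    rw [hz] at h3
    simp [Finsupp.sum] at h3
    omega
  · exact hn

lemma lemA (x : ℕ → ℝ) (p : ℕ) :
    (p : ℝ) * cPS p x = -∑ j ∈ Finset.Icc 1 p, (j : ℝ) * x j * cPS (p - j) x := by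
  have h1 : (p : ℝ) * cPS p x
      = ∑ α ∈ PF p, ∑ j ∈ α.support, (fun (j : ℕ) (α : ℕ →₀ ℕ) =>
          ((j * α j : ℕ) : ℝ) * cterm x α) j α := by
    rw [cPS, Finset.mul_sum]
    refine Finset.sum_congr rfl fun α hα => ?_
    dsimp only
    rw [← Finset.sum_mul, ← Nat.cast_sum, sum_support_eq hα]
  rw [h1, ← master p _, ← Finset.sum_neg_distrib]
  refine Finset.sum_congr rfl fun j hj => ?_
  have h2 : ∀ β ∈ PF (p - j),
      (fun (j : ℕ) (α : ℕ →₀ ℕ) => ((j * α j : ℕ) : ℝ) * cterm x α) j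
        (β + Finsupp.single j 1) = -((j : ℝ) * x j * cterm x β) := by
    intro β _
    dsimp only
    rw [apply_add_single, cterm, cterm, pnorm_add_single, pfact_add_single,
      xprod_add_single]
    have hne1 : ((pfact β : ℕ) : ℝ) ≠ 0 := Nat.cast_ne_zero.2 (pfact_pos β).ne'
    have hne2 : ((β j : ℝ) + 1) ≠ 0 := by positivity
    rw [pow_succ]
    push_cast
    field_simp
  rw [Finset.sum_congr rfl h2, Finset.sum_neg_distrib, cPS, Finset.mul_sum]

lemma lemB (g : ℕ → ℝ) (p : ℕ) :
    (p : ℝ) * hQS p g = ∑ j ∈ Finset.Icc 1 p, (j : ℝ) * g j * Rsum (p - j) g := by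
  have h1 : (p : ℝ) * hQS p g
      = ∑ α ∈ PF p, ∑ j ∈ α.support, (fun (j : ℕ) (α : ℕ →₀ ℕ) =>
          ((j * α j : ℕ) : ℝ) * hterm g α) j α := by
    rw [hQS, Finset.mul_sum]
    refine Finset.sum_congr rfl fun α hα => ?_
    dsimp only
    rw [← Finset.sum_mul, ← Nat.cast_sum, sum_support_eq hα]
  rw [h1, ← master p _]
  refine Finset.sum_congr rfl fun j hj => ?_
  have h2 : ∀ β ∈ PF (p - j),
      (fun (j : ℕ) (α : ℕ →₀ ℕ) => ((j * α j : ℕ) : ℝ) * hterm g α) j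
        (β + Finsupp.single j 1) = (j : ℝ) * g j * Rterm g β := by
    intro β _
    dsimp only
    rw [apply_add_single, hterm, Rterm, pnorm_add_single, pfact_add_single,
      xprod_add_single, Nat.factorial_succ]
    have hne1 : ((pfact β : ℕ) : ℝ) ≠ 0 := Nat.cast_ne_zero.2 (pfact_pos β).ne'
    have hne2 : ((β j : ℝ) + 1) ≠ 0 := by positivity
    have hne3 : ((pnorm β : ℝ) + 1) ≠ 0 := by positivity
    rw [pow_succ, pow_succ]
    push_cast
    field_simp
  rw [Finset.sum_congr rfl h2, Rsum, Finset.mul_sum]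

lemma lemC (g : ℕ → ℝ) (m : ℕ) (hm : 1 ≤ m) :
    Rsum m g = -∑ j ∈ Finset.Icc 1 m, g j * Rsum (m - j) g := by
  have h1 : -Rsum m g
      = ∑ α ∈ PF m, ∑ j ∈ α.support, (fun (j : ℕ) (α : ℕ →₀ ℕ) =>
          ((α j : ℕ) : ℝ) * (-((-1 : ℝ) ^ (pnorm α) * ((pnorm α).factorial : ℝ) /
            (pnorm α : ℝ) * (α.prod fun q e => g q ^ e) / (pfact α : ℝ)))) j α := by
    rw [Rsum, ← Finset.sum_neg_distrib]
    refine Finset.sum_congr rfl fun α hα => ?_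
    dsimp only
    rw [← Finset.sum_mul, ← Nat.cast_sum, ← pnorm_eq_sum, Rterm]
    have hn : ((pnorm α : ℕ) : ℝ) ≠ 0 :=
      Nat.cast_ne_zero.2 (by have := pnorm_pos hm hα; omega)
    field_simp
  have h2 : ∀ j ∈ Finset.Icc 1 m, ∀ β ∈ PF (m - j),
      (fun (j : ℕ) (α : ℕ →₀ ℕ) =>
          ((α j : ℕ) : ℝ) * (-((-1 : ℝ) ^ (pnorm α) * ((pnorm α).factorial : ℝ) /
            (pnorm α : ℝ) * (α.prod fun q e => g q ^ e) / (pfact α : ℝ)))) j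
        (β + Finsupp.single j 1) = g j * Rterm g β := by
    intro j _ β _
    dsimp only
    rw [apply_add_single, Rterm, pnorm_add_single, pfact_add_single,
      xprod_add_single, Nat.factorial_succ]
    have hne1 : ((pfact β : ℕ) : ℝ) ≠ 0 := Nat.cast_ne_zero.2 (pfact_pos β).ne'
    have hne2 : ((β j : ℝ) + 1) ≠ 0 := by positivity
    have hne3 : ((pnorm β : ℝ) + 1) ≠ 0 := by positivity
    rw [pow_succ]
    push_cast
    field_simp
  have h3 := master m (fun (j : ℕ) (α : ℕ →₀ ℕ) =>
      ((α j : ℕ) : ℝ) * (-((-1 : ℝ) ^ (pnorm α) * ((pnorm α).factorial : ℝ) /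
        (pnorm α : ℝ) * (α.prod fun q e => g q ^ e) / (pfact α : ℝ))))
  beta_reduce at h1 h2
  have h4 : ∑ j ∈ Finset.Icc 1 m, g j * Rsum (m - j) g = -Rsum m g := by
    rw [h1, ← h3]
    refine Finset.sum_congr rfl fun j hj => ?_
    rw [Rsum, Finset.mul_sum]
    exact (Finset.sum_congr rfl (h2 j hj)).symm
  linarith [h4]


open PowerSeries

lemma cPS_zero (x : ℕ → ℝ) : cPS 0 x = 1 := by
  rw [cPS, PF_zero]
  simp [cterm, pnorm, pfact, Finsupp.sum, Finsupp.prod]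

lemma Rsum_zero (g : ℕ → ℝ) : Rsum 0 g = 1 := by
  rw [Rsum, PF_zero]
  simp [Rterm, pnorm, pfact, Finsupp.sum, Finsupp.prod]

/-- `1 + G` where `G` has coefficients `g_j`, `j ≥ 1`. -/
def Ups (g : ℕ → ℝ) : PowerSeries ℝ :=
  PowerSeries.mk fun j => if j = 0 then 1 else g j

lemma coeff_mul_mk (a b : ℕ → ℝ) (ha : a 0 = 0) (p : ℕ) :
    PowerSeries.coeff p (PowerSeries.mk a * PowerSeries.mk b)
      = ∑ j ∈ Finset.Icc 1 p, a j * b (p - j) := by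
  rw [PowerSeries.coeff_mul, Finset.Nat.sum_antidiagonal_eq_sum_range_succ_mk]
  simp only [PowerSeries.coeff_mk]
  rcases Nat.eq_zero_or_pos p with hp | hp
  · subst hp; simp [ha]
  · rw [Finset.range_eq_Ico, Finset.sum_eq_sum_Ico_succ_bot (by omega)]
    rw [ha, zero_mul, zero_add]
    congr 1

lemma coeff_mul_Ups (g : ℕ → ℝ) (b : ℕ → ℝ) (p : ℕ) (hp : 1 ≤ p) :
    PowerSeries.coeff p (Ups g * PowerSeries.mk b)
      = b p + ∑ j ∈ Finset.Icc 1 p, g j * b (p - j) := by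
  rw [Ups, PowerSeries.coeff_mul, Finset.Nat.sum_antidiagonal_eq_sum_range_succ_mk]
  simp only [PowerSeries.coeff_mk]
  rw [Finset.range_eq_Ico, Finset.sum_eq_sum_Ico_succ_bot (by omega)]
  rw [if_pos rfl, one_mul, Nat.sub_zero]
  congr 1
  refine Finset.sum_congr rfl fun j hj => ?_
  have hj' := Finset.mem_Icc.1 hj
  rw [if_neg (by omega)]

lemma lemA_ps (x : ℕ → ℝ) :
    PowerSeries.mk (fun m => (m : ℝ) * cPS m x)
      = PowerSeries.mk (fun j => (j : ℝ) * (-(x j))) * PowerSeries.mk (fun m => cPS m x) := by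
  ext p
  rw [PowerSeries.coeff_mk, coeff_mul_mk _ _ (by norm_num)]
  rw [lemA, ← Finset.sum_neg_distrib]
  refine Finset.sum_congr rfl fun j hj => ?_
  ring

lemma lemB_ps (g : ℕ → ℝ) :
    PowerSeries.mk (fun m => (m : ℝ) * hQS m g)
      = PowerSeries.mk (fun j => (j : ℝ) * g j) * PowerSeries.mk (fun m => Rsum m g) := by
  ext p
  rw [PowerSeries.coeff_mk, coeff_mul_mk _ _ (by norm_num)]
  rw [lemB]

lemma lemC_ps (g : ℕ → ℝ) :
    Ups g * PowerSeries.mk (fun m => Rsum m g) = 1 := by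
  ext p
  rw [PowerSeries.coeff_one]
  rcases Nat.eq_zero_or_pos p with hp | hp
  · subst hp
    have h0 : PowerSeries.coeff 0 (Ups g * PowerSeries.mk (fun m => Rsum m g)) = 1 := by
      rw [PowerSeries.coeff_mul]
      simp [Ups, Rsum_zero]
    rw [h0, if_pos rfl]
  · rw [coeff_mul_Ups _ _ p hp, if_neg (by omega)]
    rw [lemC g p hp]
    ring

lemma ode_unique (h u u' : ℕ → ℝ)
    (hu : PowerSeries.mk (fun m => (m : ℝ) * u m)
      = PowerSeries.mk (fun j => (j : ℝ) * h j) * Ups u)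
    (hu' : PowerSeries.mk (fun m => (m : ℝ) * u' m)
      = PowerSeries.mk (fun j => (j : ℝ) * h j) * Ups u') :
    ∀ m, 1 ≤ m → u m = u' m := by
  intro m
  induction m using Nat.strong_induction_on with
  | _ m IH =>
    intro hm
    have e1 : (m : ℝ) * u m = ∑ j ∈ Finset.Icc 1 m, (j : ℝ) * h j *
        (if m - j = 0 then 1 else u (m - j)) := by
      have := congrArg (PowerSeries.coeff m) hu
      rw [PowerSeries.coeff_mk] at this
      rw [this, Ups, coeff_mul_mk _ _ (by norm_num) m]
    have e2 : (m : ℝ) * u' m = ∑ j ∈ Finset.Icc 1 m, (j : ℝ) * h j *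
        (if m - j = 0 then 1 else u' (m - j)) := by
      have := congrArg (PowerSeries.coeff m) hu'
      rw [PowerSeries.coeff_mk] at this
      rw [this, Ups, coeff_mul_mk _ _ (by norm_num) m]
    have e3 : (m : ℝ) * u m = (m : ℝ) * u' m := by
      rw [e1, e2]
      refine Finset.sum_congr rfl fun j hj => ?_
      rw [Finset.mem_Icc] at hj
      by_cases hz : m - j = 0
      · rw [if_pos hz, if_pos hz]
      · rw [if_neg hz, if_neg hz, IH (m - j) (by omega) (by omega)]
    have hm0 : (m : ℝ) ≠ 0 := Nat.cast_ne_zero.2 (by omega)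
    exact mul_left_cancel₀ hm0 e3

lemma mk_eq_Ups (u : ℕ → ℝ) (hu : u 0 = 1) : PowerSeries.mk u = Ups u := by
  ext p
  rw [PowerSeries.coeff_mk, Ups, PowerSeries.coeff_mk]
  by_cases hp : p = 0
  · rw [if_pos hp, hp, hu]
  · rw [if_neg hp]

lemma factorial_cast_ne (n : ℕ) : ((n.factorial : ℕ) : ℝ) ≠ 0 :=
  Nat.cast_ne_zero.2 (Nat.factorial_pos n).ne'

/-- main identity 1 : `Q (P x) = x`. -/
theorem QP_inverse (x : ℕ → ℝ) (m : ℕ) (hm : 1 ≤ m) :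
    Qfun m (fun j => Pfun j x) = x m := by
  set gg : ℕ → ℝ := fun j => (-1 : ℝ) ^ j * cPS j x with hgg
  have hgg0 : gg 0 = 1 := by rw [hgg]; simp [cPS_zero]
  -- twist of lemA_ps by rescale (-1)
  have h1 := congrArg (PowerSeries.rescale (-1 : ℝ)) (lemA_ps x)
  rw [map_mul, PowerSeries.rescale_mk, PowerSeries.rescale_mk, PowerSeries.rescale_mk] at h1
  have e1 : (fun n : ℕ => (-1 : ℝ) ^ n * ((n : ℝ) * cPS n x))
      = fun n : ℕ => (n : ℝ) * gg n := by funext n; rw [hgg]; ring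
  have e2 : (fun n : ℕ => (-1 : ℝ) ^ n * ((n : ℝ) * (-(x n))))
      = fun n : ℕ => (n : ℝ) * ((-1 : ℝ) ^ (n + 1) * x n) := by
    funext n; rw [pow_succ]; ring
  have e3 : (fun n : ℕ => (-1 : ℝ) ^ n * cPS n x) = gg := by funext n; rw [hgg]
  rw [e1, e2, e3] at h1
  -- h1 : mk (n * gg n) = mk (n * (-1)^(n+1) x n) * mk gg
  -- lemB_ps applied to gg
  have h2 := lemB_ps gg
  -- the input of Qfun
  have hy : (fun q => (Pfun q x) / (q.factorial : ℝ)) = gg := by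
    funext q
    rw [Pfun_eq_cPS, hgg]
    have h4 : ((-1:ℝ))^q * (-1)^q = 1 := by rw [← mul_pow]; norm_num
    field_simp
  -- chain
  have h5 : PowerSeries.mk (fun m => (m : ℝ) * hQS m gg)
      = PowerSeries.mk (fun j => (j : ℝ) * ((-1 : ℝ) ^ (j + 1) * x j)) := by
    rw [h2, h1, mk_eq_Ups gg hgg0, mul_assoc, lemC_ps gg, mul_one]
  have h6 := congrArg (PowerSeries.coeff m) h5
  rw [PowerSeries.coeff_mk, PowerSeries.coeff_mk] at h6
  have hm0 : (m : ℝ) ≠ 0 := Nat.cast_ne_zero.2 (by omega)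
  have h7 : hQS m gg = (-1 : ℝ) ^ (m + 1) * x m := mul_left_cancel₀ hm0 h6
  rw [Qfun_eq_hQS, hy, h7]
  have h8 : ((-1:ℝ))^(m+1) * (-1)^(m+1) = 1 := by rw [← mul_pow]; norm_num
  rw [← mul_assoc, h8, one_mul]

/-- main identity 2 : `P (Q z) = z`. -/
theorem PQ_inverse (z : ℕ → ℝ) (m : ℕ) (hm : 1 ≤ m) :
    Pfun m (fun j => Qfun j z) = z m := by
  set g : ℕ → ℝ := fun j => z j / (j.factorial : ℝ) with hg
  set hh : ℕ → ℝ := fun j => hQS j g with hhh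
  set x' : ℕ → ℝ := fun j => Qfun j z with hx'
  set u : ℕ → ℝ := fun j => if j = 0 then 1 else g j with hu
  set gg' : ℕ → ℝ := fun j => (-1 : ℝ) ^ j * cPS j x' with hgg'
  have hgg'0 : gg' 0 = 1 := by rw [hgg']; simp [cPS_zero]
  -- first solution : u
  have hUpsu : Ups u = Ups g := by
    ext p
    rw [Ups, Ups, PowerSeries.coeff_mk, PowerSeries.coeff_mk]
    by_cases hp : p = 0
    · rw [if_pos hp, if_pos hp]
    · rw [if_neg hp, if_neg hp]; simp only [hu]; rw [if_neg hp]
  have hmku : PowerSeries.mk (fun j => (j : ℝ) * g j)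
      = PowerSeries.mk (fun j => (j : ℝ) * u j) := by
    ext p
    rw [PowerSeries.coeff_mk, PowerSeries.coeff_mk]
    by_cases hp : p = 0
    · rw [hp]; norm_num
    · simp only [hu]; rw [if_neg hp]
  have h1 : PowerSeries.mk (fun j => (j : ℝ) * u j)
      = PowerSeries.mk (fun j => (j : ℝ) * hh j) * Ups u := by
    rw [← hmku, hUpsu]
    have h2 := congrArg (· * Ups g) (lemB_ps g)
    rw [mul_assoc] at h2
    have h3 : PowerSeries.mk (fun m => Rsum m g) * Ups g = 1 := by
      rw [mul_comm]; exact lemC_ps g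
    rw [h3, mul_one] at h2
    rw [← h2]
  -- second solution : gg'
  have h4 := congrArg (PowerSeries.rescale (-1 : ℝ)) (lemA_ps x')
  rw [map_mul, PowerSeries.rescale_mk, PowerSeries.rescale_mk, PowerSeries.rescale_mk] at h4
  have e1 : (fun n : ℕ => (-1 : ℝ) ^ n * ((n : ℝ) * cPS n x'))
      = fun n : ℕ => (n : ℝ) * gg' n := by funext n; rw [hgg']; ring
  have e2 : (fun n : ℕ => (-1 : ℝ) ^ n * ((n : ℝ) * (-(x' n))))
      = fun n : ℕ => (n : ℝ) * hh n := by
    funext n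
    simp only [hhh]
    have : hQS n g = (-1 : ℝ) ^ (n + 1) * Qfun n z := by
      rw [Qfun_eq_hQS]
      have h8 : ((-1:ℝ))^(n+1) * (-1)^(n+1) = 1 := by rw [← mul_pow]; norm_num
      rw [← mul_assoc, h8, one_mul]
    simp only [hx']
    rw [this, pow_succ]
    ring
  have e3 : (fun n : ℕ => (-1 : ℝ) ^ n * cPS n x') = gg' := by funext n; rw [hgg']
  rw [e1, e2, e3, mk_eq_Ups gg' hgg'0] at h4
  -- uniqueness
  have h9 := ode_unique hh u gg' h1 h4 m hm
  simp only [hu, hgg'] at h9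
  rw [if_neg (by omega)] at h9
  have h11 : Pfun m x' = (m.factorial : ℝ) * ((-1 : ℝ) ^ m * cPS m x') := by
    rw [Pfun_eq_cPS]; ring
  rw [h11, ← h9]
  simp only [hg]
  have hne := factorial_cast_ne m
  field_simp

/-! ### Smoothness -/

lemma contDiff_extVec (p q : ℕ) :
    ContDiff ℝ (⊤ : ℕ∞) (fun x : Fin p → ℝ => extVec p x q) := by
  unfold extVec
  by_cases h : 1 ≤ q ∧ q ≤ p
  · simp only [dif_pos h]
    exact contDiff_apply ℝ ℝ (⟨q - 1, by omega⟩ : Fin p)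
  · simp only [dif_neg h]
    exact contDiff_const

lemma contDiff_Pcomp (p m : ℕ) :
    ContDiff ℝ (⊤ : ℕ∞) (fun x : Fin p → ℝ => Pfun m (extVec p x)) := by
  have he : (fun x : Fin p → ℝ => Pfun m (extVec p x))
      = fun x : Fin p → ℝ => ∑ α ∈ PF m,
        (-1 : ℝ) ^ (m - pnorm α) * ((m.factorial : ℝ) / (pfact α : ℝ)) *
          ∏ q ∈ α.support, (extVec p x q) ^ (α q) := by
    funext x; exact Pfun_eq_sum m (extVec p x)
  rw [he]
  refine ContDiff.sum fun α _ => ContDiff.mul contDiff_const ?_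
  exact contDiff_prod fun q _ => (contDiff_extVec p q).pow _

lemma contDiff_Qcomp (p m : ℕ) :
    ContDiff ℝ (⊤ : ℕ∞) (fun x : Fin p → ℝ => Qfun m (extVec p x)) := by
  have he : (fun x : Fin p → ℝ => Qfun m (extVec p x))
      = fun x : Fin p → ℝ => ∑ α ∈ PF m,
        (-1 : ℝ) ^ (m - pnorm α) / (pnorm α : ℝ) *
          (((pnorm α).factorial : ℝ) / (pfact α : ℝ)) *
          ∏ q ∈ α.support, (extVec p x q / (q.factorial : ℝ)) ^ (α q) := by
    funext x; exact Qfun_eq_sum m (extVec p x)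
  rw [he]
  refine ContDiff.sum fun α _ => ContDiff.mul contDiff_const ?_
  exact contDiff_prod fun q _ => ((contDiff_extVec p q).div_const _).pow _

lemma contDiff_Phi (p : ℕ) : ContDiff ℝ (⊤ : ℕ∞) (Phi p) :=
  contDiff_pi.2 fun i => contDiff_Pcomp p (i.1 + 1)

lemma contDiff_Psi (p : ℕ) : ContDiff ℝ (⊤ : ℕ∞) (Psi p) :=
  contDiff_pi.2 fun i => contDiff_Qcomp p (i.1 + 1)

/-! ### Left and right inverse -/

lemma extVec_Phi (p : ℕ) (x : Fin p → ℝ) (q : ℕ) (h1 : 1 ≤ q) (hq : q ≤ p) :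
    extVec p (Phi p x) q = Pfun q (extVec p x) := by
  rw [extVec]
  rw [dif_pos ⟨h1, hq⟩]
  show Pfun ((q - 1) + 1) (extVec p x) = Pfun q (extVec p x)
  congr 1
  omega

lemma extVec_Psi (p : ℕ) (x : Fin p → ℝ) (q : ℕ) (h1 : 1 ≤ q) (hq : q ≤ p) :
    extVec p (Psi p x) q = Qfun q (extVec p x) := by
  rw [extVec]
  rw [dif_pos ⟨h1, hq⟩]
  show Qfun ((q - 1) + 1) (extVec p x) = Qfun q (extVec p x)
  congr 1
  omega

lemma leftInv (p : ℕ) : Function.LeftInverse (Psi p) (Phi p) := by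
  intro x
  funext i
  show Qfun (i.1 + 1) (extVec p (Phi p x)) = x i
  have h1 : Qfun (i.1 + 1) (extVec p (Phi p x))
      = Qfun (i.1 + 1) (fun j => Pfun j (extVec p x)) := by
    refine Qfun_congr _ fun q hq1 hq2 => ?_
    exact extVec_Phi p x q hq1 (by omega)
  rw [h1, QP_inverse _ _ (by omega)]
  rw [extVec, dif_pos ⟨by omega, by omega⟩]
  have hfin : (⟨i.1 + 1 - 1, by omega⟩ : Fin p) = i := Fin.ext (by simp)
  rw [hfin]

lemma rightInv (p : ℕ) : Function.RightInverse (Psi p) (Phi p) := by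
  intro x
  funext i
  show Pfun (i.1 + 1) (extVec p (Psi p x)) = x i
  have h1 : Pfun (i.1 + 1) (extVec p (Psi p x))
      = Pfun (i.1 + 1) (fun j => Qfun j (extVec p x)) := by
    refine Pfun_congr _ fun q hq1 hq2 => ?_
    exact extVec_Psi p x q hq1 (by omega)
  rw [h1, PQ_inverse _ _ (by omega)]
  rw [extVec, dif_pos ⟨by omega, by omega⟩]
  have hfin : (⟨i.1 + 1 - 1, by omega⟩ : Fin p) = i := Fin.ext (by simp)
  rw [hfin]

/-! ### the linear term in the top variable -/

lemma single_mem_PF {m : ℕ} (hm : 1 ≤ m) : Finsupp.single m 1 ∈ PF m := by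
  rw [mem_PF]
  constructor
  · rw [Finsupp.single_apply, if_neg (by omega)]
  · rw [Finsupp.sum_single_index (by simp)]
    omega

lemma eq_single_of_top {m : ℕ} (hm : 1 ≤ m) {α : ℕ →₀ ℕ} (hα : α ∈ PF m)
    (h : α m ≠ 0) : α = Finsupp.single m 1 := by
  have hm' : m ∈ α.support := Finsupp.mem_support_iff.2 h
  have h2 : α - Finsupp.single m 1 ∈ PF (m - m) := sub_single_mem_PF hα hm'
  rw [Nat.sub_self, PF_zero, Finset.mem_singleton] at h2
  have hle : Finsupp.single m 1 ≤ α := by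
    rw [Finsupp.single_le_iff]; omega
  have := tsub_add_cancel_of_le hle
  rw [h2, zero_add] at this
  exact this.symm

lemma Pfun_top_linear {m : ℕ} (hm : 1 ≤ m) (z z' : ℕ → ℝ) (t : ℝ)
    (hz : ∀ q, q ≠ m → z' q = z q) (hm' : z' m = z m + t) :
    Pfun m z' = Pfun m z + (-1 : ℝ) ^ (m - 1) * (m.factorial : ℝ) * t := by
  have hsingle : ∀ w : ℕ → ℝ,
      (-1 : ℝ) ^ (m - pnorm (Finsupp.single m 1)) *
        ((m.factorial : ℝ) / (pfact (Finsupp.single m 1) : ℝ)) *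
        (Finsupp.single m 1).prod (fun q e => w q ^ e)
      = (-1 : ℝ) ^ (m - 1) * (m.factorial : ℝ) * w m := by
    intro w
    have h1 : pnorm (Finsupp.single m 1) = 1 := by
      rw [pnorm, Finsupp.sum_single_index rfl]
    have h2 : pfact (Finsupp.single m 1) = 1 := by
      rw [pfact, Finsupp.prod_single_index rfl]
      rfl
    have h3 : (Finsupp.single m 1).prod (fun q e => w q ^ e) = w m := by
      rw [Finsupp.prod_single_index (h := fun q e => w q ^ e) (pow_zero _), pow_one]
    rw [h1, h2, h3]
    norm_num
  rw [Pfun_eq_sum, Pfun_eq_sum,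
    ← Finset.add_sum_erase _ _ (single_mem_PF hm),
    ← Finset.add_sum_erase _ _ (single_mem_PF hm)]
  have h4 : ∀ α ∈ (PF m).erase (Finsupp.single m 1),
      (-1 : ℝ) ^ (m - pnorm α) * ((m.factorial : ℝ) / (pfact α : ℝ)) *
        α.prod (fun q e => z' q ^ e)
      = (-1 : ℝ) ^ (m - pnorm α) * ((m.factorial : ℝ) / (pfact α : ℝ)) *
        α.prod (fun q e => z q ^ e) := by
    intro α hα
    obtain ⟨hne, hα'⟩ := Finset.mem_erase.1 hα
    congr 1
    refine Finset.prod_congr rfl fun q hq => ?_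
    have hqm : q ≠ m := by
      intro hqe
      exact hne (eq_single_of_top hm hα' (hqe ▸ Finsupp.mem_support_iff.1 hq))
    simp only [hz q hqm]
  rw [Finset.sum_congr rfl h4, hsingle z', hsingle z, hm']
  ring

/-! ### derivative of Phi -/

lemma Phi_line_const (p : ℕ) (x : Fin p → ℝ) (i j : Fin p) (hij : (i : ℕ) < (j : ℕ))
    (t : ℝ) : Phi p (x + t • (Pi.single j 1 : Fin p → ℝ)) i = Phi p x i := by
  show Pfun (i.1 + 1) (extVec p (x + t • (Pi.single j 1 : Fin p → ℝ))) = Pfun (i.1 + 1) (extVec p x)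
  refine Pfun_congr _ fun q hq1 hq2 => ?_
  rw [extVec, extVec]
  by_cases h : 1 ≤ q ∧ q ≤ p
  · rw [dif_pos h, dif_pos h]
    have hne : (⟨q - 1, by omega⟩ : Fin p) ≠ j := by
      intro he
      have := congrArg Fin.val he
      simp only at this
      omega
    simp [Pi.single_eq_of_ne hne]
  · rw [dif_neg h, dif_neg h]

lemma Phi_line_diag (p : ℕ) (x : Fin p → ℝ) (i : Fin p) (t : ℝ) :
    Phi p (x + t • (Pi.single i 1 : Fin p → ℝ)) i
      = Phi p x i + (-1 : ℝ) ^ (i : ℕ) * ((i.1 + 1).factorial : ℝ) * t := by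
  show Pfun (i.1 + 1) (extVec p (x + t • (Pi.single i 1 : Fin p → ℝ)))
      = Pfun (i.1 + 1) (extVec p x) + (-1 : ℝ) ^ (i : ℕ) * ((i.1 + 1).factorial : ℝ) * t
  have key := Pfun_top_linear (m := i.1 + 1) (by omega)
    (extVec p x) (extVec p (x + t • (Pi.single i 1 : Fin p → ℝ))) t ?_ ?_
  · rw [key]
    norm_num
  · intro q hq
    rw [extVec, extVec]
    by_cases h : 1 ≤ q ∧ q ≤ p
    · rw [dif_pos h, dif_pos h]
      have hne : (⟨q - 1, by omega⟩ : Fin p) ≠ i := by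
        intro he
        have := congrArg Fin.val he
        simp only at this
        omega
      simp [Pi.single_eq_of_ne hne]
    · rw [dif_neg h, dif_neg h]
  · rw [extVec, extVec, dif_pos ⟨by omega, by omega⟩, dif_pos ⟨by omega, by omega⟩]
    have hi : (⟨i.1 + 1 - 1, by omega⟩ : Fin p) = i := by ext; simp
    rw [hi]
    simp

lemma phi_component_diff (p : ℕ) (i : Fin p) :
    Differentiable ℝ (fun x : Fin p → ℝ => Phi p x i) :=
  ((contDiff_Pcomp p (i.1 + 1)).differentiable (by norm_num))

lemma fderiv_Phi_apply (p : ℕ) (x : Fin p → ℝ) (i j : Fin p) :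
    fderiv ℝ (Phi p) x ((Pi.single j 1 : Fin p → ℝ)) i
      = deriv (fun t : ℝ => Phi p (x + t • (Pi.single j 1 : Fin p → ℝ)) i) 0 := by
  have hd : ∀ k : Fin p, DifferentiableAt ℝ (fun x : Fin p → ℝ => Phi p x k) x :=
    fun k => (phi_component_diff p k) x
  have h1 : fderiv ℝ (Phi p) x = ContinuousLinearMap.pi
      (fun k => fderiv ℝ (fun x : Fin p → ℝ => Phi p x k) x) := fderiv_pi hd
  rw [h1, ContinuousLinearMap.pi_apply]
  have h2 := (hd i).lineDeriv_eq_fderiv (v := (Pi.single j 1 : Fin p → ℝ))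
  rw [← h2]
  rfl

lemma fderiv_Phi_zero (p : ℕ) (x : Fin p → ℝ) (i j : Fin p) (hij : (i : ℕ) < (j : ℕ)) :
    fderiv ℝ (Phi p) x ((Pi.single j 1 : Fin p → ℝ)) i = 0 := by
  rw [fderiv_Phi_apply]
  have he : (fun t : ℝ => Phi p (x + t • (Pi.single j 1 : Fin p → ℝ)) i) = fun _ => Phi p x i :=
    funext fun t => Phi_line_const p x i j hij t
  rw [he, deriv_const]

lemma fderiv_Phi_diag (p : ℕ) (x : Fin p → ℝ) (i : Fin p) :
    fderiv ℝ (Phi p) x ((Pi.single i 1 : Fin p → ℝ)) i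
      = (-1 : ℝ) ^ (i : ℕ) * ((i.1 + 1).factorial : ℝ) := by
  rw [fderiv_Phi_apply]
  have he : (fun t : ℝ => Phi p (x + t • (Pi.single i 1 : Fin p → ℝ)) i)
      = fun t => Phi p x i + ((-1 : ℝ) ^ (i : ℕ) * ((i.1 + 1).factorial : ℝ)) * t :=
    funext fun t => Phi_line_diag p x i t
  rw [he]
  have hd : HasDerivAt (fun t : ℝ => Phi p x i +
      ((-1 : ℝ) ^ (i : ℕ) * ((i.1 + 1).factorial : ℝ)) * t)
      ((-1 : ℝ) ^ (i : ℕ) * ((i.1 + 1).factorial : ℝ)) 0 := by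
    simpa using ((hasDerivAt_id (0:ℝ)).const_mul
      ((-1 : ℝ) ^ (i : ℕ) * ((i.1 + 1).factorial : ℝ))).const_add (Phi p x i)
  exact hd.deriv

lemma prod_fact_shift (p : ℕ) :
    ∏ q ∈ Finset.Icc 1 p, ((q.factorial : ℝ)) = ∏ i ∈ Finset.range p, (((i + 1).factorial : ℝ)) := by
  induction p with
  | zero => simp
  | succ n ih =>
    rw [Finset.prod_range_succ, ← ih, Finset.prod_Icc_succ_top (by omega)]

lemma det_Phi (p : ℕ) (x : Fin p → ℝ) :
    |(fderiv ℝ (Phi p) x).det| = ∏ q ∈ Finset.Icc 1 p, (q.factorial : ℝ) := by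
  have hdet : (fderiv ℝ (Phi p) x).det
      = Matrix.det (LinearMap.toMatrix' ((fderiv ℝ (Phi p) x) : (Fin p → ℝ) →ₗ[ℝ] (Fin p → ℝ))) := by
    rw [LinearMap.det_toMatrix']
  set M := LinearMap.toMatrix' ((fderiv ℝ (Phi p) x) : (Fin p → ℝ) →ₗ[ℝ] (Fin p → ℝ)) with hM
  have hMij : ∀ i j, M i j = fderiv ℝ (Phi p) x ((Pi.single j 1 : Fin p → ℝ)) i := by
    intro i j
    rw [hM, LinearMap.toMatrix'_apply]
    have : (fun j' => if j' = j then (1:ℝ) else 0) = (Pi.single j 1 : Fin p → ℝ) := by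
      funext j'
      rw [Pi.single_apply]
    rfl
  have htri : M.BlockTriangular OrderDual.toDual := by
    intro i j hij
    rw [hMij]
    exact fderiv_Phi_zero p x i j hij
  rw [hdet, Matrix.det_of_lowerTriangular M htri]
  have hdiag : ∀ i : Fin p, M i i = (-1 : ℝ) ^ (i : ℕ) * ((i.1 + 1).factorial : ℝ) := by
    intro i
    rw [hMij]
    exact fderiv_Phi_diag p x i
  rw [Finset.prod_congr rfl (fun i _ => hdiag i)]
  rw [Finset.abs_prod]
  have habs : ∀ i : Fin p, |(-1 : ℝ) ^ (i : ℕ) * ((i.1 + 1).factorial : ℝ)|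
      = ((i.1 + 1).factorial : ℝ) := by
    intro i
    rw [abs_mul, abs_pow, abs_neg, abs_one, one_pow, one_mul,
      abs_of_pos (by positivity)]
  rw [Finset.prod_congr rfl (fun i _ => habs i), prod_fact_shift]
  exact Fin.prod_univ_eq_prod_range (fun i => (((i + 1).factorial : ℕ) : ℝ)) p


theorem statement_9 (p : ℕ) (hp : 2 ≤ p) :
    ContDiff ℝ (⊤ : ℕ∞) (Phi p) ∧ ContDiff ℝ (⊤ : ℕ∞) (Psi p) ∧
    Function.Bijective (Phi p) ∧
    Function.LeftInverse (Psi p) (Phi p) ∧ Function.RightInverse (Psi p) (Phi p) ∧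
    ∀ x : Fin p → ℝ,
      |(fderiv ℝ (Phi p) x).det| = ∏ q ∈ Finset.Icc 1 p, (q.factorial : ℝ) :=
  ⟨contDiff_Phi p, contDiff_Psi p, ⟨(leftInv p).injective, (rightInv p).surjective⟩,
    leftInv p, rightInv p, det_Phi p⟩

end Stmt9
end
end

section
/- For every integer p ≥ 1, the coefficient A_p = Q_p(1, 1/2!, …, 1/p!) is strictly positive. -/
noncomputable section

namespace Stmt11

/-- The set `𝒫(p)` of partitions of `p`, encoded as finitely supported functions
`α : ℕ →₀ ℕ` with `α 0 = 0` and `Σ_k k·α_k = p` (`α_k` is the number of parts equal to `k`). -/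
def partitions (p : ℕ) : Set (ℕ →₀ ℕ) :=
  {α | α 0 = 0 ∧ (α.sum fun k e => k * e) = p}

/-- `‖α‖ = Σ_k α_k`, the number of parts. -/
def pnorm (α : ℕ →₀ ℕ) : ℕ := α.sum fun _ e => e

/-- `α! = ∏_k α_k!`. -/
def pfact (α : ℕ →₀ ℕ) : ℕ := α.prod fun _ e => e.factorial

/-- The polynomial (function) `P_p(X₁,…,X_p) = Σ_{α∈𝒫(p)} (−1)^{p−‖α‖} (p!/α!) ∏_q X_q^{α_q}`. -/
def Pfun (p : ℕ) (x : ℕ → ℝ) : ℝ :=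
  ∑' α : partitions p,
    (-1 : ℝ) ^ (p - pnorm α.1) * ((p.factorial : ℝ) / (pfact α.1 : ℝ)) *
      α.1.prod fun q e => x q ^ e

/-- The polynomial (function)
`Q_p(X₁,…,X_p) = Σ_{α∈𝒫(p)} ((−1)^{p−‖α‖}/‖α‖) (‖α‖!/α!) ∏_q (X_q/q!)^{α_q}`. -/
def Qfun (p : ℕ) (x : ℕ → ℝ) : ℝ :=
  ∑' α : partitions p,
    (-1 : ℝ) ^ (p - pnorm α.1) / (pnorm α.1 : ℝ) *
      (((pnorm α.1).factorial : ℝ) / (pfact α.1 : ℝ)) *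
      α.1.prod fun q e => (x q / (q.factorial : ℝ)) ^ e

/-- `A_p = Q_p(1, 1/2!, …, 1/p!)`. -/
def Acoef (p : ℕ) : ℝ := Qfun p fun q => ((q.factorial : ℝ))⁻¹

/-! ### Finite set of partitions -/

open scoped Classical in
/-- The partitions of `p` as a `Finset`. -/
def PF (p : ℕ) : Finset (ℕ →₀ ℕ) :=
  (Finset.Iic (Finsupp.indicator (Finset.Icc 1 p) fun _ _ => p)).filter
    (fun α => α 0 = 0 ∧ (α.sum fun k e => k * e) = p)

lemma weight_le {p : ℕ} {α : ℕ →₀ ℕ} (h0 : α 0 = 0)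
    (hw : (α.sum fun k e => k * e) = p) {i : ℕ} (hi : i ∈ α.support) :
    1 ≤ i ∧ i * α i ≤ p := by
  have hi0 : i ≠ 0 := by
    intro h; rw [h] at hi; exact (Finsupp.mem_support_iff.1 hi) h0
  refine ⟨Nat.one_le_iff_ne_zero.2 hi0, ?_⟩
  rw [← hw]
  exact Finset.single_le_sum (f := fun k => k * α k) (fun _ _ => Nat.zero_le _) hi

lemma mem_PF {p : ℕ} {α : ℕ →₀ ℕ} :
    α ∈ PF p ↔ α 0 = 0 ∧ (α.sum fun k e => k * e) = p := by
  classical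
  constructor
  · intro h
    exact (Finset.mem_filter.1 h).2
  · intro h
    refine Finset.mem_filter.2 ⟨Finset.mem_Iic.2 ?_, h⟩
    rw [Finsupp.le_def]
    intro i
    rcases Nat.eq_zero_or_pos (α i) with hz | hz
    · simp [hz]
    · have hi : i ∈ α.support := Finsupp.mem_support_iff.2 hz.ne'
      obtain ⟨h1, h2⟩ := weight_le h.1 h.2 hi
      have hip : i ≤ p := le_trans (Nat.le_mul_of_pos_right i hz) h2
      have hαp : α i ≤ p := le_trans (Nat.le_mul_of_pos_left (α i) h1) h2
      rw [Finsupp.indicator_apply, dif_pos (Finset.mem_Icc.2 ⟨h1, hip⟩)]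
      exact hαp

lemma partitions_eq_PF (p : ℕ) : partitions p = ↑(PF p) := by
  ext α; simp [partitions, mem_PF]

/-! ### basic lemmas -/

lemma pnorm_le {p : ℕ} {α : ℕ →₀ ℕ} (hα : α ∈ PF p) : pnorm α ≤ p := by
  obtain ⟨h0, hw⟩ := mem_PF.1 hα
  calc pnorm α = ∑ i ∈ α.support, α i := rfl
    _ ≤ ∑ i ∈ α.support, i * α i := by
        refine Finset.sum_le_sum fun i hi => ?_
        exact Nat.le_mul_of_pos_left (α i) (weight_le h0 hw hi).1
    _ = p := hw

lemma pnorm_pos {p : ℕ} (hp : 1 ≤ p) {α : ℕ →₀ ℕ} (hα : α ∈ PF p) : 0 < pnorm α := by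
  obtain ⟨h0, hw⟩ := mem_PF.1 hα
  rcases Nat.eq_zero_or_pos (pnorm α) with hn | hn
  · exfalso
    rw [pnorm, Finsupp.sum] at hn
    have hz := Finset.sum_eq_zero_iff.1 hn
    have hZ : α = 0 := by
      ext i
      by_cases hi : i ∈ α.support
      · exact hz i hi
      · exact Finsupp.notMem_support_iff.1 hi
    rw [hZ] at hw
    rw [Finsupp.sum_zero_index] at hw
    omega
  · exact hn

lemma pfact_pos (α : ℕ →₀ ℕ) : 0 < pfact α :=
  Finset.prod_pos fun i _ => Nat.factorial_pos _

lemma single_mem_PF {k : ℕ} (hk : 1 ≤ k) : Finsupp.single k 1 ∈ PF k := by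
  refine mem_PF.2 ⟨?_, ?_⟩
  · rw [Finsupp.single_apply, if_neg (by omega)]
  · rw [Finsupp.sum_single_index (by simp)]; omega

lemma pnorm_single (k : ℕ) : pnorm (Finsupp.single k 1) = 1 := by
  rw [pnorm, Finsupp.sum_single_index]; rfl

lemma pfact_single (k : ℕ) : pfact (Finsupp.single k 1) = 1 := by
  rw [pfact, Finsupp.prod_single_index] <;> rfl

/-- if a partition of `k` has only one part, it is `single k 1` -/
lemma eq_single_of_pnorm_one {k : ℕ} {α : ℕ →₀ ℕ} (hα : α ∈ PF k)
    (h1 : pnorm α = 1) : α = Finsupp.single k 1 := by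
  obtain ⟨h0, hw⟩ := mem_PF.1 hα
  obtain ⟨j, hj⟩ : ∃ j, j ∈ α.support := by
    by_contra h
    push_neg at h
    have hz : pnorm α = 0 := by
      rw [pnorm, Finsupp.sum, Finset.sum_eq_zero]
      intro i hi; exact absurd hi (h i)
    omega
  have hαj : α j = 1 ∧ ∀ i ∈ α.support.erase j, α i = 0 := by
    have hsplit : α j + ∑ i ∈ α.support.erase j, α i = 1 := by
      rw [← h1, pnorm, Finsupp.sum, ← Finset.add_sum_erase _ _ hj]
    have hjpos : 1 ≤ α j := Nat.one_le_iff_ne_zero.2 (Finsupp.mem_support_iff.1 hj)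
    constructor
    · omega
    · intro i hi
      have : ∑ x ∈ α.support.erase j, α x = 0 := by omega
      exact Finset.sum_eq_zero_iff.1 this i hi
  have hall : ∀ i, i ≠ j → α i = 0 := by
    intro i hij
    by_cases hi : i ∈ α.support
    · exact hαj.2 i (Finset.mem_erase.2 ⟨hij, hi⟩)
    · exact Finsupp.notMem_support_iff.1 hi
  have hjk : j = k := by
    rw [Finsupp.sum, Finset.sum_eq_single_of_mem j hj] at hw
    · rw [hαj.1, Nat.mul_one] at hw; exact hw
    · intro i _ hij; rw [hall i hij, Nat.mul_zero]
  subst hjk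
  ext i
  rcases eq_or_ne i j with rfl | hne
  · rw [hαj.1, Finsupp.single_apply, if_pos rfl]
  · rw [hall i hne, Finsupp.single_apply, if_neg (Ne.symm hne)]

/-- parts of a partition with ≥ 2 parts are `< k` -/
lemma part_lt_of_two_le {k : ℕ} {α : ℕ →₀ ℕ} (hα : α ∈ PF k)
    (h2 : 2 ≤ pnorm α) {i : ℕ} (hi : i ∈ α.support) : i < k := by
  obtain ⟨h0, hw⟩ := mem_PF.1 hα
  obtain ⟨h1, hle⟩ := weight_le h0 hw hi
  by_contra h
  push_neg at h
  have hαi : 1 ≤ α i := Nat.one_le_iff_ne_zero.2 (Finsupp.mem_support_iff.1 hi)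
  have hik : i = k := by nlinarith
  subst hik
  have himul : i * α i = i :=
    le_antisymm hle (Nat.le_mul_of_pos_right i (by omega))
  have hα1 : α i = 1 := Nat.eq_of_mul_eq_mul_left h1 (by rw [Nat.mul_one]; exact himul)
  have hsplit : i * α i + ∑ x ∈ α.support.erase i, x * α x = i := by
    rw [Finset.add_sum_erase _ (fun x => x * α x) hi]; exact hw
  have herase : α.support.erase i = ∅ := by
    rw [Finset.eq_empty_iff_forall_notMem]
    intro x hx
    have hxs := (Finset.mem_erase.1 hx).2
    have hx1 := (weight_le h0 hw hxs).1
    have hxα : 1 ≤ α x := Nat.one_le_iff_ne_zero.2 (Finsupp.mem_support_iff.1 hxs)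
    have hx0 := Finset.sum_eq_zero_iff.1
      (show ∑ x ∈ α.support.erase i, x * α x = 0 by omega) x hx
    nlinarith
  have : pnorm α = 1 := by
    rw [pnorm, Finsupp.sum, ← Finset.add_sum_erase _ _ hi, herase, Finset.sum_empty,
      hα1]
    omega
  omega

/-! ### the partition sums -/

def wprod (e : ℕ → ℝ) (α : ℕ →₀ ℕ) : ℝ := α.prod fun q a => (e q) ^ a

def Gterm (e : ℕ → ℝ) (p : ℕ) (α : ℕ →₀ ℕ) : ℝ :=
  (-1 : ℝ) ^ (p - pnorm α) * (((pnorm α - 1).factorial : ℝ) / (pfact α : ℝ)) * wprod e α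

def Gsum (e : ℕ → ℝ) (p : ℕ) : ℝ := ∑ α ∈ PF p, Gterm e p α

lemma wprod_single (e : ℕ → ℝ) (k : ℕ) : wprod e (Finsupp.single k 1) = e k := by
  rw [wprod, Finsupp.prod_single_index] <;> simp

lemma Gterm_single (e : ℕ → ℝ) (k : ℕ) :
    Gterm e k (Finsupp.single k 1) = (-1 : ℝ) ^ (k - 1) * e k := by
  rw [Gterm, pnorm_single, pfact_single, wprod_single]
  simp

/-! ### additivity lemmas for adding one part -/

lemma pnorm_add_single (β : ℕ →₀ ℕ) (i : ℕ) :
    pnorm (β + Finsupp.single i 1) = pnorm β + 1 := by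
  rw [pnorm, pnorm, Finsupp.sum_add_index' (fun _ => rfl) (fun _ _ _ => rfl),
    Finsupp.sum_single_index rfl]

lemma weight_add_single (β : ℕ →₀ ℕ) (i : ℕ) :
    ((β + Finsupp.single i 1).sum fun k e => k * e) = (β.sum fun k e => k * e) + i := by
  rw [Finsupp.sum_add_index' (fun _ => Nat.mul_zero _) (fun a _ _ => Nat.mul_add a _ _),
    Finsupp.sum_single_index (Nat.mul_zero i), Nat.mul_one]

lemma wprod_add_single (e : ℕ → ℝ) (β : ℕ →₀ ℕ) (i : ℕ) :
    wprod e (β + Finsupp.single i 1) = wprod e β * e i := by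
  rw [wprod, wprod, Finsupp.prod_add_index' (fun _ => pow_zero _) (fun a b c => pow_add _ _ _)]
  congr 1
  exact (Finsupp.prod_single_index (h := fun q a => (e q)^a) (pow_zero (e i))).trans (pow_one _)

lemma pfact_add_single (β : ℕ →₀ ℕ) (i : ℕ) :
    pfact (β + Finsupp.single i 1) = (β i + 1) * pfact β := by
  classical
  set α := β + Finsupp.single i 1 with hα
  have hsupp : α.support ⊆ insert i β.support := by
    intro j hj
    rw [Finsupp.mem_support_iff] at hj
    rcases eq_or_ne j i with rfl | hne
    · exact Finset.mem_insert_self _ _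
    · refine Finset.mem_insert_of_mem (Finsupp.mem_support_iff.2 ?_)
      intro hz
      apply hj
      rw [hα, Finsupp.add_apply, hz, Finsupp.single_apply, if_neg (Ne.symm hne)]
      rfl
  have hsuppβ : β.support ⊆ insert i β.support := Finset.subset_insert _ _
  have h1 : pfact α = ∏ j ∈ insert i β.support, (α j).factorial :=
    Finsupp.prod_of_support_subset _ hsupp _ (fun _ _ => rfl)
  have h2 : pfact β = ∏ j ∈ insert i β.support, (β j).factorial :=
    Finsupp.prod_of_support_subset _ hsuppβ _ (fun _ _ => rfl)
  have hij : ∀ j ∈ (insert i β.support).erase i, (α j).factorial = (β j).factorial := by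
    intro j hj
    have hne := (Finset.mem_erase.1 hj).1
    rw [hα, Finsupp.add_apply, Finsupp.single_apply, if_neg (Ne.symm hne), Nat.add_zero]
  have hii : α i = β i + 1 := by
    rw [hα, Finsupp.add_apply, Finsupp.single_apply, if_pos rfl]
  have hmem : i ∈ insert i β.support := Finset.mem_insert_self _ _
  rw [h1, h2, ← Finset.mul_prod_erase _ _ hmem, ← Finset.mul_prod_erase _ _ hmem,
    Finset.prod_congr rfl hij, hii, Nat.factorial_succ]
  ring

/-! ### the weights `1/(q!)^2` and `Acoef = Gsum ee` -/

def ee (q : ℕ) : ℝ := ((q.factorial : ℝ))⁻¹ * ((q.factorial : ℝ))⁻¹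

lemma Acoef_eq {p : ℕ} (hp : 1 ≤ p) : Acoef p = Gsum ee p := by
  have htsum := Finset.tsum_subtype' (PF p)
    (fun α => (-1 : ℝ) ^ (p - pnorm α) / (pnorm α : ℝ) *
      (((pnorm α).factorial : ℝ) / (pfact α : ℝ)) *
      α.prod fun q e => (((q.factorial : ℝ))⁻¹ / (q.factorial : ℝ)) ^ e)
  rw [Acoef, Qfun, partitions_eq_PF p, htsum]
  refine Finset.sum_congr rfl fun α hα => ?_
  have hn : 0 < pnorm α := pnorm_pos hp hα
  have hfac : ((pnorm α).factorial : ℝ) = (pnorm α : ℝ) * (((pnorm α - 1).factorial : ℝ)) := by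
    rw_mod_cast [Nat.mul_factorial_pred hn.ne']
  have hprod : (α.prod fun q e => (((q.factorial : ℝ))⁻¹ / (q.factorial : ℝ)) ^ e)
      = wprod ee α := by
    rw [wprod]
    exact Finsupp.prod_congr fun q _ => by rw [div_eq_mul_inv, ee]
  rw [Gterm, ← hprod, hfac]
  have hn' : (pnorm α : ℝ) ≠ 0 := Nat.cast_ne_zero.2 hn.ne'
  congr 1
  field_simp

/-! ### Newton-type identity -/

def Cc (e : ℕ → ℝ) (k : ℕ) (α : ℕ →₀ ℕ) : ℝ :=
  (-1 : ℝ) ^ (k - pnorm α) * (((pnorm α - 2).factorial : ℝ) / (pfact α : ℝ)) * wprod e α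

def Hh (e : ℕ → ℝ) (k : ℕ) (α : ℕ →₀ ℕ) (i : ℕ) : ℝ :=
  ((k : ℝ) - (i : ℝ)) * (α i : ℝ) * Cc e k α

lemma step_value (e : ℕ → ℝ) {k i : ℕ} (h1 : 1 ≤ i) (hik : i < k)
    {β : ℕ →₀ ℕ} (hβ : β ∈ PF (k - i)) :
    ((-1 : ℝ) ^ i * e i) * (((k - i : ℕ) : ℝ) * Gterm e (k - i) β)
      = -(Hh e k (β + Finsupp.single i 1) i) := by
  have hki : 1 ≤ k - i := by omega
  have hn1 : 1 ≤ pnorm β := pnorm_pos hki hβ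
  have hnle : pnorm β ≤ k - i := pnorm_le hβ
  have hpn : pnorm (β + Finsupp.single i 1) = pnorm β + 1 := pnorm_add_single β i
  have hpf : pfact (β + Finsupp.single i 1) = (β i + 1) * pfact β := pfact_add_single β i
  have hw : wprod e (β + Finsupp.single i 1) = wprod e β * e i := wprod_add_single e β i
  have hαi : ((β + Finsupp.single i 1 : ℕ →₀ ℕ)) i = β i + 1 := by
    rw [Finsupp.add_apply, Finsupp.single_apply, if_pos rfl]
  rw [Hh, Cc, hpn, hpf, hw, hαi, Gterm]
  have hsub2 : pnorm β + 1 - 2 = pnorm β - 1 := by omega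
  rw [hsub2]
  have hsign : (-1 : ℝ) ^ (k - (pnorm β + 1))
      = -((-1 : ℝ) ^ i * (-1 : ℝ) ^ (k - i - pnorm β)) := by
    rw [← pow_add]
    rw [show i + (k - i - pnorm β) = (k - (pnorm β + 1)) + 1 by omega, pow_succ]
    ring
  have hcast : ((k - i : ℕ) : ℝ) = (k : ℝ) - (i : ℝ) := by
    rw [Nat.cast_sub (le_of_lt hik)]
  have hpfβ : ((pfact β : ℕ) : ℝ) ≠ 0 := Nat.cast_ne_zero.2 (pfact_pos β).ne'
  have hβi : ((β i + 1 : ℕ) : ℝ) ≠ 0 := Nat.cast_ne_zero.2 (Nat.succ_ne_zero _)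
  rw [hcast, hsign]
  push_cast
  field_simp

lemma step_reindex (e : ℕ → ℝ) {k i : ℕ} (h1 : 1 ≤ i) (hik : i < k) :
    ((-1 : ℝ) ^ i * e i) * (((k - i : ℕ) : ℝ) * Gsum e (k - i))
      = ∑ α ∈ (PF k).filter (fun α => α i ≠ 0), -(Hh e k α i) := by
  rw [Gsum, Finset.mul_sum, Finset.mul_sum]
  refine Finset.sum_nbij' (fun β => β + Finsupp.single i 1)
    (fun α => α - Finsupp.single i 1) ?_ ?_ ?_ ?_ ?_
  · -- maps into the filter
    intro β hβ
    obtain ⟨h0, hw⟩ := mem_PF.1 hβ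
    refine Finset.mem_filter.2 ⟨mem_PF.2 ⟨?_, ?_⟩, ?_⟩
    · rw [Finsupp.add_apply, h0, Finsupp.single_apply, if_neg (by omega)]
      rfl
    · rw [weight_add_single, hw]; omega
    · rw [Finsupp.add_apply, Finsupp.single_apply, if_pos rfl]; omega
  · -- reverse map
    intro α hα
    obtain ⟨hαP, hαi⟩ := Finset.mem_filter.1 hα
    obtain ⟨h0, hw⟩ := mem_PF.1 hαP
    have hle : Finsupp.single i 1 ≤ α := by
      rw [Finsupp.le_def]
      intro j
      rcases eq_or_ne j i with rfl | hne
      · rw [Finsupp.single_apply, if_pos rfl]; omega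
      · rw [Finsupp.single_apply, if_neg (Ne.symm hne)]; omega
    have hcan : (α - Finsupp.single i 1) + Finsupp.single i 1 = α :=
      tsub_add_cancel_of_le hle
    refine mem_PF.2 ⟨?_, ?_⟩
    · rw [Finsupp.tsub_apply, h0]
      simp
    · have hws := weight_add_single (α - Finsupp.single i 1) i
      rw [hcan, hw] at hws
      omega
  · intro β _
    exact add_tsub_cancel_right _ _
  · intro α hα
    obtain ⟨hαP, hαi⟩ := Finset.mem_filter.1 hα
    have hle : Finsupp.single i 1 ≤ α := by
      rw [Finsupp.le_def]
      intro j
      rcases eq_or_ne j i with rfl | hne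
      · rw [Finsupp.single_apply, if_pos rfl]; omega
      · rw [Finsupp.single_apply, if_neg (Ne.symm hne)]; omega
    exact tsub_add_cancel_of_le hle
  · intro β hβ
    exact step_value e h1 hik hβ

lemma inner_eval (e : ℕ → ℝ) {k : ℕ} (hk : 1 ≤ k) {α : ℕ →₀ ℕ} (hα : α ∈ PF k) :
    ∑ i ∈ (Finset.Ico 1 k).filter (fun i => α i ≠ 0), -(Hh e k α i)
      = -((k : ℝ) * Gterm e k α)
        + (if α = Finsupp.single k 1 then (k : ℝ) * ((-1 : ℝ) ^ (k - 1) * e k) else 0) := by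
  have hn : 0 < pnorm α := pnorm_pos hk hα
  rcases eq_or_lt_of_le (Nat.succ_le_of_lt hn) with h1 | h2
  · -- pnorm α = 1, α = single k 1
    have hsing : α = Finsupp.single k 1 := eq_single_of_pnorm_one hα h1.symm
    have hempty : (Finset.Ico 1 k).filter (fun i => α i ≠ 0) = ∅ := by
      rw [Finset.eq_empty_iff_forall_notMem]
      intro i hi
      obtain ⟨hiIco, hine⟩ := Finset.mem_filter.1 hi
      rw [hsing, Finsupp.single_apply] at hine
      rcases eq_or_ne k i with rfl | hne
      · exact absurd (Finset.mem_Ico.1 hiIco).2 (lt_irrefl _)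
      · rw [if_neg hne] at hine; exact hine rfl
    rw [hempty, Finset.sum_empty, if_pos hsing, hsing, Gterm_single]
    ring
  · -- pnorm α ≥ 2
    have h2' : 2 ≤ pnorm α := h2
    have hne : α ≠ Finsupp.single k 1 := by
      intro h
      rw [h, pnorm_single] at h2'
      omega
    rw [if_neg hne, add_zero]
    have hfilter : (Finset.Ico 1 k).filter (fun i => α i ≠ 0) = α.support := by
      ext i
      simp only [Finset.mem_filter, Finset.mem_Ico, Finsupp.mem_support_iff]
      constructor
      · rintro ⟨_, h⟩; exact h
      · intro h
        have hi : i ∈ α.support := Finsupp.mem_support_iff.2 h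
        obtain ⟨hi1, _⟩ := weight_le (mem_PF.1 hα).1 (mem_PF.1 hα).2 hi
        exact ⟨⟨hi1, part_lt_of_two_le hα h2' hi⟩, h⟩
    obtain ⟨h0, hw⟩ := mem_PF.1 hα
    have hsumA : ∑ i ∈ α.support, (α i : ℝ) = (pnorm α : ℝ) := by
      rw [pnorm, Finsupp.sum]
      push_cast
      rfl
    have hsumB : ∑ i ∈ α.support, (i : ℝ) * (α i : ℝ) = (k : ℝ) := by
      rw [← hw, Finsupp.sum]
      push_cast
      rfl
    rw [hfilter]
    have hHsum : ∑ i ∈ α.support, Hh e k α i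
        = ((k : ℝ) * (pnorm α : ℝ) - (k : ℝ)) * Cc e k α := by
      rw [show (∑ i ∈ α.support, Hh e k α i)
          = (∑ i ∈ α.support, ((k : ℝ) - (i : ℝ)) * (α i : ℝ)) * Cc e k α by
        rw [Finset.sum_mul]; rfl]
      congr 1
      have hkey : (∑ i ∈ α.support, ((k : ℝ) - (i : ℝ)) * (α i : ℝ))
          = (k : ℝ) * (∑ i ∈ α.support, (α i : ℝ))
            - ∑ i ∈ α.support, (i : ℝ) * (α i : ℝ) := by
        rw [Finset.mul_sum, ← Finset.sum_sub_distrib]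
        exact Finset.sum_congr rfl fun i _ => by ring
      rw [hkey, hsumA, hsumB]
    have hsplit : ∑ i ∈ α.support, -(Hh e k α i)
        = -(((k : ℝ) * (pnorm α : ℝ) - (k : ℝ)) * Cc e k α) := by
      rw [← hHsum, Finset.sum_neg_distrib]
    rw [hsplit, Cc, Gterm]
    have hfac : ((pnorm α - 1).factorial : ℝ)
        = ((pnorm α : ℝ) - 1) * ((pnorm α - 2).factorial : ℝ) := by
      have h3 : 0 < pnorm α - 1 := by omega
      have hmf := Nat.mul_factorial_pred h3.ne'
      rw [show pnorm α - 1 - 1 = pnorm α - 2 by omega] at hmf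
      rw [← hmf]
      push_cast [Nat.cast_sub hn]
      ring
    rw [hfac]
    have hpf : ((pfact α : ℕ) : ℝ) ≠ 0 := Nat.cast_ne_zero.2 (pfact_pos α).ne'
    field_simp

lemma newton (e : ℕ → ℝ) (he : e 0 = 1) {k : ℕ} (hk : 1 ≤ k) :
    ∑ i ∈ Finset.range k, ((-1 : ℝ) ^ i * e i) * (((k - i : ℕ) : ℝ) * Gsum e (k - i))
      = -((-1 : ℝ) ^ k * e k) * (k : ℝ) := by
  rw [Finset.range_eq_Ico, Finset.sum_eq_sum_Ico_succ_bot (by omega : 0 < k)]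
  have h0term : ((-1 : ℝ) ^ 0 * e 0) * (((k - 0 : ℕ) : ℝ) * Gsum e (k - 0))
      = (k : ℝ) * Gsum e k := by
    simp [he]
  rw [h0term]
  have hmid : ∑ i ∈ Finset.Ico 1 k, ((-1 : ℝ) ^ i * e i) * (((k - i : ℕ) : ℝ) * Gsum e (k - i))
      = ∑ i ∈ Finset.Ico 1 k, ∑ α ∈ (PF k).filter (fun α => α i ≠ 0), -(Hh e k α i) := by
    refine Finset.sum_congr rfl fun i hi => ?_
    obtain ⟨hi1, hik⟩ := Finset.mem_Ico.1 hi
    exact step_reindex e hi1 hik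
  rw [hmid]
  have hswap : ∑ i ∈ Finset.Ico 1 k, ∑ α ∈ (PF k).filter (fun α => α i ≠ 0), -(Hh e k α i)
      = ∑ α ∈ PF k, ∑ i ∈ (Finset.Ico 1 k).filter (fun i => α i ≠ 0), -(Hh e k α i) := by
    calc ∑ i ∈ Finset.Ico 1 k, ∑ α ∈ (PF k).filter (fun α => α i ≠ 0), -(Hh e k α i)
        = ∑ i ∈ Finset.Ico 1 k, ∑ α ∈ PF k,
            (if α i ≠ 0 then -(Hh e k α i) else 0) :=
          Finset.sum_congr rfl fun i _ => Finset.sum_filter _ _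
      _ = ∑ α ∈ PF k, ∑ i ∈ Finset.Ico 1 k,
            (if α i ≠ 0 then -(Hh e k α i) else 0) := Finset.sum_comm
      _ = ∑ α ∈ PF k, ∑ i ∈ (Finset.Ico 1 k).filter (fun i => α i ≠ 0), -(Hh e k α i) :=
          Finset.sum_congr rfl fun α _ => (Finset.sum_filter _ _).symm
  rw [hswap]
  have hinner : ∑ α ∈ PF k, ∑ i ∈ (Finset.Ico 1 k).filter (fun i => α i ≠ 0), -(Hh e k α i)
      = ∑ α ∈ PF k, (-((k : ℝ) * Gterm e k α)
          + (if α = Finsupp.single k 1 then (k : ℝ) * ((-1 : ℝ) ^ (k - 1) * e k) else 0)) :=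
    Finset.sum_congr rfl fun α hα => inner_eval e hk hα
  rw [hinner, Finset.sum_add_distrib]
  have hA : ∑ α ∈ PF k, -((k : ℝ) * Gterm e k α) = -((k : ℝ) * Gsum e k) := by
    rw [Finset.sum_neg_distrib, ← Finset.mul_sum, Gsum]
  have hB : ∑ α ∈ PF k,
      (if α = Finsupp.single k 1 then (k : ℝ) * ((-1 : ℝ) ^ (k - 1) * e k) else 0)
      = (k : ℝ) * ((-1 : ℝ) ^ (k - 1) * e k) := by
    rw [Finset.sum_ite_eq' (PF k) (Finsupp.single k 1)
      (fun _ => (k : ℝ) * ((-1 : ℝ) ^ (k - 1) * e k)), if_pos (single_mem_PF hk)]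
  rw [hA, hB]
  have hsgn : (-1 : ℝ) ^ k = -(-1 : ℝ) ^ (k - 1) := by
    conv_lhs => rw [show k = (k - 1) + 1 by omega]
    rw [pow_succ]
    ring
  rw [hsgn]
  ring

/-! ### power series -/

def Yps : PowerSeries ℝ := PowerSeries.mk fun n => (-1 : ℝ) ^ n * ee n

def Dps : PowerSeries ℝ := PowerSeries.mk fun n => (((n + 1 : ℕ)) : ℝ) * Gsum ee (n + 1)

lemma ee_zero : ee 0 = 1 := by simp [ee]

lemma ee_succ (n : ℕ) : (((n + 1 : ℕ)) : ℝ) * (((n + 1 : ℕ)) : ℝ) * ee (n + 1) = ee n := by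
  rw [ee, ee]
  have h : ((n + 1).factorial : ℝ) = (((n + 1 : ℕ)) : ℝ) * (n.factorial : ℝ) := by
    exact_mod_cast Nat.factorial_succ n
  have h1 : (((n + 1 : ℕ)) : ℝ) ≠ 0 := Nat.cast_ne_zero.2 (Nat.succ_ne_zero n)
  have h2 : ((n.factorial : ℕ) : ℝ) ≠ 0 := Nat.cast_ne_zero.2 (Nat.factorial_pos n).ne'
  rw [h]
  field_simp

lemma coeff_dFun (f : PowerSeries ℝ) (n : ℕ) :
    PowerSeries.coeff n f.derivativeFun = PowerSeries.coeff (n + 1) f * (n + 1) :=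
  PowerSeries.coeff_derivative f n

lemma newtonPS : Yps * Dps = -(Yps.derivativeFun) := by
  ext n
  rw [PowerSeries.coeff_mul, map_neg, coeff_dFun,
    Finset.Nat.sum_antidiagonal_eq_sum_range_succ_mk]
  simp only [Yps, Dps, PowerSeries.coeff_mk]
  have hstep : ∑ i ∈ Finset.range (n + 1),
      (-1 : ℝ) ^ i * ee i * ((((n - i) + 1 : ℕ) : ℝ) * Gsum ee ((n - i) + 1))
      = ∑ i ∈ Finset.range (n + 1),
      ((-1 : ℝ) ^ i * ee i) * ((((n + 1) - i : ℕ) : ℝ) * Gsum ee ((n + 1) - i)) := by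
    refine Finset.sum_congr rfl fun i hi => ?_
    have hi' : i ≤ n := Nat.lt_succ_iff.1 (Finset.mem_range.1 hi)
    rw [show n - i + 1 = (n + 1) - i by omega]
  rw [hstep, newton ee ee_zero (Nat.succ_le_succ (Nat.zero_le n))]
  push_cast
  simp only [Nat.succ_eq_add_one, Nat.add_comm 1 n]
  ring

lemma odePS : PowerSeries.X * (Yps.derivativeFun.derivativeFun)
    + Yps.derivativeFun + Yps = 0 := by
  ext n
  rw [map_add, map_add, map_zero]
  cases n with
  | zero =>
    rw [PowerSeries.coeff_zero_X_mul, coeff_dFun, Yps,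
      PowerSeries.coeff_mk, PowerSeries.coeff_mk]
    norm_num [ee]
  | succ n =>
    simp only [PowerSeries.coeff_succ_X_mul, coeff_dFun, Yps,
      PowerSeries.coeff_mk]
    have hee := ee_succ (n + 1)
    have hs : (-1 : ℝ) ^ (n + 1 + 1) = -(-1 : ℝ) ^ (n + 1) := by
      rw [pow_succ]; ring
    rw [hs]
    push_cast at hee ⊢
    linear_combination (-(-1 : ℝ) ^ (n + 1)) * hee

lemma Yps_ne : Yps ≠ 0 := by
  intro h
  have hc := congrArg (PowerSeries.constantCoeff) h
  rw [Yps] at hc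
  rw [PowerSeries.constantCoeff_mk] at hc
  rw [map_zero] at hc
  norm_num [ee] at hc

lemma mainPS : PowerSeries.X * Dps.derivativeFun + Dps
    - PowerSeries.X * (Dps * Dps) = 1 := by
  have ha : Yps * Dps = -(Yps.derivativeFun) := newtonPS
  have hneg : PowerSeries.derivativeFun (-(Yps.derivativeFun))
      = -(Yps.derivativeFun.derivativeFun) := by
    ext n
    simp only [coeff_dFun, map_neg]
    ring
  have hb : Yps.derivativeFun * Dps + Yps * Dps.derivativeFun
      = -(Yps.derivativeFun.derivativeFun) := by
    have hd := congrArg PowerSeries.derivativeFun ha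
    rw [PowerSeries.derivativeFun_mul, hneg, smul_eq_mul, smul_eq_mul] at hd
    linear_combination hd
  have hc := odePS
  apply mul_left_cancel₀ Yps_ne
  rw [mul_one]
  linear_combination PowerSeries.X * hb + (1 - PowerSeries.X * Dps) * ha - hc

lemma kishore {k : ℕ} (hk : 2 ≤ k) :
    (k : ℝ) * ((k : ℝ) * Gsum ee k)
      = ∑ a ∈ Finset.Ico 1 k, ((a : ℝ) * Gsum ee a) * (((k - a : ℕ) : ℝ) * Gsum ee (k - a)) := by
  have h := congrArg (PowerSeries.coeff (k - 1)) mainPS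
  rw [map_sub, map_add] at h
  obtain ⟨m, hm⟩ : ∃ m, k - 1 = m + 1 := ⟨k - 2, by omega⟩
  rw [hm, PowerSeries.coeff_succ_X_mul, PowerSeries.coeff_succ_X_mul,
    coeff_dFun, PowerSeries.coeff_one, if_neg (Nat.succ_ne_zero m),
    PowerSeries.coeff_mul, Finset.Nat.sum_antidiagonal_eq_sum_range_succ_mk] at h
  rw [Dps] at h
  simp only [PowerSeries.coeff_mk] at h
  have hk2 : k = m + 2 := by omega
  subst hk2
  rw [Finset.sum_Ico_eq_sum_range]
  rw [show m + 2 - 1 = m + 1 by omega]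
  have hsum : ∑ i ∈ Finset.range (m + 1),
        ((((1 + i) : ℕ) : ℝ) * Gsum ee (1 + i))
          * ((((m + 2 - (1 + i)) : ℕ) : ℝ) * Gsum ee (m + 2 - (1 + i)))
      = ∑ i ∈ Finset.range (m + 1),
        ((((i + 1) : ℕ) : ℝ) * Gsum ee (i + 1))
          * ((((m - i + 1) : ℕ) : ℝ) * Gsum ee (m - i + 1)) := by
    refine Finset.sum_congr rfl fun i hi => ?_
    have hi' : i ≤ m := Nat.lt_succ_iff.1 (Finset.mem_range.1 hi)
    rw [show 1 + i = i + 1 by omega, show m + 2 - (i + 1) = m - i + 1 by omega]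
  rw [hsum]
  push_cast at h ⊢
  linarith [h]

lemma Gsum_ee_pos : ∀ p : ℕ, 1 ≤ p → 0 < Gsum ee p := by
  intro p
  induction p using Nat.strong_induction_on with
  | _ p ih =>
    intro hp
    rcases eq_or_lt_of_le hp with h1 | h2
    · -- p = 1
      have hPF : PF 1 = {Finsupp.single 1 1} := by
        apply Finset.eq_singleton_iff_unique_mem.2
        refine ⟨single_mem_PF le_rfl, fun α hα => ?_⟩
        have hn1 : pnorm α ≤ 1 := pnorm_le hα
        have hn2 : 0 < pnorm α := pnorm_pos le_rfl hα
        exact eq_single_of_pnorm_one hα (by omega)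
      rw [← h1, Gsum, hPF, Finset.sum_singleton, Gterm_single]
      norm_num [ee]
    · -- p ≥ 2
      have hk := kishore (show 2 ≤ p by omega)
      have hpos : 0 < ∑ a ∈ Finset.Ico 1 p,
          ((a : ℝ) * Gsum ee a) * (((p - a : ℕ) : ℝ) * Gsum ee (p - a)) := by
        apply Finset.sum_pos
        · intro a ha
          obtain ⟨ha1, hap⟩ := Finset.mem_Ico.1 ha
          have hga : 0 < Gsum ee a := ih a hap ha1
          have hgb : 0 < Gsum ee (p - a) := ih (p - a) (by omega) (by omega)
          have hca : (0 : ℝ) < (a : ℝ) := by exact_mod_cast ha1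
          have hcb : (0 : ℝ) < ((p - a : ℕ) : ℝ) := by
            have : 0 < p - a := by omega
            exact_mod_cast this
          exact mul_pos (mul_pos hca hga) (mul_pos hcb hgb)
        · exact ⟨1, Finset.mem_Ico.2 ⟨le_rfl, by omega⟩⟩
      have hcp : (0 : ℝ) < (p : ℝ) := by exact_mod_cast (by omega : 0 < p)
      nlinarith [hk, hpos, mul_pos hcp hcp]

theorem statement_11 : ∀ p : ℕ, 1 ≤ p → 0 < Acoef p := by
  intro p hp
  rw [Acoef_eq hp]
  exact Gsum_ee_pos p hp

end Stmt11
end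
end

section
/- Let (v_n)_{n≥1} be a sequence of complex polynomials such that every complex root of every v_n is a nonpositive real number, and suppose that v_n converges, uniformly on every compact subset of ℂ, to a function v : ℂ → ℂ that is not identically zero (v is then automatically entire). Then every z ∈ ℂ with v(z) = 0 is a nonpositive real number. -/
open Filter

namespace Stmt12

/-- If `(v_n)` is a sequence of complex polynomials all of whose roots are nonpositive reals,
converging uniformly on every compact subset of `ℂ` to a function `v` that is not identically
zero, then every zero of `v` is a nonpositive real number. -/
theorem statement_12 (v : ℕ → Polynomial ℂ) (f : ℂ → ℂ)
    (hroots : ∀ (n : ℕ) (z : ℂ), (v n).IsRoot z → ∃ r : ℝ, r ≤ 0 ∧ z = (r : ℂ))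
    (hconv : ∀ K : Set ℂ, IsCompact K →
      TendstoUniformlyOn (fun n z => (v n).eval z) f atTop K)
    (hne : ∃ z : ℂ, f z ≠ 0) :
    ∀ z : ℂ, f z = 0 → ∃ r : ℝ, r ≤ 0 ∧ z = (r : ℂ) := by
  intro z₀ hz₀
  by_contra hbad
  push_neg at hbad
  -- The set of nonpositive reals, as a subset of ℂ
  set S : Set ℂ := {z : ℂ | z.im = 0 ∧ z.re ≤ 0} with hS
  have hSclosed : IsClosed S := by
    apply IsClosed.inter
    · exact isClosed_eq Complex.continuous_im continuous_const
    · exact isClosed_le Complex.continuous_re continuous_const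
  have hz₀S : z₀ ∉ S := by
    intro ⟨him, hre⟩
    exact hbad z₀.re (by exact_mod_cast hre) (Complex.ext (by simp) (by simp [him]))
  -- f is the locally uniform limit of entire functions, hence entire
  have hlocal : TendstoLocallyUniformly (fun n z => (v n).eval z) f atTop := by
    rw [tendstoLocallyUniformly_iff_forall_isCompact]
    exact fun K hK => hconv K hK
  have hdiff : Differentiable ℂ f := by
    have := (hlocal.tendstoLocallyUniformlyOn (s := Set.univ)).differentiableOn
      (Eventually.of_forall fun n =>
        (Polynomial.differentiable (v n)).differentiableOn) isOpen_univ
    exact fun z => (this z (Set.mem_univ z)).differentiableAt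
      (isOpen_univ.mem_nhds (Set.mem_univ z))
  have hana : AnalyticOnNhd ℂ f Set.univ := fun z _ => hdiff.analyticAt z
  -- zeros of f are isolated
  have hiso : ∀ᶠ w in nhdsWithin z₀ {z₀}ᶜ, f w ≠ 0 := by
    rcases (hana z₀ (Set.mem_univ z₀)).eventually_eq_zero_or_eventually_ne_zero with h | h
    · exfalso
      obtain ⟨w, hw⟩ := hne
      exact hw (hana.eqOn_zero_of_preconnected_of_eventuallyEq_zero
        isPreconnected_univ (Set.mem_univ z₀) h (Set.mem_univ w))
    · exact h
  obtain ⟨ε, hε, hεne⟩ : ∃ ε > 0, ∀ w, dist w z₀ < ε → w ≠ z₀ → f w ≠ 0 := by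
    rw [eventually_nhdsWithin_iff, Metric.eventually_nhds_iff] at hiso
    obtain ⟨ε, hε, h⟩ := hiso
    exact ⟨ε, hε, fun w hw hne' => h hw hne'⟩
  have hdS : 0 < Metric.infDist z₀ S :=
    (hSclosed.notMem_iff_infDist_pos ⟨0, by simp [hS]⟩).mp hz₀S
  set r : ℝ := min (ε / 2) (Metric.infDist z₀ S / 2) with hr
  have hrpos : 0 < r := lt_min (by linarith) (by linarith)
  -- the closed ball avoids S
  have hball : ∀ w ∈ Metric.closedBall z₀ r, w ∉ S := by
    intro w hw hwS
    have h1 : Metric.infDist z₀ S ≤ dist z₀ w := Metric.infDist_le_dist_of_mem hwS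
    have h2 : dist z₀ w ≤ r := by rwa [dist_comm, ← Metric.mem_closedBall]
    have : r < Metric.infDist z₀ S := lt_of_le_of_lt (min_le_right _ _) (by linarith)
    linarith
  -- v n has no zeros in the closed ball
  have hvne : ∀ n, ∀ w ∈ Metric.closedBall z₀ r, (v n).eval w ≠ 0 := by
    intro n w hw h0
    obtain ⟨s, hs, hws⟩ := hroots n w h0
    exact hball w hw (by rw [hws]; exact ⟨Complex.ofReal_im s, by simpa using hs⟩)
  -- f has no zeros on the sphere
  have hfsphere : ∀ w ∈ Metric.sphere z₀ r, f w ≠ 0 := by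
    intro w hw
    have hwz : w ≠ z₀ := by
      intro h; rw [h, Metric.mem_sphere, dist_self] at hw; linarith
    apply hεne w _ hwz
    rw [Metric.mem_sphere] at hw
    rw [hw]
    exact lt_of_le_of_lt (min_le_left _ _) (by linarith)
  -- minimum of ‖f‖ on the sphere
  have hsphComp : IsCompact (Metric.sphere z₀ r) := isCompact_sphere z₀ r
  have hsphNe : (Metric.sphere z₀ r).Nonempty := NormedSpace.sphere_nonempty.mpr hrpos.le
  obtain ⟨w₀, hw₀mem, hw₀min⟩ := hsphComp.exists_isMinOn hsphNe
    (hdiff.continuous.norm.continuousOn)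
  set m : ℝ := ‖f w₀‖ with hm
  have hmpos : 0 < m := norm_pos_iff.mpr (hfsphere w₀ hw₀mem)
  -- choose n with uniform closeness m/2 on the closed ball
  have hKcomp : IsCompact (Metric.closedBall z₀ r) := isCompact_closedBall z₀ r
  have := (hconv _ hKcomp) (Metric.ball (0 : ℂ × ℂ) 1)
  obtain ⟨n, hn⟩ := ((Metric.tendstoUniformlyOn_iff.mp (hconv _ hKcomp)) (m / 2)
    (by linarith)).exists
  -- on the sphere, ‖v n‖ ≥ m/2
  have hlb : ∀ w ∈ Metric.sphere z₀ r, m / 2 ≤ ‖(v n).eval w‖ := by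
    intro w hw
    have h1 : dist (f w) ((v n).eval w) < m / 2 :=
      hn w (Metric.sphere_subset_closedBall hw)
    have h2 : m ≤ ‖f w‖ := hw₀min hw
    have := norm_sub_norm_le (f w) ((v n).eval w)
    rw [← dist_eq_norm] at this
    linarith
  -- maximum modulus principle applied to 1 / (v n)
  have hmax : ‖((v n).eval z₀)⁻¹‖ ≤ (m / 2)⁻¹ := by
    apply Complex.norm_le_of_forall_mem_frontier_norm_le
      (Metric.isBounded_ball (x := z₀) (r := r))
      (f := fun z => ((v n).eval z)⁻¹)
    · constructor
      · apply DifferentiableOn.inv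
        · exact (Polynomial.differentiable (v n)).differentiableOn
        · exact fun w hw => hvne n w (Metric.ball_subset_closedBall hw)
      · rw [closure_ball z₀ hrpos.ne']
        apply ContinuousOn.inv₀
        · exact (Polynomial.continuous (v n)).continuousOn
        · exact hvne n
    · intro w hw
      rw [frontier_ball z₀ hrpos.ne'] at hw
      rw [norm_inv]
      exact inv_anti₀ (by linarith) (hlb w hw)
    · rw [closure_ball z₀ hrpos.ne']
      exact Metric.mem_closedBall_self hrpos.le
  have hlb₀ : m / 2 ≤ ‖(v n).eval z₀‖ := by
    rw [norm_inv] at hmax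
    have hne0 : (v n).eval z₀ ≠ 0 := hvne n z₀ (Metric.mem_closedBall_self hrpos.le)
    have : 0 < ‖(v n).eval z₀‖ := norm_pos_iff.mpr hne0
    rw [inv_le_inv₀ (by positivity) (by linarith)] at hmax
    linarith
  -- but v n z₀ is close to f z₀ = 0
  have hclose : dist (f z₀) ((v n).eval z₀) < m / 2 :=
    hn z₀ (Metric.mem_closedBall_self hrpos.le)
  rw [hz₀, dist_eq_norm, zero_sub, norm_neg] at hclose
  linarith

end Stmt12
end
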